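/- arXiv:1805.02455 — 14 statements merged into one kernel-verified Lean document; each statement's English description precedes it below -/
import Mathlib

section
/- Let R be a quadratic form on ℝ^d and L : ℝ^d → ℝ^k a linear map. Then there exists D > 0 such that the quadratic form x ↦ R(x) + D·|Lx|² is positive definite if and only if the restriction of R to ker L is positive definite. -/
theorem quad_cont {d : ℕ} (R : QuadraticForm ℝ (EuclideanSpace ℝ (Fin d))) :
    Continuous fun x => R x := by
  set B := QuadraticMap.associated (R := ℝ) R
  have hB : ∀ x, R x = B x x := fun x => (QuadraticMap.associated_eq_self_apply ℝ R x).symm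
  have : Continuous fun x => B x x := by
    let B2 : EuclideanSpace ℝ (Fin d) →ₗ[ℝ] (EuclideanSpace ℝ (Fin d) →L[ℝ] ℝ) :=
      (LinearMap.toContinuousLinearMap : _ ≃ₗ[ℝ] _).toLinearMap.comp B
    have hc : Continuous B2 := B2.continuous_of_finiteDimensional
    have : Continuous fun x => (B2 x) x :=
      isBoundedBilinearMap_apply.continuous.comp (hc.prodMk continuous_id)
    simpa [B2] using this
  simpa [← hB] using this

theorem stmt2 {d k : ℕ} (R : QuadraticForm ℝ (EuclideanSpace ℝ (Fin d)))
    (L : EuclideanSpace ℝ (Fin d) →ₗ[ℝ] EuclideanSpace ℝ (Fin k)) :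
    (∃ D : ℝ, 0 < D ∧ ∀ x, x ≠ 0 → 0 < R x + D * ‖L x‖ ^ 2) ↔
      (∀ x ∈ LinearMap.ker L, x ≠ 0 → 0 < R x) := by
  have hRc : Continuous fun x => R x := quad_cont R
  have hLc : Continuous L := L.continuous_of_finiteDimensional
  constructor
  · rintro ⟨D, hD, h⟩ x hx hx0
    rw [LinearMap.mem_ker] at hx
    simpa [hx] using h x hx0
  · intro hpos
    by_contra hcon
    push_neg at hcon
    have key : ∀ n : ℕ, ∃ u : EuclideanSpace ℝ (Fin d), ‖u‖ = 1 ∧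
        R u + (n + 1 : ℝ) * ‖L u‖ ^ 2 ≤ 0 := by
      intro n
      obtain ⟨x, hx0, hxle⟩ := hcon (n + 1 : ℝ) (by positivity)
      have hxn : (0:ℝ) < ‖x‖ := norm_pos_iff.mpr hx0
      refine ⟨(‖x‖⁻¹ : ℝ) • x, ?_, ?_⟩
      · simp [norm_smul, abs_of_pos (inv_pos.mpr hxn), inv_mul_cancel₀ hxn.ne']
      · have h1 : R ((‖x‖⁻¹ : ℝ) • x) = (‖x‖⁻¹) ^ 2 * R x := by
          simpa [pow_two] using QuadraticMap.map_smul R (‖x‖⁻¹) x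
        have h2 : ‖L ((‖x‖⁻¹ : ℝ) • x)‖ ^ 2 = (‖x‖⁻¹) ^ 2 * ‖L x‖ ^ 2 := by
          rw [map_smul, norm_smul, Real.norm_eq_abs, abs_of_pos (inv_pos.mpr hxn)]
          ring
        rw [h1, h2]
        have : (‖x‖⁻¹) ^ 2 * (R x + (n + 1 : ℝ) * ‖L x‖ ^ 2) ≤ 0 :=
          mul_nonpos_of_nonneg_of_nonpos (by positivity) hxle
        nlinarith [sq_nonneg (‖x‖⁻¹)]
    choose u hu1 hu2 using key
    have hcomp : IsCompact (Metric.sphere (0 : EuclideanSpace ℝ (Fin d)) 1) :=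
      isCompact_sphere 0 1
    have husph : ∀ n, u n ∈ Metric.sphere (0 : EuclideanSpace ℝ (Fin d)) 1 := by
      intro n; simp [hu1 n]
    obtain ⟨y, hy, φ, hφ, hconv⟩ := hcomp.tendsto_subseq husph
    have hy1 : ‖y‖ = 1 := by simpa using hy
    have hy0 : y ≠ 0 := by intro h; rw [h] at hy1; simp at hy1
    obtain ⟨C, hC⟩ := hcomp.exists_bound_of_continuousOn hRc.continuousOn
    have hRle : ∀ n, R (u n) ≤ 0 := by
      intro n
      have := hu2 n
      nlinarith [sq_nonneg ‖L (u n)‖, (by positivity : (0:ℝ) < (n:ℝ) + 1)]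
    have hsq : ∀ n, ‖L (u n)‖ ^ 2 ≤ C / ((n:ℝ) + 1) := by
      intro n
      have h1 := hu2 n
      have h2 := abs_le.mp (hC _ (husph n))
      have h3 : (0:ℝ) < (n:ℝ) + 1 := by positivity
      rw [le_div_iff₀ h3]
      nlinarith
    -- L y = 0
    have htendL : Filter.Tendsto (fun n => ‖L (u (φ n))‖ ^ 2) Filter.atTop
        (nhds (‖L y‖ ^ 2)) :=
      ((hLc.norm.pow 2).tendsto y).comp hconv
    have hgtop : Filter.Tendsto (fun n => ((φ n : ℝ) + 1)) Filter.atTop Filter.atTop :=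
      Filter.tendsto_atTop_add_const_right _ 1
        (tendsto_natCast_atTop_atTop.comp hφ.tendsto_atTop)
    have hzero : Filter.Tendsto (fun n => C / ((φ n : ℝ) + 1)) Filter.atTop (nhds 0) :=
      Filter.Tendsto.div_atTop tendsto_const_nhds hgtop
    have hle0 : ‖L y‖ ^ 2 ≤ 0 :=
      le_of_tendsto_of_tendsto' htendL hzero (fun n => hsq (φ n))
    have hLy : L y = 0 := by
      have : ‖L y‖ = 0 := by nlinarith [norm_nonneg (L y)]
      exact norm_eq_zero.mp this
    -- R y ≤ 0
    have htendR : Filter.Tendsto (fun n => R (u (φ n))) Filter.atTop (nhds (R y)) :=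
      (hRc.tendsto y).comp hconv
    have hRy : R y ≤ 0 := le_of_tendsto' htendR (fun n => hRle (φ n))
    have := hpos y (LinearMap.mem_ker.mpr hLy) hy0
    linarith
end

section
/- Let S : X → Y and T : X → Z be linear maps between finite-dimensional real vector spaces with ker S ⊆ ker T, and let F ⊆ Y be compact. Then T(S⁻¹(F)) is a compact subset of Z. -/
theorem stmt4 {X Y Z : Type*} [NormedAddCommGroup X] [NormedSpace ℝ X] [FiniteDimensional ℝ X]
    [NormedAddCommGroup Y] [NormedSpace ℝ Y] [FiniteDimensional ℝ Y]
    [NormedAddCommGroup Z] [NormedSpace ℝ Z] [FiniteDimensional ℝ Z]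
    (S : X →ₗ[ℝ] Y) (T : X →ₗ[ℝ] Z) (h : LinearMap.ker S ≤ LinearMap.ker T)
    (F : Set Y) (hF : IsCompact F) : IsCompact (T '' (S ⁻¹' F)) := by
  -- S factors as Sbar ∘ mkQ with Sbar injective
  set K := LinearMap.ker S with hK
  let Sbar : (X ⧸ K) →ₗ[ℝ] Y := K.liftQ S le_rfl
  have hSbar_inj : LinearMap.ker Sbar = ⊥ := by
    rw [Submodule.ker_liftQ_eq_bot]; exact le_rfl
  obtain ⟨B, hB⟩ := LinearMap.exists_leftInverse_of_injective Sbar hSbar_inj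
  let Tbar : (X ⧸ K) →ₗ[ℝ] Z := K.liftQ T h
  let A : Y →ₗ[ℝ] Z := Tbar.comp B
  have hAS : ∀ x : X, A (S x) = T x := by
    intro x
    have h1 : S x = Sbar (K.mkQ x) := rfl
    have h2 : B (Sbar (K.mkQ x)) = K.mkQ x := by
      have := congrArg (fun f => f (K.mkQ x)) hB
      simpa using this
    simp only [A, LinearMap.comp_apply, h1, h2]
    rfl
  have himg : T '' (S ⁻¹' F) = A '' (F ∩ Set.range S) := by
    ext z
    constructor
    · rintro ⟨x, hx, rfl⟩
      exact ⟨S x, ⟨hx, x, rfl⟩, hAS x⟩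
    · rintro ⟨y, ⟨hyF, x, rfl⟩, rfl⟩
      exact ⟨x, hyF, (hAS x).symm⟩
  rw [himg]
  have hclosed : IsClosed (Set.range S) := by
    have : (LinearMap.range S : Set Y) = Set.range S := by
      ext y; simp [LinearMap.mem_range]
    rw [← this]
    exact (LinearMap.range S).closed_of_finiteDimensional
  exact ((hF.inter_right hclosed).image A.continuous_of_finiteDimensional)
end

section
/- Let I be a finite index set, and for each i ∈ I let d_i > 0, L_i : H → H_i a surjective linear map between Euclidean spaces, and K_i : H_i → H_i a symmetric positive definite map. Assume K := ∑_i d_i L_i* K_i L_i is positive definite. Then for any w ∈ H and any y_i ∈ H_i satisfying w = ∑_i d_i L_i* y_i, one has ⟨K⁻¹w, w⟩ ≤ ∑_i d_i ⟨K_i⁻¹ y_i, y_i⟩, with equality when y_i = K_i L_i K⁻¹ w. -/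
open scoped BigOperators

theorem stmt5 {ι : Type*} [Fintype ι] {H : Type*} [NormedAddCommGroup H]
    [InnerProductSpace ℝ H] [FiniteDimensional ℝ H]
    {Hi : ι → Type*} [∀ i, NormedAddCommGroup (Hi i)]
    [∀ i, InnerProductSpace ℝ (Hi i)] [∀ i, FiniteDimensional ℝ (Hi i)]
    (d : ι → ℝ) (hd : ∀ i, 0 < d i)
    (L : ∀ i, H →ₗ[ℝ] Hi i) (hL : ∀ i, Function.Surjective (L i))
    (K : ∀ i, Hi i →ₗ[ℝ] Hi i)
    (hKsymm : ∀ i, ∀ x y : Hi i, (inner ℝ ((K i) x) y : ℝ) = inner ℝ x ((K i) y))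
    (hKpos : ∀ i, ∀ x : Hi i, x ≠ 0 → 0 < (inner ℝ ((K i) x) x : ℝ))
    (Ksum : H →ₗ[ℝ] H)
    (hKsum : Ksum = ∑ i, d i • (LinearMap.adjoint (L i) ∘ₗ K i ∘ₗ L i))
    (hKsumpos : ∀ x : H, x ≠ 0 → 0 < (inner ℝ (Ksum x) x : ℝ))
    (w w' : H) (hw : Ksum w' = w)
    (y : ∀ i, Hi i) (z : ∀ i, Hi i) (hz : ∀ i, (K i) (z i) = y i)
    (hrep : w = ∑ i, d i • (LinearMap.adjoint (L i)) (y i)) :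
    (inner ℝ w' w : ℝ) ≤ ∑ i, d i * (inner ℝ (z i) (y i) : ℝ) ∧
      ((∀ i, y i = (K i) ((L i) w')) →
        (inner ℝ w' w : ℝ) = ∑ i, d i * (inner ℝ (z i) (y i) : ℝ)) := by
  have hKnn : ∀ i (x : Hi i), 0 ≤ (inner ℝ ((K i) x) x : ℝ) := by
    intro i x
    rcases eq_or_ne x 0 with h | h
    · simp [h]
    · exact (hKpos i x h).le
  set u : ∀ i, Hi i := fun i => (L i) w' with hu
  have hA : (inner ℝ w' w : ℝ) = ∑ i, d i * (inner ℝ (u i) (y i) : ℝ) := by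
    rw [hrep, inner_sum]
    refine Finset.sum_congr rfl fun i _ => ?_
    rw [real_inner_smul_right, LinearMap.adjoint_inner_right]
  have hB : (inner ℝ w' w : ℝ) = ∑ i, d i * (inner ℝ ((K i) (u i)) (u i) : ℝ) := by
    rw [← hw, real_inner_comm, hKsum, LinearMap.sum_apply, sum_inner]
    refine Finset.sum_congr rfl fun i _ => ?_
    rw [LinearMap.smul_apply, real_inner_smul_left]
    simp only [LinearMap.comp_apply]
    rw [LinearMap.adjoint_inner_left]
  have hterm : ∀ i, (inner ℝ ((K i) (z i - u i)) (z i - u i) : ℝ)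
      = inner ℝ (z i) (y i) - 2 * inner ℝ (u i) (y i) + inner ℝ ((K i) (u i)) (u i) := by
    intro i
    rw [map_sub, inner_sub_left, inner_sub_right, inner_sub_right, hz i]
    have h1 : (inner ℝ (y i) (z i) : ℝ) = inner ℝ (z i) (y i) := real_inner_comm _ _
    have h2 : (inner ℝ (y i) (u i) : ℝ) = inner ℝ (u i) (y i) := real_inner_comm _ _
    have h3 : (inner ℝ ((K i) (u i)) (z i) : ℝ) = inner ℝ (u i) (y i) := by
      rw [hKsymm i, hz i, real_inner_comm]
    rw [h1, h2, h3]; ring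
  have key : ∑ i, d i * (inner ℝ ((K i) (z i - u i)) (z i - u i) : ℝ)
      = ∑ i, d i * (inner ℝ (z i) (y i) : ℝ) - (inner ℝ w' w : ℝ) := by
    calc ∑ i, d i * (inner ℝ ((K i) (z i - u i)) (z i - u i) : ℝ)
        = ∑ i, (d i * inner ℝ (z i) (y i) - 2 * (d i * inner ℝ (u i) (y i))
            + d i * inner ℝ ((K i) (u i)) (u i)) := by
          refine Finset.sum_congr rfl fun i _ => ?_
          rw [hterm i]; ring
      _ = ∑ i, d i * (inner ℝ (z i) (y i) : ℝ)
            - 2 * ∑ i, d i * (inner ℝ (u i) (y i) : ℝ)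
            + ∑ i, d i * (inner ℝ ((K i) (u i)) (u i) : ℝ) := by
          rw [Finset.sum_add_distrib, Finset.sum_sub_distrib, Finset.mul_sum]
      _ = ∑ i, d i * (inner ℝ (z i) (y i) : ℝ) - (inner ℝ w' w : ℝ) := by
          rw [← hA, ← hB]; ring
  have hnn : 0 ≤ ∑ i, d i * (inner ℝ ((K i) (z i - u i)) (z i - u i) : ℝ) :=
    Finset.sum_nonneg fun i _ => mul_nonneg (hd i).le (hKnn i _)
  constructor
  · linarith [key, hnn]
  · intro heq
    have hzero : ∑ i, d i * (inner ℝ ((K i) (z i - u i)) (z i - u i) : ℝ) = 0 := by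
      refine Finset.sum_eq_zero fun i _ => ?_
      have : (K i) (z i - u i) = 0 := by
        rw [map_sub, hz i, heq i]; simp [hu]
      rw [this, inner_zero_left, mul_zero]
    linarith [key, hzero]
end

section
/- Let c_1,…,c_{m⁺} > 0 > c_{m⁺+1},…,c_m, and for each k let B_k : H → H_k be surjective linear maps between Euclidean spaces and A_k : H_k → H_k symmetric positive definite. Assume (B_1,…,B_{m⁺}) : H → H_1 × ⋯ × H_{m⁺} is surjective and that A := ∑_{k=1}^m c_k B_k* A_k B_k is positive definite. Then for any y_k ∈ H_k with y = ∑_{k=1}^m c_k B_k* y_k one has ⟨A⁻¹ y, y⟩ ≥ ∑_{k=1}^m c_k ⟨A_k⁻¹ y_k, y_k⟩, with equality when y_k = A_k B_k A⁻¹ y. -/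
open scoped BigOperators

theorem stmt6 {m mp : ℕ} (hmp : mp ≤ m)
    {H : Type*} [NormedAddCommGroup H] [InnerProductSpace ℝ H] [FiniteDimensional ℝ H]
    {Hk : Fin m → Type*} [∀ k, NormedAddCommGroup (Hk k)]
    [∀ k, InnerProductSpace ℝ (Hk k)] [∀ k, FiniteDimensional ℝ (Hk k)]
    (c : Fin m → ℝ) (hcpos : ∀ k : Fin m, (k : ℕ) < mp → 0 < c k)
    (hcneg : ∀ k : Fin m, mp ≤ (k : ℕ) → c k < 0)
    (B : ∀ k, H →ₗ[ℝ] Hk k) (hB : ∀ k, Function.Surjective (B k))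
    (A : ∀ k, Hk k →ₗ[ℝ] Hk k)
    (hAsymm : ∀ k, ∀ x y : Hk k, (inner ℝ ((A k) x) y : ℝ) = inner ℝ x ((A k) y))
    (hApos : ∀ k, ∀ x : Hk k, x ≠ 0 → 0 < (inner ℝ ((A k) x) x : ℝ))
    (hBplus : Function.Surjective
      (fun (x : H) (i : {k : Fin m // (k : ℕ) < mp}) => (B i.1) x))
    (Asum : H →ₗ[ℝ] H)
    (hAsum : Asum = ∑ k, c k • (LinearMap.adjoint (B k) ∘ₗ A k ∘ₗ B k))
    (hAsumpos : ∀ x : H, x ≠ 0 → 0 < (inner ℝ (Asum x) x : ℝ))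
    (y y' : H) (hy : Asum y' = y)
    (yk : ∀ k, Hk k) (zk : ∀ k, Hk k) (hz : ∀ k, (A k) (zk k) = yk k)
    (hrep : y = ∑ k, c k • (LinearMap.adjoint (B k)) (yk k)) :
    (∑ k, c k * (inner ℝ (zk k) (yk k) : ℝ)) ≤ (inner ℝ y' y : ℝ) ∧
      ((∀ k, yk k = (A k) ((B k) y')) →
        (inner ℝ y' y : ℝ) = ∑ k, c k * (inner ℝ (zk k) (yk k) : ℝ)) := by
  classical
  set e : ∀ k, Hk k := fun k => zk k - B k y' with he
  -- nonnegativity of the A_k forms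
  have hAnn : ∀ k (v : Hk k), 0 ≤ (inner ℝ (A k v) v : ℝ) := by
    intro k v
    rcases eq_or_ne v 0 with h | h
    · simp [h]
    · exact (hApos k v h).le
  -- Cauchy–Schwarz-type bound
  have hCS : ∀ k (u v : Hk k),
      (inner ℝ (A k u) v : ℝ) ≤ ((inner ℝ (A k u) u : ℝ) + (inner ℝ (A k v) v : ℝ)) / 2 := by
    intro k u v
    have h0 := hAnn k (u - v)
    have hsymm : (inner ℝ (A k v) u : ℝ) = (inner ℝ (A k u) v : ℝ) := by
      rw [hAsymm k v u, real_inner_comm]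
    simp only [map_sub, inner_sub_left, inner_sub_right] at h0
    linarith
  -- expansion of ⟨x, Asum w⟩
  have hAsum_inner : ∀ x w : H,
      (inner ℝ x (Asum w) : ℝ) = ∑ k, c k * (inner ℝ (B k x) (A k (B k w)) : ℝ) := by
    intro x w
    rw [hAsum]
    simp only [LinearMap.sum_apply, LinearMap.smul_apply, LinearMap.comp_apply,
      inner_sum, real_inner_smul_right, LinearMap.adjoint_inner_right]
  -- representation of ⟨x, y⟩
  have hinner_rep : ∀ x : H, (inner ℝ x y : ℝ) = ∑ k, c k * (inner ℝ (B k x) (yk k) : ℝ) := by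
    intro x
    rw [hrep]
    simp only [inner_sum, real_inner_smul_right, LinearMap.adjoint_inner_right]
  -- key orthogonality relation
  have hAe : ∀ k, A k (e k) = yk k - A k (B k y') := by
    intro k
    rw [he]
    simp [map_sub, hz k]
  have hkey : ∀ x : H, ∑ k, c k * (inner ℝ (B k x) (A k (e k)) : ℝ) = 0 := by
    intro x
    have : ∑ k, c k * (inner ℝ (B k x) (A k (e k)) : ℝ)
        = ∑ k, (c k * (inner ℝ (B k x) (yk k) : ℝ)
            - c k * (inner ℝ (B k x) (A k (B k y')) : ℝ)) := by
      refine Finset.sum_congr rfl fun k _ => ?_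
      rw [hAe k, inner_sub_right]; ring
    rw [this, Finset.sum_sub_distrib, ← hinner_rep x, ← hAsum_inner x y', hy, sub_self]
  -- per-term expansion
  have hterm : ∀ k, c k * (inner ℝ (zk k) (yk k) : ℝ)
      = c k * (inner ℝ (A k (e k)) (e k) : ℝ)
        + 2 * (c k * (inner ℝ (B k y') (A k (e k)) : ℝ))
        + c k * (inner ℝ (B k y') (A k (B k y')) : ℝ) := by
    intro k
    have hzke : zk k = e k + B k y' := by simp [he]
    have hyke : yk k = A k (e k) + A k (B k y') := by
      rw [← hz k, hzke, map_add]
    rw [hzke, hyke]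
    simp only [inner_add_left, inner_add_right]
    have h1 : (inner ℝ (e k) (A k (e k)) : ℝ) = (inner ℝ (A k (e k)) (e k) : ℝ) :=
      real_inner_comm _ _
    have h2 : (inner ℝ (e k) (A k (B k y')) : ℝ) = (inner ℝ (B k y') (A k (e k)) : ℝ) := by
      rw [← hAsymm, real_inner_comm]
    rw [h1, h2]; ring
  -- the main identity
  have hQid : (∑ k, c k * (inner ℝ (zk k) (yk k) : ℝ))
      = (∑ k, c k * (inner ℝ (A k (e k)) (e k) : ℝ)) + (inner ℝ y' y : ℝ) := by
    have hyy : (inner ℝ y' y : ℝ) = inner ℝ y' (Asum y') := by rw [hy]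
    calc (∑ k, c k * (inner ℝ (zk k) (yk k) : ℝ))
        = ∑ k, (c k * (inner ℝ (A k (e k)) (e k) : ℝ)
            + 2 * (c k * (inner ℝ (B k y') (A k (e k)) : ℝ))
            + c k * (inner ℝ (B k y') (A k (B k y')) : ℝ)) :=
          Finset.sum_congr rfl fun k _ => hterm k
      _ = (∑ k, c k * (inner ℝ (A k (e k)) (e k) : ℝ))
            + 2 * (∑ k, c k * (inner ℝ (B k y') (A k (e k)) : ℝ))
            + ∑ k, c k * (inner ℝ (B k y') (A k (B k y')) : ℝ) := by
          rw [Finset.sum_add_distrib, Finset.sum_add_distrib, Finset.mul_sum]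
      _ = (∑ k, c k * (inner ℝ (A k (e k)) (e k) : ℝ)) + (inner ℝ y' y : ℝ) := by
          rw [hkey y', ← hAsum_inner y' y', ← hyy]; ring
  -- Q ≤ 0
  have hQ : (∑ k, c k * (inner ℝ (A k (e k)) (e k) : ℝ)) ≤ 0 := by
    obtain ⟨x, hx⟩ := hBplus (fun i => e i.1)
    have hxk : ∀ k : Fin m, (hk : (k : ℕ) < mp) → B k x = e k := by
      intro k hk
      exact congrFun hx ⟨k, hk⟩
    set p : Fin m → Prop := fun k => (k : ℕ) < mp with hp
    set P := ∑ k ∈ Finset.univ.filter p, c k * (inner ℝ (A k (e k)) (e k) : ℝ) with hP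
    set N := ∑ k ∈ Finset.univ.filter (fun k => ¬ p k),
        (-c k) * (inner ℝ (A k (e k)) (e k) : ℝ) with hN
    have hsplit : (∑ k, c k * (inner ℝ (A k (e k)) (e k) : ℝ)) = P - N := by
      have hNneg : N = -∑ k ∈ Finset.univ.filter (fun k => ¬ p k),
          c k * (inner ℝ (A k (e k)) (e k) : ℝ) := by
        simp only [hN, neg_mul, Finset.sum_neg_distrib]
      rw [← Finset.sum_filter_add_sum_filter_not Finset.univ p
        (fun k => c k * (inner ℝ (A k (e k)) (e k) : ℝ)), hNneg, hP, sub_neg_eq_add]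
    -- P = ∑ over the negative block of (-c k) ⟪B k x, A k e k⟫
    have hkeyx := hkey x
    rw [← Finset.sum_filter_add_sum_filter_not Finset.univ p
      (fun k => c k * (inner ℝ (B k x) (A k (e k)) : ℝ))] at hkeyx
    have hPeq : P = ∑ k ∈ Finset.univ.filter (fun k => ¬ p k),
        (-c k) * (inner ℝ (B k x) (A k (e k)) : ℝ) := by
      have h1 : (∑ k ∈ Finset.univ.filter p, c k * (inner ℝ (B k x) (A k (e k)) : ℝ)) = P := by
        rw [hP]
        refine Finset.sum_congr rfl fun k hk => ?_
        have hk' : p k := (Finset.mem_filter.mp hk).2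
        rw [hxk k hk', real_inner_comm]
      have h2 : ∑ k ∈ Finset.univ.filter (fun k => ¬ p k),
          (-c k) * (inner ℝ (B k x) (A k (e k)) : ℝ)
          = -∑ k ∈ Finset.univ.filter (fun k => ¬ p k),
            c k * (inner ℝ (B k x) (A k (e k)) : ℝ) := by
        rw [← Finset.sum_neg_distrib]
        exact Finset.sum_congr rfl fun k _ => by ring
      rw [h2]
      linarith [hkeyx, h1]
    -- S := negative-block energy of x
    set S := ∑ k ∈ Finset.univ.filter (fun k => ¬ p k),
        (-c k) * (inner ℝ (A k (B k x)) (B k x) : ℝ) with hS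
    have hNnn : 0 ≤ N := by
      refine Finset.sum_nonneg fun k hk => ?_
      have hk' : mp ≤ (k : ℕ) := not_lt.mp (Finset.mem_filter.mp hk).2
      exact mul_nonneg (by linarith [hcneg k hk']) (hAnn k (e k))
    have hPnn : 0 ≤ P := by
      refine Finset.sum_nonneg fun k hk => ?_
      have hk' : p k := (Finset.mem_filter.mp hk).2
      exact mul_nonneg (hcpos k hk').le (hAnn k (e k))
    -- P ≤ (N + S) / 2
    have hPb : P ≤ (N + S) / 2 := by
      rw [hPeq]
      have hstep : ∀ k ∈ Finset.univ.filter (fun k => ¬ p k),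
          (-c k) * (inner ℝ (B k x) (A k (e k)) : ℝ)
          ≤ ((-c k) * (inner ℝ (A k (e k)) (e k) : ℝ)
            + (-c k) * (inner ℝ (A k (B k x)) (B k x) : ℝ)) / 2 := by
        intro k hk
        have hk' : mp ≤ (k : ℕ) := not_lt.mp (Finset.mem_filter.mp hk).2
        have hc : 0 ≤ -c k := by linarith [hcneg k hk']
        have hcs := hCS k (e k) (B k x)
        have hflip : (inner ℝ (B k x) (A k (e k)) : ℝ) = inner ℝ (A k (e k)) (B k x) :=
          real_inner_comm _ _
        rw [hflip]
        nlinarith [hcs, hc]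
      calc (∑ k ∈ Finset.univ.filter (fun k => ¬ p k),
            (-c k) * (inner ℝ (B k x) (A k (e k)) : ℝ))
          ≤ ∑ k ∈ Finset.univ.filter (fun k => ¬ p k),
            ((-c k) * (inner ℝ (A k (e k)) (e k) : ℝ)
              + (-c k) * (inner ℝ (A k (B k x)) (B k x) : ℝ)) / 2 :=
            Finset.sum_le_sum hstep
        _ = (N + S) / 2 := by
            rw [hN, hS, ← Finset.sum_add_distrib, ← Finset.sum_div]
    -- S ≤ P via positivity of Asum
    have hSP : S ≤ P := by
      have hposx : 0 ≤ (inner ℝ (Asum x) x : ℝ) := by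
        rcases eq_or_ne x 0 with h | h
        · simp [h]
        · exact (hAsumpos x h).le
      have hx2 : (inner ℝ (Asum x) x : ℝ) = inner ℝ x (Asum x) := real_inner_comm _ _
      rw [hx2, hAsum_inner x x] at hposx
      rw [← Finset.sum_filter_add_sum_filter_not Finset.univ p
        (fun k => c k * (inner ℝ (B k x) (A k (B k x)) : ℝ))] at hposx
      have h1 : (∑ k ∈ Finset.univ.filter p, c k * (inner ℝ (B k x) (A k (B k x)) : ℝ)) = P := by
        rw [hP]
        refine Finset.sum_congr rfl fun k hk => ?_
        have hk' : p k := (Finset.mem_filter.mp hk).2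
        rw [hxk k hk', real_inner_comm]
      have h2 : ∑ k ∈ Finset.univ.filter (fun k => ¬ p k),
          c k * (inner ℝ (B k x) (A k (B k x)) : ℝ) = -S := by
        rw [hS, ← Finset.sum_neg_distrib]
        refine Finset.sum_congr rfl fun k _ => ?_
        rw [real_inner_comm]; ring
      rw [h1, h2] at hposx
      linarith
    rw [hsplit]
    linarith
  constructor
  · linarith [hQid, hQ]
  · intro h
    -- injectivity of A k
    have hAinj : ∀ k (v w : Hk k), A k v = A k w → v = w := by
      intro k v w hvw
      by_contra hne
      have h1 : v - w ≠ 0 := sub_ne_zero.mpr hne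
      have h2 := hApos k (v - w) h1
      rw [map_sub, hvw, sub_self] at h2
      simp at h2
    have hek : ∀ k, e k = 0 := by
      intro k
      have hk : A k (zk k) = A k (B k y') := by rw [hz k, h k]
      have := hAinj k _ _ hk
      rw [he]
      simp [this]
    have hQ0 : (∑ k, c k * (inner ℝ (A k (e k)) (e k) : ℝ)) = 0 := by
      refine Finset.sum_eq_zero fun k _ => ?_
      rw [hek k]
      simp
    rw [hQid, hQ0, zero_add]
end

section
/- Let f : H → ℝ ∪ {+∞} be a convex lower semicontinuous function with nonempty domain such that the subdifferential ∂f(x) is empty at every boundary point x of dom f, and let g : H → ℝ be convex. If f(x) − g(x) → +∞ as |x| → ∞, then f − g attains its infimum at a point in the interior of dom f. -/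
open Set Metric

/-- A lower semicontinuous `EReal`-valued function attains its minimum on a
nonempty compact set. -/
lemma lsc_exists_min {H : Type*} [TopologicalSpace H] [T2Space H] {h : H → EReal}
    (hh : LowerSemicontinuous h) {K : Set H} (hK : IsCompact K) (hne : K.Nonempty) :
    ∃ x ∈ K, ∀ y ∈ K, h x ≤ h y := by
  set m := sInf (h '' K) with hm
  by_cases htop : m = ⊤
  · obtain ⟨x, hx⟩ := hne
    refine ⟨x, hx, fun y hy => ?_⟩
    have : m ≤ h y := sInf_le (mem_image_of_mem _ hy)
    rw [htop, top_le_iff] at this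
    simp [this]
  · have hmlt : m < ⊤ := lt_top_iff_ne_top.2 htop
    haveI : Nonempty {a : EReal // m < a} := ⟨⟨⊤, hmlt⟩⟩
    set Z : {a : EReal // m < a} → Set H := fun a => {x ∈ K | h x ≤ a.1} with hZ
    have hdir : Directed (· ⊇ ·) Z := by
      intro a b
      refine ⟨⟨min a.1 b.1, lt_min a.2 b.2⟩, ?_, ?_⟩
      · intro x hx; exact ⟨hx.1, hx.2.trans (min_le_left _ _)⟩
      · intro x hx; exact ⟨hx.1, hx.2.trans (min_le_right _ _)⟩
    have hZne : ∀ a, (Z a).Nonempty := by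
      rintro ⟨a, ha⟩
      rw [hm] at ha
      obtain ⟨v, ⟨x, hxK, rfl⟩, hva⟩ := sInf_lt_iff.1 ha
      exact ⟨x, hxK, hva.le⟩
    have hZcl : ∀ a, IsClosed (Z a) := by
      intro a
      have : Z a = K ∩ h ⁻¹' Iic a.1 := by ext x; exact Iff.rfl
      rw [this]
      exact hK.isClosed.inter (hh.isClosed_preimage _)
    have hZcp : ∀ a, IsCompact (Z a) := fun a =>
      hK.of_isClosed_subset (hZcl a) (fun x hx => hx.1)
    obtain ⟨x, hx⟩ := IsCompact.nonempty_iInter_of_directed_nonempty_isCompact_isClosed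
      Z hdir hZne hZcp hZcl
    have hxK : x ∈ K := (Set.mem_iInter.1 hx ⟨⊤, hmlt⟩).1
    refine ⟨x, hxK, fun y hy => ?_⟩
    have hxm : h x ≤ m := by
      refine le_of_forall_gt_imp_ge_of_dense fun a ha => ?_
      exact (Set.mem_iInter.1 hx ⟨a, ha⟩).2
    exact hxm.trans (sInf_le (mem_image_of_mem _ hy))

/-- A continuous convex real function on an inner product space has a subgradient
at every point. -/
lemma convex_exists_subgradient {H : Type*} [NormedAddCommGroup H] [InnerProductSpace ℝ H]
    [CompleteSpace H] {g : H → ℝ} (hg : ConvexOn ℝ Set.univ g) (hgc : Continuous g)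
    (x₁ : H) : ∃ xs : H, ∀ y : H, g x₁ + (inner ℝ xs (y - x₁) : ℝ) ≤ g y := by
  set S : Set (H × ℝ) := {p | g p.1 < p.2} with hS
  have hSconv : Convex ℝ S := by
    have := hg.convex_strict_epigraph
    simpa [hS] using this
  have hSopen : IsOpen S := by
    have : S = (fun p : H × ℝ => p.2 - g p.1) ⁻¹' Ioi 0 := by
      ext p; simp [hS, sub_pos]
    rw [this]
    exact (continuous_snd.sub (hgc.comp continuous_fst)).isOpen_preimage _ isOpen_Ioi
  have hxnot : (x₁, g x₁) ∉ S := by simp [hS]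
  obtain ⟨φ, hφ⟩ := geometric_hahn_banach_open_point hSconv hSopen hxnot
  set c : ℝ := φ (0, 1) with hc
  have hsplit : ∀ y : H, ∀ t : ℝ, φ (y, t) = φ (y, 0) + t * c := by
    intro y t
    have : (y, t) = (y, (0 : ℝ)) + t • ((0 : H), (1 : ℝ)) := by
      simp [Prod.ext_iff]
    rw [this, map_add, map_smul]
    simp [hc, smul_eq_mul, mul_comm]
  have hcneg : c < 0 := by
    have h1 : φ (x₁, g x₁ + 1) < φ (x₁, g x₁) := hφ _ (by simp [hS])
    rw [hsplit x₁ (g x₁ + 1), hsplit x₁ (g x₁)] at h1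
    nlinarith
  have hkey : ∀ y : H, φ (y, 0) + g y * c ≤ φ (x₁, 0) + g x₁ * c := by
    intro y
    have h2 : ∀ ε : ℝ, 0 < ε → φ (y, 0) + g y * c < φ (x₁, 0) + g x₁ * c + ε * (-c) := by
      intro ε hε
      have := hφ (y, g y + ε) (by simp [hS, hε])
      rw [hsplit y (g y + ε), hsplit x₁ (g x₁)] at this
      nlinarith
    by_contra hcon
    push_neg at hcon
    have hd : 0 < (φ (y, 0) + g y * c - (φ (x₁, 0) + g x₁ * c)) / (-c) := by
      apply div_pos (by linarith) (by linarith)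
    have := h2 _ hd
    rw [div_mul_cancel₀] at this
    · linarith
    · linarith
  set ψ : H →L[ℝ] ℝ := φ.comp (ContinuousLinearMap.inl ℝ H ℝ) with hψ
  have hψeq : ∀ y : H, ψ y = φ (y, 0) := fun y => rfl
  set u : H := (InnerProductSpace.toDual ℝ H).symm ψ with hu
  have huin : ∀ y : H, (inner ℝ u y : ℝ) = ψ y := fun y =>
    InnerProductSpace.toDual_symm_apply
  refine ⟨(-c)⁻¹ • u, fun y => ?_⟩
  have h3 := hkey y
  rw [← hψeq, ← hψeq, ← huin, ← huin] at h3
  have h4 : (inner ℝ ((-c)⁻¹ • u) (y - x₁) : ℝ) = (-c)⁻¹ * ((inner ℝ u y : ℝ) - (inner ℝ u x₁ : ℝ)) := by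
    rw [real_inner_smul_left, inner_sub_right]
  rw [h4, inv_mul_eq_div]
  have hcpos : 0 < -c := by linarith
  have h5 : (inner ℝ u y - inner ℝ u x₁ : ℝ) ≤ (g y - g x₁) * (-c) := by nlinarith
  have h6 := (div_le_iff₀ hcpos).2 h5
  linarith

theorem stmt7 {H : Type*} [NormedAddCommGroup H] [InnerProductSpace ℝ H]
    [FiniteDimensional ℝ H]
    (f : H → EReal) (hfne : ∀ x, f x ≠ ⊥)
    (hfconv : ∀ x y : H, ∀ a b : ℝ, 0 ≤ a → 0 ≤ b → a + b = 1 →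
      f (a • x + b • y) ≤ (a : EReal) * f x + (b : EReal) * f y)
    (hflsc : LowerSemicontinuous f)
    (hdom : ∃ x, f x < ⊤)
    (hbd : ∀ x ∈ frontier {x : H | f x < ⊤},
      ¬ ∃ xs : H, ∀ y : H, f x + ((inner ℝ xs (y - x) : ℝ) : EReal) ≤ f y)
    (g : H → ℝ) (hg : ConvexOn ℝ Set.univ g)
    (hcoerc : ∀ M : ℝ, ∃ Rr : ℝ, ∀ x : H, Rr ≤ ‖x‖ → (M : EReal) ≤ f x - (g x : EReal)) :
    ∃ x ∈ interior {x : H | f x < ⊤},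
      ∀ y : H, f x - (g x : EReal) ≤ f y - (g y : EReal) := by
  have hgc : Continuous g := hg.locallyLipschitz.continuous
  set h : H → EReal := fun x => f x - (g x : EReal) with hdefh
  -- h is lower semicontinuous
  have hhlsc : LowerSemicontinuous h := by
    have : h = fun x => f x + ((-(g x) : ℝ) : EReal) := by
      funext x; simp [hdefh, sub_eq_add_neg]
    rw [this]
    apply LowerSemicontinuous.add' hflsc
      ((continuous_coe_real_ereal.comp hgc.neg).lowerSemicontinuous)
    intro x
    exact EReal.continuousAt_add (Or.inr (by simp)) (Or.inr (by simp))
  obtain ⟨x₀, hx₀⟩ := hdom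
  obtain ⟨r₀, hr₀⟩ : ∃ r : ℝ, f x₀ = (r : EReal) :=
    ⟨(f x₀).toReal, (EReal.coe_toReal hx₀.ne (hfne x₀)).symm⟩
  have hhx₀ : h x₀ = ((r₀ - g x₀ : ℝ) : EReal) := by
    simp [hdefh, hr₀, EReal.coe_sub]
  set M₀ : ℝ := r₀ - g x₀ with hM₀
  obtain ⟨R, hR⟩ := hcoerc (M₀ + 1)
  set R' : ℝ := max R ‖x₀‖ with hR'
  have hKcp : IsCompact (closedBall (0 : H) R') := isCompact_closedBall _ _
  have hx₀K : x₀ ∈ closedBall (0 : H) R' := by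
    simp only [mem_closedBall, dist_zero_right]
    exact le_max_right _ _
  obtain ⟨x₁, hx₁K, hx₁min⟩ := lsc_exists_min hhlsc hKcp ⟨x₀, hx₀K⟩
  -- x₁ is a global minimizer
  have hx₁le : h x₁ ≤ ((M₀ : ℝ) : EReal) := by
    rw [← hhx₀]; exact hx₁min x₀ hx₀K
  have hglobal : ∀ y : H, h x₁ ≤ h y := by
    intro y
    by_cases hy : y ∈ closedBall (0 : H) R'
    · exact hx₁min y hy
    · have hny : R ≤ ‖y‖ := by
        simp only [mem_closedBall, dist_eq_norm, sub_zero, not_le] at hy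
        exact le_trans (le_max_left _ _) hy.le
      calc h x₁ ≤ ((M₀ : ℝ) : EReal) := hx₁le
        _ ≤ (((M₀ + 1 : ℝ)) : EReal) := by exact_mod_cast (by linarith : M₀ ≤ M₀ + 1)
        _ ≤ h y := hR y hny
  -- x₁ is in the domain
  have hx₁dom : f x₁ < ⊤ := by
    by_contra hcon
    push_neg at hcon
    rw [top_le_iff] at hcon
    have : h x₁ = ⊤ := by simp [hdefh, hcon, EReal.top_sub_coe]
    rw [this] at hx₁le
    exact absurd (top_le_iff.1 hx₁le) (by simp)
  obtain ⟨r₁, hr₁⟩ : ∃ r : ℝ, f x₁ = (r : EReal) :=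
    ⟨(f x₁).toReal, (EReal.coe_toReal hx₁dom.ne (hfne x₁)).symm⟩
  -- either x₁ is interior, or it is a frontier point, which is impossible
  by_cases hint : x₁ ∈ interior {x : H | f x < ⊤}
  · exact ⟨x₁, hint, hglobal⟩
  · exfalso
    have hfr : x₁ ∈ frontier {x : H | f x < ⊤} :=
      ⟨subset_closure hx₁dom, hint⟩
    apply hbd x₁ hfr
    obtain ⟨xs, hxs⟩ := convex_exists_subgradient hg hgc x₁
    refine ⟨xs, fun y => ?_⟩
    by_cases hyd : f y < ⊤
    · obtain ⟨ry, hry⟩ : ∃ r : ℝ, f y = (r : EReal) :=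
        ⟨(f y).toReal, (EReal.coe_toReal hyd.ne (hfne y)).symm⟩
      have hmin := hglobal y
      rw [hdefh] at hmin
      simp only [hr₁, hry, ← EReal.coe_sub, EReal.coe_le_coe_iff] at hmin
      have hsub := hxs y
      rw [hr₁, hry, ← EReal.coe_add, EReal.coe_le_coe_iff]
      linarith
    · push_neg at hyd
      rw [top_le_iff] at hyd
      rw [hyd]
      exact le_top
end

section
/- Let ψ : ℝⁿ → ℝ be a convex function with dom ψ = ℝⁿ. If ψ is strictly convex, then the union of all subdifferentials ∂ψ(x) over x ∈ ℝⁿ equals the interior of the domain of the Legendre conjugate ψ*. -/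
open InnerProductSpace

variable {n : ℕ}

local notation "V" => EuclideanSpace ℝ (Fin n)

/-- Subgradient existence for a convex function on an open convex set. -/
lemma lemA {s : Set (EuclideanSpace ℝ (Fin n))} (hso : IsOpen s)
    {f : EuclideanSpace ℝ (Fin n) → ℝ} (hf : ConvexOn ℝ s f)
    {a : EuclideanSpace ℝ (Fin n)} (ha : a ∈ s) :
    ∃ g : EuclideanSpace ℝ (Fin n), ∀ z ∈ s, f a + (inner ℝ g (z - a) : ℝ) ≤ f z := by
  classical
  set U : Set ((EuclideanSpace ℝ (Fin n)) × ℝ) := {p | p.1 ∈ s ∧ f p.1 < p.2} with hU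
  have hUconv : Convex ℝ U := by
    rintro ⟨p1, p2⟩ ⟨hp1, hp2⟩ ⟨q1, q2⟩ ⟨hq1, hq2⟩ lam mu hlam hmu hsum
    refine ⟨hf.1 hp1 hq1 hlam hmu hsum, ?_⟩
    calc f (lam • p1 + mu • q1) ≤ lam * f p1 + mu * f q1 := hf.2 hp1 hq1 hlam hmu hsum
    _ < lam * p2 + mu * q2 := by
        rcases hlam.eq_or_lt with rfl | hlam'
        · simp only [zero_mul, zero_add] at hsum ⊢
          rw [hsum] at hmu ⊢
          nlinarith
        · rcases hmu.eq_or_lt with rfl | hmu'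
          · simp only [add_zero, zero_mul] at hsum ⊢
            rw [hsum]; nlinarith
          · nlinarith
  have hUopen : IsOpen U := by
    have hc : ContinuousOn (fun p : (EuclideanSpace ℝ (Fin n)) × ℝ => f p.1 - p.2)
        (s ×ˢ (Set.univ : Set ℝ)) := by
      apply ContinuousOn.sub
      · exact (hf.continuousOn hso).comp continuous_fst.continuousOn
          (fun p hp => hp.1)
      · exact continuous_snd.continuousOn
    have := hc.isOpen_inter_preimage (hso.prod isOpen_univ) isOpen_Iio (t := Set.Iio (0:ℝ))
    convert this using 1
    ext ⟨p1, p2⟩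
    simp [hU, sub_neg]
  have hnot : (a, f a) ∉ U := fun h => lt_irrefl _ h.2
  obtain ⟨l, hl⟩ := geometric_hahn_banach_open_point hUconv hUopen hnot
  set c : ℝ := l (0, 1) with hc
  have hsplit : ∀ z : EuclideanSpace ℝ (Fin n), ∀ t : ℝ, l (z, t) = l (z, 0) + t * c := by
    intro z t
    have : (z, t) = (z, (0:ℝ)) + t • ((0 : EuclideanSpace ℝ (Fin n)), (1:ℝ)) := by
      simp [Prod.ext_iff]
    rw [this, map_add, map_smul, hc, smul_eq_mul]
  have hcneg : c < 0 := by
    have h1 := hl (a, f a + 1) ⟨ha, by show f a < f a + 1; linarith⟩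
    rw [hsplit a (f a + 1), hsplit a (f a)] at h1
    nlinarith
  -- base inequality
  have key : ∀ z ∈ s, l (z, 0) + f z * c ≤ l (a, 0) + f a * c := by
    intro z hz
    have h2 : ∀ ε > (0:ℝ), l (z,0) + f z * c ≤ l (a,0) + f a * c + ε := by
      intro ε hε
      have hδ : (0:ℝ) < ε / (-c) := div_pos hε (by linarith)
      have h3 := hl (z, f z + ε / (-c)) ⟨hz, by show f z < _; linarith⟩
      rw [hsplit z _, hsplit a _] at h3
      have hcne : c ≠ 0 := by linarith
      have : (f z + ε / (-c)) * c = f z * c - ε := by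
        rw [add_mul, div_mul_eq_mul_div, div_neg, mul_div_assoc, div_self hcne]
        ring
      nlinarith
    exact le_of_forall_pos_le_add h2
  set l1 : (EuclideanSpace ℝ (Fin n)) →L[ℝ] ℝ :=
    l.comp (ContinuousLinearMap.inl ℝ _ ℝ) with hl1
  refine ⟨(toDual ℝ (EuclideanSpace ℝ (Fin n))).symm ((-c)⁻¹ • l1), fun z hz => ?_⟩
  have hg : (inner ℝ ((toDual ℝ (EuclideanSpace ℝ (Fin n))).symm ((-c)⁻¹ • l1)) (z - a) : ℝ)
      = (-c)⁻¹ * (l (z - a, 0)) := by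
    rw [toDual_symm_apply]
    rw [ContinuousLinearMap.smul_apply, hl1, ContinuousLinearMap.comp_apply,
      ContinuousLinearMap.inl_apply, smul_eq_mul]
  rw [hg, inv_mul_eq_div]
  have hlin : l (z - a, (0:ℝ)) = l (z, 0) - l (a, 0) := by
    have : ((z - a, (0:ℝ)) : (EuclideanSpace ℝ (Fin n)) × ℝ) = (z, 0) - (a, 0) := by
      simp [Prod.ext_iff]
    rw [this, map_sub]
  rw [hlin]
  have hk := key z hz
  have hcpos : (0:ℝ) < -c := by linarith
  have : (l (z,0) - l (a,0)) / (-c) ≤ f z - f a := by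
    rw [div_le_iff₀ hcpos]; nlinarith
  linarith

section Main

variable (ψ : EuclideanSpace ℝ (Fin n) → ℝ)

/-- The (real characterization of the) domain of the conjugate. -/
def Dom : Set (EuclideanSpace ℝ (Fin n)) :=
  {y | ∃ C : ℝ, ∀ x, (inner ℝ x y : ℝ) - ψ x ≤ C}

/-- The real-valued conjugate (meaningful on `Dom`). -/
noncomputable def phi (y : EuclideanSpace ℝ (Fin n)) : ℝ :=
  sSup (Set.range fun x => (inner ℝ x y : ℝ) - ψ x)

lemma dom_eq :
    {y : EuclideanSpace ℝ (Fin n) |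
        (⨆ x, (((inner ℝ x y : ℝ) - ψ x : ℝ) : EReal)) < ⊤} = Dom ψ := by
  ext y
  simp only [Set.mem_setOf_eq, Dom]
  constructor
  · intro h
    set S : EReal := ⨆ x, (((inner ℝ x y : ℝ) - ψ x : ℝ) : EReal) with hS
    have hle : ∀ x, (((inner ℝ x y : ℝ) - ψ x : ℝ) : EReal) ≤ S :=
      fun x => le_iSup (fun x => (((inner ℝ x y : ℝ) - ψ x : ℝ) : EReal)) x
    have hSbot : (⊥ : EReal) < S := lt_of_lt_of_le (EReal.bot_lt_coe _) (hle 0)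
    refine ⟨S.toReal, fun x => ?_⟩
    have := hle x
    rwa [← EReal.coe_toReal h.ne hSbot.ne', EReal.coe_le_coe_iff] at this
  · rintro ⟨C, hC⟩
    refine lt_of_le_of_lt (iSup_le fun x => ?_) (EReal.coe_lt_top C)
    exact EReal.coe_le_coe_iff.mpr (hC x)

lemma phi_ge {y : EuclideanSpace ℝ (Fin n)} (hy : y ∈ Dom ψ) (x : EuclideanSpace ℝ (Fin n)) :
    (inner ℝ x y : ℝ) - ψ x ≤ phi ψ y := by
  obtain ⟨C, hC⟩ := hy
  exact le_csSup ⟨C, by rintro r ⟨x, rfl⟩; exact hC x⟩ ⟨x, rfl⟩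

lemma phi_le {y : EuclideanSpace ℝ (Fin n)} {C : ℝ}
    (hC : ∀ x, (inner ℝ x y : ℝ) - ψ x ≤ C) : phi ψ y ≤ C :=
  csSup_le ⟨(inner ℝ 0 y : ℝ) - ψ 0, ⟨0, rfl⟩⟩ (by rintro r ⟨x, rfl⟩; exact hC x)

lemma dom_convex : Convex ℝ (Dom ψ) := by
  rintro y1 ⟨C1, h1⟩ y2 ⟨C2, h2⟩ a b ha hb hab
  refine ⟨a * C1 + b * C2, fun x => ?_⟩
  have : (inner ℝ x (a • y1 + b • y2) : ℝ) - ψ x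
      = a * ((inner ℝ x y1 : ℝ) - ψ x) + b * ((inner ℝ x y2 : ℝ) - ψ x) := by
    rw [inner_add_right, real_inner_smul_right, real_inner_smul_right]
    linear_combination (ψ x) * hab
  rw [this]
  have h1' := mul_le_mul_of_nonneg_left (h1 x) ha
  have h2' := mul_le_mul_of_nonneg_left (h2 x) hb
  linarith

lemma phi_convexOn : ConvexOn ℝ (Dom ψ) (phi ψ) := by
  refine ⟨dom_convex ψ, ?_⟩
  rintro y1 hy1 y2 hy2 a b ha hb hab
  refine phi_le ψ fun x => ?_
  have h1 := phi_ge ψ hy1 x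
  have h2 := phi_ge ψ hy2 x
  have : (inner ℝ x (a • y1 + b • y2) : ℝ) - ψ x
      = a * ((inner ℝ x y1 : ℝ) - ψ x) + b * ((inner ℝ x y2 : ℝ) - ψ x) := by
    rw [inner_add_right, real_inner_smul_right, real_inner_smul_right]
    linear_combination (ψ x) * hab
  rw [this, smul_eq_mul, smul_eq_mul]
  have h1' := mul_le_mul_of_nonneg_left h1 ha
  have h2' := mul_le_mul_of_nonneg_left h2 hb
  linarith

/-- A subgradient point gives membership in the domain and the value of φ. -/
lemma subgrad_dom {x y : EuclideanSpace ℝ (Fin n)}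
    (h : ∀ z, ψ x + (inner ℝ y (z - x) : ℝ) ≤ ψ z) :
    y ∈ Dom ψ ∧ phi ψ y = (inner ℝ x y : ℝ) - ψ x := by
  have key : ∀ z, (inner ℝ z y : ℝ) - ψ z ≤ (inner ℝ x y : ℝ) - ψ x := by
    intro z
    have := h z
    have hi : (inner ℝ y (z - x) : ℝ) = (inner ℝ z y : ℝ) - (inner ℝ x y : ℝ) := by
      rw [inner_sub_right, real_inner_comm y z, real_inner_comm y x]
    linarith [hi ▸ this]
  refine ⟨⟨_, key⟩, le_antisymm (phi_le ψ key) ?_⟩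
  exact phi_ge ψ ⟨_, key⟩ x

end Main

/-- Supporting hyperplane at a non-interior point of a convex set in Euclidean space. -/
lemma support_hyperplane {D : Set (EuclideanSpace ℝ (Fin n))} (hD : Convex ℝ D)
    {y : EuclideanSpace ℝ (Fin n)} (hy : y ∈ D) (hyn : y ∉ interior D) :
    ∃ d : EuclideanSpace ℝ (Fin n), d ≠ 0 ∧
      ∀ y' ∈ D, (inner ℝ d y' : ℝ) ≤ (inner ℝ d y : ℝ) := by
  classical
  by_cases hint : (interior D).Nonempty
  · obtain ⟨b, hb⟩ := hint
    obtain ⟨l, hl⟩ := geometric_hahn_banach_open_point (hD.interior) isOpen_interior hyn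
    have hext : ∀ a ∈ D, l a ≤ l y := by
      intro a ha
      refine le_of_forall_pos_le_add fun ε hε => ?_
      set M : ℝ := |l b - l a| + 1 with hM
      have hM0 : (0:ℝ) < M := by positivity
      set t : ℝ := min (1/2) (ε / M) with ht
      have ht0 : 0 < t := lt_min (by norm_num) (div_pos hε hM0)
      have ht1 : t ≤ 1/2 := min_le_left _ _
      have htε : t * M ≤ ε := by
        rw [← le_div_iff₀ hM0]; exact min_le_right _ _
      have hmem : t • b + (1 - t) • a ∈ interior D :=
        hD.combo_interior_self_mem_interior hb ha ht0 (by linarith) (by ring)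
      have := hl _ hmem
      rw [map_add, map_smul, map_smul, smul_eq_mul, smul_eq_mul] at this
      have habs : l a - l b ≤ M := by
        have h1 : l a - l b ≤ |l b - l a| := by rw [abs_sub_comm]; exact le_abs_self _
        rw [hM]; linarith
      nlinarith
    refine ⟨(toDual ℝ (EuclideanSpace ℝ (Fin n))).symm l, ?_, fun y' hy' => ?_⟩
    · intro h0
      have : l = 0 := by
        have := congrArg (toDual ℝ (EuclideanSpace ℝ (Fin n))) h0
        simpa using this
      have hb' := hl b hb
      rw [this] at hb'
      simp at hb'
    · rw [real_inner_comm, toDual_symm_apply, real_inner_comm, toDual_symm_apply]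
      exact hext y' hy'
  · -- interior empty: D lies in a proper affine subspace
    have hspan : affineSpan ℝ D ≠ ⊤ := by
      intro h
      exact hint ((hD.interior_nonempty_iff_affineSpan_eq_top).mpr h)
    have hyA : y ∈ affineSpan ℝ D := subset_affineSpan ℝ D hy
    have hdir : (affineSpan ℝ D).direction ≠ ⊤ := by
      intro h
      exact hspan ((AffineSubspace.direction_eq_top_iff_of_nonempty ⟨y, hyA⟩).mp h)
    have horth : ((affineSpan ℝ D).direction)ᗮ ≠ ⊥ := by
      intro h
      exact hdir (Submodule.orthogonal_eq_bot_iff.mp h)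
    obtain ⟨d, hd, hd0⟩ := Submodule.exists_mem_ne_zero_of_ne_bot horth
    refine ⟨d, hd0, fun y' hy' => ?_⟩
    have hv : y' - y ∈ (affineSpan ℝ D).direction := by
      simpa [vsub_eq_sub] using
        AffineSubspace.vsub_mem_direction (subset_affineSpan ℝ D hy') hyA
    have : (inner ℝ d (y' - y) : ℝ) = 0 := by
      have := (Submodule.mem_orthogonal _ d).mp hd (y' - y) hv
      rwa [real_inner_comm] at this
    rw [inner_sub_right] at this
    linarith

theorem stmt8' (ψ : EuclideanSpace ℝ (Fin n) → ℝ)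
    (hψ : StrictConvexOn ℝ Set.univ ψ) :
    {y : EuclideanSpace ℝ (Fin n) |
        ∃ x, ∀ z, ψ x + (inner ℝ y (z - x) : ℝ) ≤ ψ z} =
      interior {y : EuclideanSpace ℝ (Fin n) |
        (⨆ x, (((inner ℝ x y : ℝ) - ψ x : ℝ) : EReal)) < ⊤} := by
  have hconv : ConvexOn ℝ Set.univ ψ := hψ.convexOn
  rw [dom_eq ψ]
  apply Set.Subset.antisymm
  · rintro y ⟨x, hx⟩
    obtain ⟨hyD, hval⟩ := subgrad_dom ψ hx
    by_contra hyn
    obtain ⟨d, hd0, hsup⟩ := support_hyperplane (dom_convex ψ) hyD hyn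
    obtain ⟨yw, hyw⟩ := lemA isOpen_univ hconv (Set.mem_univ (x + d))
    have hyw' : ∀ z, ψ (x + d) + (inner ℝ yw (z - (x + d)) : ℝ) ≤ ψ z :=
      fun z => hyw z (Set.mem_univ z)
    have hywD := (subgrad_dom ψ hyw').1
    have h1 := hyw' x
    have hxd : x - (x + d) = -d := by abel
    rw [hxd, inner_neg_right] at h1
    -- h1 : ψ (x+d) - ⟪yw, d⟫ ≤ ψ x
    have h2 : (inner ℝ yw d : ℝ) ≤ (inner ℝ y d : ℝ) := by
      have := hsup yw hywD
      rw [← real_inner_comm yw d, ← real_inner_comm y d]; exact this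
    have hw : ψ (x + d) ≤ ψ x + (inner ℝ y d : ℝ) := by linarith
    have hne : x ≠ x + d := by
      intro h; exact hd0 (by simpa using (left_eq_add).mp h)
    have hsc := hψ.2 (Set.mem_univ x) (Set.mem_univ (x + d)) hne
      (by norm_num : (0:ℝ) < 1/2) (by norm_num : (0:ℝ) < 1/2) (by norm_num)
    rw [smul_eq_mul, smul_eq_mul] at hsc
    have hmid := hx ((1/2 : ℝ) • x + (1/2 : ℝ) • (x + d))
    have hmx : ((1/2 : ℝ) • x + (1/2 : ℝ) • (x + d)) - x = (1/2 : ℝ) • d := by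
      module
    rw [hmx, real_inner_smul_right] at hmid
    linarith
  · intro y0 hy0
    have hy0D : y0 ∈ Dom ψ := interior_subset hy0
    have hφconv : ConvexOn ℝ (interior (Dom ψ)) (phi ψ) :=
      (phi_convexOn ψ).subset interior_subset (dom_convex ψ).interior
    obtain ⟨x, hx⟩ := lemA isOpen_interior hφconv hy0
    have hxD : ∀ y' ∈ Dom ψ, phi ψ y0 + (inner ℝ x (y' - y0) : ℝ) ≤ phi ψ y' := by
      intro y' hy'
      have hm : (1/2 : ℝ) • y0 + (1/2 : ℝ) • y' ∈ interior (Dom ψ) :=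
        (dom_convex ψ).combo_interior_self_mem_interior hy0 hy'
          (by norm_num) (by norm_num) (by norm_num)
      have h1 := hx _ hm
      have h2 := (phi_convexOn ψ).2 hy0D hy'
        (by norm_num : (0:ℝ) ≤ 1/2) (by norm_num : (0:ℝ) ≤ 1/2) (by norm_num)
      rw [smul_eq_mul, smul_eq_mul] at h2
      have hmx : ((1/2 : ℝ) • y0 + (1/2 : ℝ) • y') - y0 = (1/2 : ℝ) • (y' - y0) := by
        module
      rw [hmx, real_inner_smul_right] at h1
      linarith
    obtain ⟨yx, hyx⟩ := lemA isOpen_univ hconv (Set.mem_univ x)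
    have hyx' : ∀ z, ψ x + (inner ℝ yx (z - x) : ℝ) ≤ ψ z := fun z => hyx z trivial
    obtain ⟨hyxD, hyxval⟩ := subgrad_dom ψ hyx'
    have h3 := hxD yx hyxD
    rw [hyxval, inner_sub_right] at h3
    have hψx : ψ x ≤ (inner ℝ x y0 : ℝ) - phi ψ y0 := by linarith
    refine ⟨x, fun z => ?_⟩
    have h4 := phi_ge ψ hy0D z
    have hi : (inner ℝ y0 (z - x) : ℝ) = (inner ℝ z y0 : ℝ) - (inner ℝ x y0 : ℝ) := by
      rw [inner_sub_right, real_inner_comm y0 z, real_inner_comm y0 x]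
    rw [hi]
    linarith

theorem stmt8 {n : ℕ} (ψ : EuclideanSpace ℝ (Fin n) → ℝ)
    (hψ : StrictConvexOn ℝ Set.univ ψ) :
    {y : EuclideanSpace ℝ (Fin n) |
        ∃ x, ∀ z, ψ x + (inner ℝ y (z - x) : ℝ) ≤ ψ z} =
      interior {y : EuclideanSpace ℝ (Fin n) |
        (⨆ x, (((inner ℝ x y : ℝ) - ψ x : ℝ) : EReal)) < ⊤} :=
  stmt8' ψ hψ
end

section
/- Let R be a p×n real matrix and S an r×n real matrix, and let M be the block matrix [[−I_p + R Rᵀ, R Sᵀ],[S Rᵀ, I_r + S Sᵀ]]. Then M is positive semidefinite if and only if R (I_n + Sᵀ S)⁻¹ Rᵀ ≥ I_p (in the Loewner order). -/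
open Matrix

theorem stmt11 {p r n : ℕ} (R : Matrix (Fin p) (Fin n) ℝ) (S : Matrix (Fin r) (Fin n) ℝ) :
    (Matrix.fromBlocks (-(1 : Matrix (Fin p) (Fin p) ℝ) + R * Rᵀ) (R * Sᵀ)
        (S * Rᵀ) ((1 : Matrix (Fin r) (Fin r) ℝ) + S * Sᵀ)).PosSemidef ↔
      (R * ((1 : Matrix (Fin n) (Fin n) ℝ) + Sᵀ * S)⁻¹ * Rᵀ -
        (1 : Matrix (Fin p) (Fin p) ℝ)).PosSemidef := by
  have hD : ((1 : Matrix (Fin r) (Fin r) ℝ) + S * Sᵀ).PosDef := by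
    have : (S * Sᵀ).PosSemidef := by
      simpa using Matrix.posSemidef_self_mul_conjTranspose S
    exact Matrix.PosDef.add_posSemidef Matrix.PosDef.one this
  have hE : ((1 : Matrix (Fin n) (Fin n) ℝ) + Sᵀ * S).PosDef := by
    have : (Sᵀ * S).PosSemidef := by
      simpa using Matrix.posSemidef_conjTranspose_mul_self S
    exact Matrix.PosDef.add_posSemidef Matrix.PosDef.one this
  haveI := Matrix.invertibleOfIsUnitDet _ hD.det_pos.ne'.isUnit
  haveI := Matrix.invertibleOfIsUnitDet _ hE.det_pos.ne'.isUnit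
  have hBH : (S * Rᵀ) = (R * Sᵀ)ᴴ := by
    simp [conjTranspose_mul, conjTranspose_eq_transpose_of_trivial]
  rw [hBH, Matrix.PosDef.fromBlocks₂₂ _ _ hD]
  have push : Sᵀ * ((1 : Matrix (Fin r) (Fin r) ℝ) + S * Sᵀ)⁻¹ =
      ((1 : Matrix (Fin n) (Fin n) ℝ) + Sᵀ * S)⁻¹ * Sᵀ := by
    have h : ((1 : Matrix (Fin n) (Fin n) ℝ) + Sᵀ * S) * (Sᵀ * ((1 : Matrix (Fin r) (Fin r) ℝ) + S * Sᵀ)⁻¹)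
        = Sᵀ := by
      have : ((1 : Matrix (Fin n) (Fin n) ℝ) + Sᵀ * S) * Sᵀ
          = Sᵀ * ((1 : Matrix (Fin r) (Fin r) ℝ) + S * Sᵀ) := by
        simp [Matrix.mul_add, Matrix.add_mul, Matrix.mul_assoc]
      rw [← Matrix.mul_assoc, this, Matrix.mul_assoc,
        Matrix.mul_nonsing_inv _ hD.det_pos.ne'.isUnit, Matrix.mul_one]
    calc Sᵀ * ((1 : Matrix (Fin r) (Fin r) ℝ) + S * Sᵀ)⁻¹
        = ((1 : Matrix (Fin n) (Fin n) ℝ) + Sᵀ * S)⁻¹ *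
          (((1 : Matrix (Fin n) (Fin n) ℝ) + Sᵀ * S) *
            (Sᵀ * ((1 : Matrix (Fin r) (Fin r) ℝ) + S * Sᵀ)⁻¹)) := by
          rw [← Matrix.mul_assoc, Matrix.nonsing_inv_mul _ hE.det_pos.ne'.isUnit, Matrix.one_mul]
      _ = ((1 : Matrix (Fin n) (Fin n) ℝ) + Sᵀ * S)⁻¹ * Sᵀ := by rw [h]
  have key : -(1 : Matrix (Fin p) (Fin p) ℝ) + R * Rᵀ -
      R * Sᵀ * ((1 : Matrix (Fin r) (Fin r) ℝ) + S * Sᵀ)⁻¹ * (R * Sᵀ)ᴴ =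
      R * ((1 : Matrix (Fin n) (Fin n) ℝ) + Sᵀ * S)⁻¹ * Rᵀ -
        (1 : Matrix (Fin p) (Fin p) ℝ) := by
    rw [← hBH]
    have : R * Sᵀ * ((1 : Matrix (Fin r) (Fin r) ℝ) + S * Sᵀ)⁻¹ * (S * Rᵀ)
        = R * (((1 : Matrix (Fin n) (Fin n) ℝ) + Sᵀ * S)⁻¹ * (Sᵀ * S)) * Rᵀ := by
      rw [Matrix.mul_assoc R Sᵀ, push]
      simp [Matrix.mul_assoc]
    rw [this]
    have hsum : ((1 : Matrix (Fin n) (Fin n) ℝ) + Sᵀ * S)⁻¹ * (Sᵀ * S)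
        = 1 - ((1 : Matrix (Fin n) (Fin n) ℝ) + Sᵀ * S)⁻¹ := by
      have := Matrix.nonsing_inv_mul _ hE.det_pos.ne'.isUnit
      calc ((1 : Matrix (Fin n) (Fin n) ℝ) + Sᵀ * S)⁻¹ * (Sᵀ * S)
          = ((1 : Matrix (Fin n) (Fin n) ℝ) + Sᵀ * S)⁻¹ *
            ((1 + Sᵀ * S) - 1) := by noncomm_ring
        _ = 1 - ((1 : Matrix (Fin n) (Fin n) ℝ) + Sᵀ * S)⁻¹ := by
            rw [Matrix.mul_sub, this, Matrix.mul_one]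
    rw [hsum]
    simp [Matrix.mul_sub, Matrix.sub_mul, Matrix.mul_one]
    abel
  rw [key]
end

section
/- Let R be an invertible n×n real matrix and S an r×n real matrix, and let M be the block matrix [[−I_n + R Rᵀ, R Sᵀ],[S Rᵀ, I_r + S Sᵀ]]. Then M is positive semidefinite if and only if Rᵀ R − Sᵀ S ≥ I_n in the Loewner order. -/
open Matrix

section Aux

variable {k l : ℕ}

private lemma real_conjT (A : Matrix (Fin k) (Fin l) ℝ) : Aᴴ = Aᵀ :=
  conjTranspose_eq_transpose_of_trivial A

private lemma psd_tmul (A : Matrix (Fin k) (Fin l) ℝ) : (Aᵀ * A).PosSemidef := by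
  rw [← real_conjT]; exact posSemidef_conjTranspose_mul_self A

private lemma pd_one_add_tmul (A : Matrix (Fin k) (Fin l) ℝ) :
    ((1 : Matrix (Fin l) (Fin l) ℝ) + Aᵀ * A).PosDef :=
  Matrix.PosDef.one.add_posSemidef (psd_tmul A)

/-- Conjugation by an invertible matrix preserves PSD, as an iff. -/
private lemma psd_conj_iff (U : Matrix (Fin k) (Fin k) ℝ) (hU : IsUnit U.det)
    (X : Matrix (Fin k) (Fin k) ℝ) :
    (U * X * Uᵀ).PosSemidef ↔ X.PosSemidef := by
  constructor
  · intro h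
    have h2 := h.mul_mul_conjTranspose_same U⁻¹
    rw [real_conjT, transpose_nonsing_inv] at h2
    have hUt : IsUnit Uᵀ.det := by rwa [det_transpose]
    have heq : U⁻¹ * (U * X * Uᵀ) * Uᵀ⁻¹ = X := by
      simp only [← Matrix.mul_assoc]
      rw [nonsing_inv_mul _ hU, Matrix.one_mul, Matrix.mul_assoc,
        mul_nonsing_inv _ hUt, Matrix.mul_one]
    rwa [heq] at h2
  · intro h
    have h2 := h.mul_mul_conjTranspose_same U
    rwa [real_conjT] at h2

private lemma pd_tmul_self (R : Matrix (Fin k) (Fin k) ℝ) (hR : IsUnit R.det) :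
    (Rᵀ * R).PosDef := by
  refine PosDef.of_dotProduct_mulVec_pos (psd_tmul R).isHermitian fun x hx => ?_
  have : Invertible R := R.invertibleOfIsUnitDet hR
  have hRx : R *ᵥ x ≠ 0 := fun h0 => hx (by
    have := R.mulVec_injective_of_invertible (h0.trans (R.mulVec_zero).symm)
    simpa using this)
  have key : star x ⬝ᵥ (Rᵀ * R) *ᵥ x = (R *ᵥ x) ⬝ᵥ (R *ᵥ x) := by
    rw [star_trivial, ← mulVec_mulVec, dotProduct_mulVec, vecMul_transpose]
  rw [key]
  rcases lt_or_eq_of_le (Finset.sum_nonneg fun i _ => mul_self_nonneg ((R *ᵥ x) i) :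
      (0:ℝ) ≤ (R *ᵥ x) ⬝ᵥ (R *ᵥ x)) with h | h
  · exact h
  · exact absurd (dotProduct_self_eq_zero.mp h.symm) hRx

end Aux

theorem stmt12 {r n : ℕ} (R : Matrix (Fin n) (Fin n) ℝ) (hR : IsUnit R.det)
    (S : Matrix (Fin r) (Fin n) ℝ) :
    (Matrix.fromBlocks (-(1 : Matrix (Fin n) (Fin n) ℝ) + R * Rᵀ) (R * Sᵀ)
        (S * Rᵀ) ((1 : Matrix (Fin r) (Fin r) ℝ) + S * Sᵀ)).PosSemidef ↔
      (Rᵀ * R - Sᵀ * S - (1 : Matrix (Fin n) (Fin n) ℝ)).PosSemidef := by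
  set T : Matrix (Fin n) (Fin n) ℝ := 1 + Sᵀ * S with hTdef
  set D : Matrix (Fin r) (Fin r) ℝ := 1 + S * Sᵀ with hDdef
  have hT : T.PosDef := pd_one_add_tmul S
  have hD : D.PosDef := by
    have h := pd_one_add_tmul Sᵀ
    rwa [transpose_transpose] at h
  have hTu : IsUnit T.det := isUnit_iff_ne_zero.mpr hT.det_pos.ne'
  have hDu : IsUnit D.det := isUnit_iff_ne_zero.mpr hD.det_pos.ne'
  have : Invertible D := D.invertibleOfIsUnitDet hDu
  have hRtR : (Rᵀ * R).PosDef := pd_tmul_self R hR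
  have hRtRu : IsUnit (Rᵀ * R).det := isUnit_iff_ne_zero.mpr hRtR.det_pos.ne'
  have : Invertible (Rᵀ * R) := (Rᵀ * R).invertibleOfIsUnitDet hRtRu
  have hTinv : T⁻¹.PosDef := hT.inv
  have : Invertible T⁻¹ :=
    T⁻¹.invertibleOfIsUnitDet (isUnit_iff_ne_zero.mpr hTinv.det_pos.ne')
  -- Step 1: Schur complement in the (2,2) block
  have hBH : (R * Sᵀ)ᴴ = S * Rᵀ := by
    rw [real_conjT, transpose_mul, transpose_transpose]
  have step1 : (Matrix.fromBlocks (-(1 : Matrix (Fin n) (Fin n) ℝ) + R * Rᵀ) (R * Sᵀ)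
        (S * Rᵀ) D).PosSemidef ↔
      ((-(1 : Matrix (Fin n) (Fin n) ℝ) + R * Rᵀ) - (R * Sᵀ) * D⁻¹ * (R * Sᵀ)ᴴ).PosSemidef := by
    rw [← hBH]
    exact PosDef.fromBlocks₂₂ _ _ hD
  -- key identity : Sᵀ * D⁻¹ = T⁻¹ * Sᵀ
  have hswap : Sᵀ * D⁻¹ = T⁻¹ * Sᵀ := by
    have h1 : T * Sᵀ = Sᵀ * D := by
      rw [hTdef, hDdef, Matrix.add_mul, Matrix.mul_add, Matrix.one_mul,
        Matrix.mul_one, Matrix.mul_assoc]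
    have h2 := congrArg (fun M => T⁻¹ * M * D⁻¹) h1
    simpa [Matrix.mul_assoc, mul_nonsing_inv _ hDu, ← Matrix.mul_assoc,
      nonsing_inv_mul _ hTu] using h2
  have simp2 : (-(1 : Matrix (Fin n) (Fin n) ℝ) + R * Rᵀ) - (R * Sᵀ) * D⁻¹ * (R * Sᵀ)ᴴ
      = R * T⁻¹ * Rᵀ - 1 := by
    rw [hBH]
    have h2 : (R * Sᵀ) * D⁻¹ * (S * Rᵀ) = R * (T⁻¹ * (Sᵀ * S)) * Rᵀ := by
      rw [Matrix.mul_assoc R Sᵀ D⁻¹, hswap]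
      simp only [Matrix.mul_assoc]
    rw [h2]
    have h4 : (1 : Matrix (Fin n) (Fin n) ℝ) - T⁻¹ * (Sᵀ * S) = T⁻¹ := by
      have h5 : T⁻¹ * T - T⁻¹ * (Sᵀ * S) = T⁻¹ := by
        rw [hTdef, Matrix.mul_add, Matrix.mul_one]; abel
      rwa [nonsing_inv_mul _ hTu] at h5
    calc -(1 : Matrix (Fin n) (Fin n) ℝ) + R * Rᵀ - R * (T⁻¹ * (Sᵀ * S)) * Rᵀ
        = R * (1 - T⁻¹ * (Sᵀ * S)) * Rᵀ - 1 := by noncomm_ring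
      _ = R * T⁻¹ * Rᵀ - 1 := by rw [h4]
  -- Step 3 : conjugate by R
  have step3 : (R * T⁻¹ * Rᵀ - 1).PosSemidef ↔ (T⁻¹ - (Rᵀ * R)⁻¹).PosSemidef := by
    have hInvR : Invertible R := R.invertibleOfIsUnitDet hR
    have hRtu : IsUnit Rᵀ.det := by rwa [det_transpose]
    have hconj : R * (T⁻¹ - (Rᵀ * R)⁻¹) * Rᵀ = R * T⁻¹ * Rᵀ - 1 := by
      have h5 : R * (Rᵀ * R)⁻¹ * Rᵀ = 1 := by
        rw [Matrix.mul_inv_rev, ← Matrix.mul_assoc, mul_nonsing_inv _ hR,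
          Matrix.one_mul, nonsing_inv_mul _ hRtu]
      rw [Matrix.mul_sub, Matrix.sub_mul, h5]
    rw [← psd_conj_iff R hR (T⁻¹ - (Rᵀ * R)⁻¹), hconj]
  -- Step 4 : block matrix trick
  have step4 : (T⁻¹ - (Rᵀ * R)⁻¹).PosSemidef ↔ (Rᵀ * R - T).PosSemidef := by
    have h11 := PosDef.fromBlocks₁₁ (1 : Matrix (Fin n) (Fin n) ℝ) T⁻¹ hRtR
    have h22 := PosDef.fromBlocks₂₂ (Rᵀ * R) (1 : Matrix (Fin n) (Fin n) ℝ) hTinv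
    rw [conjTranspose_one] at h11 h22
    rw [Matrix.mul_one, Matrix.one_mul] at h11
    rw [Matrix.mul_one, Matrix.one_mul, nonsing_inv_nonsing_inv _ hTu] at h22
    rw [← h11, h22]
  have hfin : Rᵀ * R - T = Rᵀ * R - Sᵀ * S - 1 := by rw [hTdef]; abel
  rw [step1, simp2, step3, step4, hfin]
end

section
/- Let A, B be real symmetric d×d matrices with A positive semidefinite and A + B positive definite. If A (A+B)⁻¹ A ⪰ A in the Loewner order, then the number of positive eigenvalues of B is at most the dimension of the kernel of A. -/
open Matrix

private lemma dot_sum_left {ι : Type*} {d : ℕ} (t : Finset ι) (f : ι → Fin d → ℝ)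
    (y : Fin d → ℝ) : (∑ i ∈ t, f i) ⬝ᵥ y = ∑ i ∈ t, f i ⬝ᵥ y := by
  simp only [dotProduct, Finset.sum_apply, Finset.sum_mul]
  exact Finset.sum_comm

private lemma dot_sum_right {ι : Type*} {d : ℕ} (t : Finset ι) (f : ι → Fin d → ℝ)
    (y : Fin d → ℝ) : y ⬝ᵥ (∑ i ∈ t, f i) = ∑ i ∈ t, y ⬝ᵥ f i := by
  simp only [dotProduct, Finset.sum_apply, Finset.mul_sum]
  exact Finset.sum_comm

theorem stmt13 {d : ℕ} (A B : Matrix (Fin d) (Fin d) ℝ)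
    (hA : A.PosSemidef) (hB : B.IsHermitian) (hAB : (A + B).PosDef)
    (h : (A * (A + B)⁻¹ * A - A).PosSemidef) :
    (Finset.univ.filter fun i => 0 < hB.eigenvalues i).card ≤
      Module.finrank ℝ (LinearMap.ker A.mulVecLin) := by
  classical
  set M := A + B with hM
  have hMdet : IsUnit M.det := hAB.det_pos.ne'.isUnit
  -- symmetry of dot products with A
  have hsymm : ∀ x y : Fin d → ℝ, x ⬝ᵥ (A *ᵥ y) = y ⬝ᵥ (A *ᵥ x) := by
    intro x y
    rw [Matrix.dotProduct_mulVec, dotProduct_comm, ← Matrix.mulVec_transpose]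
    congr 1
    have := hA.1
    rw [Matrix.IsHermitian, conjTranspose_eq_transpose_of_trivial] at this
    rw [this]
  -- B is nonpositive on range (M⁻¹ * A)
  have key : ∀ y : Fin d → ℝ, (M⁻¹ *ᵥ (A *ᵥ y)) ⬝ᵥ (B *ᵥ (M⁻¹ *ᵥ (A *ᵥ y))) ≤ 0 := by
    intro y
    set z := M⁻¹ *ᵥ (A *ᵥ y) with hz
    have h1 : 0 ≤ y ⬝ᵥ (A *ᵥ z) - y ⬝ᵥ (A *ᵥ y) := by
      have := h.dotProduct_mulVec_nonneg y
      rw [star_trivial, Matrix.sub_mulVec, dotProduct_sub] at this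
      have e1 : (A * M⁻¹ * A) *ᵥ y = A *ᵥ z := by
        rw [hz, Matrix.mulVec_mulVec, Matrix.mulVec_mulVec]
      rwa [e1] at this
    have h2 : 0 ≤ (y - z) ⬝ᵥ (A *ᵥ (y - z)) := by
      have := hA.dotProduct_mulVec_nonneg (y - z); rwa [star_trivial] at this
    have h3 : (y - z) ⬝ᵥ (A *ᵥ (y - z)) =
        y ⬝ᵥ (A *ᵥ y) - 2 * (y ⬝ᵥ (A *ᵥ z)) + z ⬝ᵥ (A *ᵥ z) := by
      rw [Matrix.mulVec_sub, sub_dotProduct, dotProduct_sub,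
        dotProduct_sub, hsymm z y]
      ring
    have hMz : M *ᵥ z = A *ᵥ y := by
      rw [hz, Matrix.mulVec_mulVec, Matrix.mul_nonsing_inv M hMdet, Matrix.one_mulVec]
    have hBz : z ⬝ᵥ (B *ᵥ z) = z ⬝ᵥ (A *ᵥ y) - z ⬝ᵥ (A *ᵥ z) := by
      have : B = M - A := by rw [hM]; abel
      rw [this, Matrix.sub_mulVec, dotProduct_sub, hMz]
    rw [hBz, hsymm z y]
    linarith [h1, h2, h3.symm.le]
  set s : Finset (Fin d) := Finset.univ.filter (fun i => 0 < hB.eigenvalues i) with hs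
  set v : Fin d → (Fin d → ℝ) := fun i => hB.eigenvectorBasis i with hv
  have hv1 : ∀ i, B *ᵥ v i = hB.eigenvalues i • v i := fun i => hB.mulVec_eigenvectorBasis i
  have hv2 : ∀ i j, v i ⬝ᵥ v j = if i = j then 1 else 0 := by
    intro i j
    have h2 := orthonormal_iff_ite.mp hB.eigenvectorBasis.orthonormal i j
    rw [EuclideanSpace.inner_eq_star_dotProduct] at h2
    simp only [hv]; rw [dotProduct_comm]
    simpa using h2
  have li : LinearIndependent ℝ v := hB.eigenvectorBasis.orthonormal.linearIndependent.map'
    (WithLp.linearEquiv 2 ℝ (Fin d → ℝ)).toLinearMap (LinearEquiv.ker _)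
  set P : Submodule ℝ (Fin d → ℝ) := Submodule.span ℝ (Set.range (fun i : ↥s => v i)) with hP
  have hPrank : Module.finrank ℝ P = s.card := by
    rw [hP, show (Set.range fun i : ↥s => v ↑i) = Set.range (v ∘ Subtype.val) from rfl,
      finrank_span_eq_card (li.comp Subtype.val Subtype.val_injective)]
    exact Fintype.card_coe s
  have hPpos : ∀ x ∈ P, x ≠ 0 → 0 < x ⬝ᵥ (B *ᵥ x) := by
    intro x hx hx0
    obtain ⟨c, hc⟩ := (Submodule.mem_span_range_iff_exists_fun ℝ).mp hx
    have hxv : ∀ i : ↥s, x ⬝ᵥ v i = c i := by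
      intro i
      rw [← hc, dot_sum_left]
      rw [Finset.sum_eq_single i]
      · rw [smul_dotProduct, hv2, if_pos rfl]; simp
      · intro j _ hj
        rw [smul_dotProduct, hv2, if_neg (fun hji => hj (Subtype.ext hji))]; simp
      · simp
    have hBx : B *ᵥ x = ∑ i : ↥s, (c i * hB.eigenvalues i) • v i := by
      rw [← hc, ← Matrix.mulVecLin_apply, map_sum]
      refine Finset.sum_congr rfl fun i _ => ?_
      rw [LinearMap.map_smul, Matrix.mulVecLin_apply, hv1, smul_smul, mul_comm]
    have hxBx : x ⬝ᵥ (B *ᵥ x) = ∑ i : ↥s, hB.eigenvalues i * (c i)^2 := by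
      rw [hBx, dot_sum_right]
      refine Finset.sum_congr rfl fun i _ => ?_
      rw [dotProduct_smul, smul_eq_mul, hxv i]; ring
    rw [hxBx]
    have hcne : ∃ i : ↥s, c i ≠ 0 := by
      by_contra hall; push_neg at hall
      apply hx0; rw [← hc]
      simp [hall]
    obtain ⟨i, hi⟩ := hcne
    have hpos : ∀ j : ↥s, 0 < hB.eigenvalues ↑j := by
      intro j
      have := j.2
      exact (Finset.mem_filter.mp this).2
    apply Finset.sum_pos'
    · intro j _
      have := hpos j
      positivity
    · exact ⟨i, Finset.mem_univ i, by have := hpos i; positivity⟩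
  have hc1 : M⁻¹.mulVecLin ∘ₗ M.mulVecLin = LinearMap.id := by
    rw [← Matrix.mulVecLin_mul, Matrix.nonsing_inv_mul M hMdet, Matrix.mulVecLin_one]
  have hc2 : M.mulVecLin ∘ₗ M⁻¹.mulVecLin = LinearMap.id := by
    rw [← Matrix.mulVecLin_mul, Matrix.mul_nonsing_inv M hMdet, Matrix.mulVecLin_one]
  set e : (Fin d → ℝ) ≃ₗ[ℝ] (Fin d → ℝ) := LinearEquiv.ofLinear M⁻¹.mulVecLin M.mulVecLin hc1 hc2
    with he
  set S : Submodule ℝ (Fin d → ℝ) := (LinearMap.range A.mulVecLin).map (e : (Fin d → ℝ) →ₗ[ℝ] (Fin d → ℝ)) with hS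
  have hSneg : ∀ x ∈ S, x ⬝ᵥ (B *ᵥ x) ≤ 0 := by
    intro x hx
    rw [hS, Submodule.mem_map] at hx
    obtain ⟨u, hu, rfl⟩ := hx
    obtain ⟨y, rfl⟩ := LinearMap.mem_range.mp hu
    have : (e : (Fin d → ℝ) →ₗ[ℝ] (Fin d → ℝ)) (A.mulVecLin y) = M⁻¹ *ᵥ (A *ᵥ y) := by
      rw [he]; rfl
    rw [this]
    exact key y
  have hdisj : P ⊓ S = ⊥ := by
    rw [Submodule.eq_bot_iff]
    intro x hx
    by_contra hx0
    exact absurd (hSneg x (Submodule.mem_inf.mp hx).2)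
      (not_le.mpr (hPpos x (Submodule.mem_inf.mp hx).1 hx0))
  have hSrank : Module.finrank ℝ S = Module.finrank ℝ (LinearMap.range A.mulVecLin) :=
    LinearEquiv.finrank_map_eq e _
  have hrk := LinearMap.finrank_range_add_finrank_ker A.mulVecLin
  have hdim : Module.finrank ℝ (Fin d → ℝ) = d := Module.finrank_fin_fun ℝ
  have hsum := Submodule.finrank_sup_add_finrank_inf_eq P S
  rw [hdisj, finrank_bot] at hsum
  have hle := Submodule.finrank_le (P ⊔ S)
  rw [hdim] at hle
  rw [hdim] at hrk
  omega
end

section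
/- Let m ≥ n ≥ 1, U an invertible n×n real matrix, and V a real (m−n)×n matrix. Let Ω = {x ∈ ℝᵐ : Uᵀ diag(e^{x_1},…,e^{x_n}) U − Vᵀ diag(e^{x_{n+1}},…,e^{x_m}) V is positive definite}. Then Ω is a convex subset of ℝᵐ. -/
open Matrix

section aux
variable {ι κ : Type*} [Fintype ι] [DecidableEq ι] [Fintype κ] [DecidableEq κ]

lemma quad2 (B : Matrix κ ι ℝ) (d : κ → ℝ) (v w : ι → ℝ) :
    v ⬝ᵥ ((Bᴴ * Matrix.diagonal d * B) *ᵥ w)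
      = ∑ j, d j * ((B *ᵥ v) j * (B *ᵥ w) j) := by
  rw [← Matrix.mulVec_mulVec, ← Matrix.mulVec_mulVec,
    Matrix.conjTranspose_eq_transpose_of_trivial, Matrix.dotProduct_mulVec,
    Matrix.vecMul_transpose]
  simp only [dotProduct, Matrix.mulVec_diagonal]
  exact Finset.sum_congr rfl fun j _ => by ring

lemma quad1 (B : Matrix κ ι ℝ) (d : κ → ℝ) (v : ι → ℝ) :
    v ⬝ᵥ ((Bᴴ * Matrix.diagonal d * B) *ᵥ v) = ∑ j, d j * ((B *ᵥ v) j) ^ 2 := by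
  rw [quad2]
  exact Finset.sum_congr rfl fun j _ => by ring

end aux

set_option linter.unusedSectionVars false

lemma dot_symm {ι : Type*} [Fintype ι] {M : Matrix ι ι ℝ} (hM : M.IsHermitian) (v u : ι → ℝ) :
    v ⬝ᵥ (M *ᵥ u) = (M *ᵥ v) ⬝ᵥ u := by
  have ht : Mᵀ = M := by
    rwa [Matrix.IsHermitian, Matrix.conjTranspose_eq_transpose_of_trivial] at hM
  rw [Matrix.dotProduct_mulVec]
  nth_rewrite 1 [← ht]
  rw [Matrix.vecMul_transpose]

section sqrtmono
variable {ι : Type*} [Fintype ι] [DecidableEq ι]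

lemma star_triv (v : ι → ℝ) : star v = v := by
  funext i; simp

lemma sq_psd_le {Y S : Matrix ι ι ℝ} (hY : Y.PosSemidef) (hS : S.PosSemidef)
    (h : (S * S - Y * Y).PosSemidef) : (S - Y).PosSemidef := by
  have hH : (S - Y).IsHermitian := hS.1.sub hY.1
  by_contra hc
  -- get a negative eigenvalue
  have hev : ¬ ∀ i, 0 ≤ hH.eigenvalues i := fun hev => hc (hH.posSemidef_iff_eigenvalues_nonneg.mpr hev)
  push_neg at hev
  obtain ⟨i, hi⟩ := hev
  set μ := hH.eigenvalues i with hμ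
  set v : ι → ℝ := ⇑(hH.eigenvectorBasis i) with hv
  have hvne : v ≠ 0 := by
    have := hH.eigenvectorBasis.orthonormal.ne_zero i
    intro h0; apply this; ext j; exact congrFun h0 j
  have hmul : (S - Y) *ᵥ v = μ • v := hH.mulVec_eigenvectorBasis i
  have key : 0 ≤ v ⬝ᵥ ((S * S - Y * Y) *ᵥ v) := by
    simpa [star_triv] using h.dotProduct_mulVec_nonneg v
  have hid : S * S - Y * Y = S * (S - Y) + (S - Y) * Y := by noncomm_ring
  have e1 : v ⬝ᵥ ((S * (S - Y)) *ᵥ v) = μ * (v ⬝ᵥ (S *ᵥ v)) := by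
    rw [← Matrix.mulVec_mulVec, hmul, Matrix.mulVec_smul, dotProduct_smul, smul_eq_mul]
  have e2 : v ⬝ᵥ (((S - Y) * Y) *ᵥ v) = μ * (v ⬝ᵥ (Y *ᵥ v)) := by
    rw [← Matrix.mulVec_mulVec, dot_symm hH, hmul, smul_dotProduct, smul_eq_mul]
  have hS0 : 0 ≤ v ⬝ᵥ (S *ᵥ v) := by simpa [star_triv] using hS.dotProduct_mulVec_nonneg v
  have hY0 : 0 ≤ v ⬝ᵥ (Y *ᵥ v) := by simpa [star_triv] using hY.dotProduct_mulVec_nonneg v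
  rw [hid, Matrix.add_mulVec, dotProduct_add, e1, e2, ← mul_add] at key
  have hsum : v ⬝ᵥ (S *ᵥ v) + v ⬝ᵥ (Y *ᵥ v) ≤ 0 := by
    nlinarith
  have hS00 : v ⬝ᵥ (S *ᵥ v) = 0 := by linarith
  have hY00 : v ⬝ᵥ (Y *ᵥ v) = 0 := by linarith
  have hvv : 0 < v ⬝ᵥ v := by
    obtain ⟨j, hj⟩ : ∃ j, v j ≠ 0 := Function.ne_iff.mp hvne
    exact Finset.sum_pos' (fun k _ => mul_self_nonneg _)
      ⟨j, Finset.mem_univ j, mul_self_pos.mpr hj⟩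
  have : v ⬝ᵥ ((S - Y) *ᵥ v) = μ * (v ⬝ᵥ v) := by
    rw [hmul]; simp [smul_eq_mul, dotProduct_smul]
  rw [Matrix.sub_mulVec, dotProduct_sub, hS00, hY00] at this
  nlinarith

end sqrtmono

section core
variable {ι κ : Type*} [Fintype ι] [DecidableEq ι] [Fintype κ] [DecidableEq κ]
variable {U : Matrix ι ι ℝ} {V : Matrix κ ι ℝ}

lemma pdUDU (hU : IsUnit U.det) {d : ι → ℝ} (hd : ∀ i, 0 < d i) :
    (Uᴴ * Matrix.diagonal d * U).PosDef := by
  refine Matrix.PosDef.of_dotProduct_mulVec_pos (Matrix.isHermitian_conjTranspose_mul_mul U (Matrix.isHermitian_diagonal d))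
    fun v hv => ?_
  rw [star_triv, quad1]
  have hUv : U *ᵥ v ≠ 0 := by
    intro h0
    apply hv
    have h1 : U⁻¹ *ᵥ (U *ᵥ v) = v := by
      rw [Matrix.mulVec_mulVec, Matrix.nonsing_inv_mul U hU, Matrix.one_mulVec]
    rw [h0, Matrix.mulVec_zero] at h1; exact h1.symm
  obtain ⟨i, hi⟩ := Function.ne_iff.mp hUv
  exact Finset.sum_pos' (fun k _ => mul_nonneg (hd k).le (sq_nonneg _))
    ⟨i, Finset.mem_univ i, mul_pos (hd i)
      (lt_of_le_of_ne (sq_nonneg _) (Ne.symm (pow_ne_zero 2 hi)))⟩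

lemma core (hU : IsUnit U.det)
    {d₁ d₂ : ι → ℝ} (hd₁ : ∀ i, 0 < d₁ i) (hd₂ : ∀ i, 0 < d₂ i)
    {e₁ e₂ : κ → ℝ} (he₁ : ∀ j, 0 ≤ e₁ j) (he₂ : ∀ j, 0 ≤ e₂ j)
    (H₁ : (Uᴴ * Matrix.diagonal d₁ * U - Vᴴ * Matrix.diagonal e₁ * V).PosSemidef)
    (H₂ : (Uᴴ * Matrix.diagonal d₂ * U - Vᴴ * Matrix.diagonal e₂ * V).PosSemidef) :
    (Uᴴ * Matrix.diagonal (fun i => Real.sqrt (d₁ i * d₂ i)) * U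
      - Vᴴ * Matrix.diagonal (fun j => Real.sqrt (e₁ j * e₂ j)) * V).PosSemidef := by
  set A₁ := Uᴴ * Matrix.diagonal d₁ * U with hA₁def
  set A₂ := Uᴴ * Matrix.diagonal d₂ * U with hA₂def
  set X := Vᴴ * Matrix.diagonal (fun j => Real.sqrt (e₁ j * e₂ j)) * V with hXdef
  set G := Uᴴ * Matrix.diagonal (fun i => Real.sqrt (d₁ i * d₂ i)) * U with hGdef
  have hA₁ : A₁.PosDef := pdUDU hU hd₁
  have hA₂ : A₂.PosDef := pdUDU hU hd₂
  have hG : G.PosDef := pdUDU hU (fun i => Real.sqrt_pos.mpr (mul_pos (hd₁ i) (hd₂ i)))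
  have hX : X.PosSemidef :=
    (posSemidef_diagonal_iff.mpr (fun j => Real.sqrt_nonneg _)).conjTranspose_mul_mul_same V
  have hXherm : X.IsHermitian := hX.1
  have hA₁det : IsUnit A₁.det := isUnit_iff_ne_zero.mpr hA₁.det_pos.ne'
  -- claim 1
  have claim1 : ∀ v w : ι → ℝ,
      0 ≤ v ⬝ᵥ (A₁ *ᵥ v) + w ⬝ᵥ (A₂ *ᵥ w) + 2 * (v ⬝ᵥ (X *ᵥ w)) := by
    intro v w
    have h1 : ∑ j, e₁ j * ((V *ᵥ v) j) ^ 2 ≤ v ⬝ᵥ (A₁ *ᵥ v) := by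
      have := H₁.dotProduct_mulVec_nonneg v
      rw [star_triv, Matrix.sub_mulVec, dotProduct_sub, quad1 V e₁] at this
      linarith
    have h2 : ∑ j, e₂ j * ((V *ᵥ w) j) ^ 2 ≤ w ⬝ᵥ (A₂ *ᵥ w) := by
      have := H₂.dotProduct_mulVec_nonneg w
      rw [star_triv, Matrix.sub_mulVec, dotProduct_sub, quad1 V e₂] at this
      linarith
    have h3 : v ⬝ᵥ (X *ᵥ w)
        = ∑ j, Real.sqrt (e₁ j * e₂ j) * ((V *ᵥ v) j * (V *ᵥ w) j) := quad2 V _ v w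
    have key : 0 ≤ ∑ j, (Real.sqrt (e₁ j) * (V *ᵥ v) j + Real.sqrt (e₂ j) * (V *ᵥ w) j) ^ 2 :=
      Finset.sum_nonneg fun j _ => sq_nonneg _
    have expand : ∑ j, (Real.sqrt (e₁ j) * (V *ᵥ v) j + Real.sqrt (e₂ j) * (V *ᵥ w) j) ^ 2
        = ∑ j, e₁ j * ((V *ᵥ v) j) ^ 2 + ∑ j, e₂ j * ((V *ᵥ w) j) ^ 2
          + 2 * ∑ j, Real.sqrt (e₁ j * e₂ j) * ((V *ᵥ v) j * (V *ᵥ w) j) := by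
      rw [← Finset.sum_add_distrib, Finset.mul_sum, ← Finset.sum_add_distrib]
      refine Finset.sum_congr rfl fun j _ => ?_
      have s1 := Real.sq_sqrt (he₁ j)
      have s2 := Real.sq_sqrt (he₂ j)
      rw [Real.sqrt_mul (he₁ j)]
      nlinarith [s1, s2]
    nlinarith [key, h1, h2]
  -- claim 2 : A₂ - X A₁⁻¹ X is PSD
  have hA₁invherm : (A₁⁻¹).IsHermitian := hA₁.1.inv
  have claim2 : (A₂ - X * A₁⁻¹ * X).PosSemidef := by
    refine Matrix.PosSemidef.of_dotProduct_mulVec_nonneg ?_ ?_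
    · refine hA₂.1.sub ?_
      nth_rewrite 1 [← hXherm.eq]
      exact isHermitian_conjTranspose_mul_mul X hA₁invherm
    · intro w
      rw [star_triv, Matrix.sub_mulVec, dotProduct_sub]
      set z := A₁⁻¹ *ᵥ (X *ᵥ w) with hz
      have hA1z : A₁ *ᵥ z = X *ᵥ w := by
        rw [hz, Matrix.mulVec_mulVec, Matrix.mul_nonsing_inv _ hA₁det, Matrix.one_mulVec]
      have e3 : w ⬝ᵥ ((X * A₁⁻¹ * X) *ᵥ w) = z ⬝ᵥ (X *ᵥ w) := by
        rw [← Matrix.mulVec_mulVec, ← Matrix.mulVec_mulVec, ← hz, dot_symm hXherm,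
          dotProduct_comm]
      have hc := claim1 (-z) w
      have e4 : (-z) ⬝ᵥ (A₁ *ᵥ (-z)) = z ⬝ᵥ (X *ᵥ w) := by
        rw [Matrix.mulVec_neg, dotProduct_neg, neg_dotProduct, neg_neg, hA1z]
      have e5 : (-z) ⬝ᵥ (X *ᵥ w) = -(z ⬝ᵥ (X *ᵥ w)) := by rw [neg_dotProduct]
      rw [e4, e5] at hc
      linarith [hc, e3]
  -- factor W
  set W := Matrix.diagonal (fun i => Real.sqrt (d₁ i)) * U with hWdef
  have hWdet : IsUnit W.det := by
    rw [Matrix.det_mul, Matrix.det_diagonal]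
    refine isUnit_iff_ne_zero.mpr (mul_ne_zero ?_ ?_)
    · exact (Finset.prod_pos fun i _ => Real.sqrt_pos.mpr (hd₁ i)).ne'
    · exact isUnit_iff_ne_zero.mp hU
  have hWH : Wᴴ = Uᴴ * Matrix.diagonal (fun i => Real.sqrt (d₁ i)) := by
    rw [hWdef, Matrix.conjTranspose_mul, Matrix.diagonal_conjTranspose, star_triv]
  have hWW : Wᴴ * W = A₁ := by
    rw [hWH, hWdef, hA₁def, Matrix.mul_assoc, ← Matrix.mul_assoc (Matrix.diagonal _),
      Matrix.diagonal_mul_diagonal,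
      show (fun i => Real.sqrt (d₁ i) * Real.sqrt (d₁ i)) = d₁ from
        funext fun i => Real.mul_self_sqrt (hd₁ i).le, Matrix.mul_assoc]
  have hWinv : W⁻¹ * W = 1 := Matrix.nonsing_inv_mul W hWdet
  have hWinv' : W * W⁻¹ = 1 := Matrix.mul_nonsing_inv W hWdet
  have hA₁inv : A₁⁻¹ = W⁻¹ * (W⁻¹)ᴴ := by
    rw [← hWW, Matrix.mul_inv_rev, Matrix.conjTranspose_nonsing_inv]
  -- key identity G A₁⁻¹ G = A₂
  have hUdet' : IsUnit (Uᴴ).det := by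
    rw [Matrix.det_conjTranspose]
    simpa using hU
  have hDinv : (Matrix.diagonal d₁)⁻¹ = Matrix.diagonal (fun i => (d₁ i)⁻¹) := by
    refine Matrix.inv_eq_right_inv ?_
    rw [Matrix.diagonal_mul_diagonal]
    rw [show (fun i => d₁ i * (d₁ i)⁻¹) = fun _ => (1:ℝ) from funext fun i =>
      mul_inv_cancel₀ (hd₁ i).ne', Matrix.diagonal_one]
  have hA₁inv2 : A₁⁻¹ = U⁻¹ * Matrix.diagonal (fun i => (d₁ i)⁻¹) * (Uᴴ)⁻¹ := by
    rw [hA₁def, Matrix.mul_inv_rev, Matrix.mul_inv_rev, hDinv, Matrix.mul_assoc]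
  have KI : G * A₁⁻¹ * G = A₂ := by
    rw [hA₁inv2, hGdef, hA₂def]
    simp only [Matrix.mul_assoc]
    rw [Matrix.mul_nonsing_inv_cancel_left U _ hU,
      Matrix.nonsing_inv_mul_cancel_left (Uᴴ) _ hUdet']
    congr 1
    rw [show Matrix.diagonal (fun i => (d₁ i)⁻¹)
          * (Matrix.diagonal (fun i => Real.sqrt (d₁ i * d₂ i)) * U)
        = (Matrix.diagonal (fun i => (d₁ i)⁻¹)
          * Matrix.diagonal (fun i => Real.sqrt (d₁ i * d₂ i))) * U from
        (Matrix.mul_assoc _ _ _).symm, Matrix.diagonal_mul_diagonal,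
      ← Matrix.mul_assoc, Matrix.diagonal_mul_diagonal]
    have hf : (fun i => Real.sqrt (d₁ i * d₂ i) * ((d₁ i)⁻¹ * Real.sqrt (d₁ i * d₂ i)))
        = d₂ := by
      funext i
      have h := Real.mul_self_sqrt (mul_nonneg (hd₁ i).le (hd₂ i).le)
      have h2 : Real.sqrt (d₁ i * d₂ i) * ((d₁ i)⁻¹ * Real.sqrt (d₁ i * d₂ i))
          = Real.sqrt (d₁ i * d₂ i) * Real.sqrt (d₁ i * d₂ i) * (d₁ i)⁻¹ := by ring
      rw [h2, h, mul_comm (d₁ i), mul_assoc, mul_inv_cancel₀ (hd₁ i).ne', mul_one]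
    rw [hf]
  -- congruence to Y, S
  set Y := (W⁻¹)ᴴ * X * W⁻¹ with hYdef
  set S := (W⁻¹)ᴴ * G * W⁻¹ with hSdef
  have hY : Y.PosSemidef := hX.conjTranspose_mul_mul_same W⁻¹
  have hSpsd : S.PosSemidef := hG.posSemidef.conjTranspose_mul_mul_same W⁻¹
  have hYY : Y * Y = (W⁻¹)ᴴ * (X * A₁⁻¹ * X) * W⁻¹ := by
    rw [hA₁inv, hYdef]
    simp only [Matrix.mul_assoc]
  have hSS : S * S = (W⁻¹)ᴴ * A₂ * W⁻¹ := by
    rw [← KI, hA₁inv, hSdef]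
    simp only [Matrix.mul_assoc]
  have hdiff : (S * S - Y * Y).PosSemidef := by
    rw [hYY, hSS, ← Matrix.sub_mul, ← Matrix.mul_sub]
    exact claim2.conjTranspose_mul_mul_same W⁻¹
  have hSY : (S - Y).PosSemidef := sq_psd_le hY hSpsd hdiff
  have final : G - X = Wᴴ * (S - Y) * W := by
    rw [Matrix.mul_sub, Matrix.sub_mul, hSdef, hYdef]
    have hWHdet : IsUnit (Wᴴ).det := by
      rw [Matrix.det_conjTranspose]; simpa using hWdet
    have c1 : ∀ M : Matrix ι ι ℝ, Wᴴ * ((W⁻¹)ᴴ * M * W⁻¹) * W = M := by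
      intro M
      rw [Matrix.conjTranspose_nonsing_inv]
      simp only [Matrix.mul_assoc]
      rw [hWinv, Matrix.mul_one, Matrix.mul_nonsing_inv_cancel_left _ _ hWHdet]
    rw [c1, c1]
  rw [show Uᴴ * Matrix.diagonal (fun i => Real.sqrt (d₁ i * d₂ i)) * U
      - Vᴴ * Matrix.diagonal (fun j => Real.sqrt (e₁ j * e₂ j)) * V = G - X from rfl, final]
  exact hSY.conjTranspose_mul_mul_same W

end core

section tlemma
variable {ι : Type*} [Fintype ι] [DecidableEq ι]

lemma psd_smul {M : Matrix ι ι ℝ} (hM : M.PosSemidef) {r : ℝ} (hr : 0 ≤ r) :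
    (r • M).PosSemidef := by
  refine Matrix.PosSemidef.of_dotProduct_mulVec_nonneg ?_ ?_
  · rw [Matrix.IsHermitian, Matrix.conjTranspose_smul, hM.1.eq, star_trivial]
  · intro x
    rw [Matrix.smul_mulVec, dotProduct_smul, smul_eq_mul]
    exact mul_nonneg hr (hM.dotProduct_mulVec_nonneg x)

lemma smul_one_sub_psd {M : Matrix ι ι ℝ} (hM : M.IsHermitian) {c : ℝ}
    (h : ∀ i, hM.eigenvalues i ≤ c) : (c • (1 : Matrix ι ι ℝ) - M).PosSemidef := by
  set W : Matrix ι ι ℝ := (Matrix.IsHermitian.eigenvectorUnitary hM : Matrix ι ι ℝ) with hW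
  have hWW : W * star W = 1 :=
    (Matrix.mem_unitaryGroup_iff).mp (Matrix.IsHermitian.eigenvectorUnitary hM).2
  have hone : c • (1 : Matrix ι ι ℝ) = W * (c • (1 : Matrix ι ι ℝ)) * star W := by
    rw [Matrix.mul_smul, Matrix.mul_one, Matrix.smul_mul, hWW]
  have key : c • (1 : Matrix ι ι ℝ) - M
      = W * (c • (1 : Matrix ι ι ℝ) - Matrix.diagonal (RCLike.ofReal ∘ hM.eigenvalues))
        * star W := by
    rw [Matrix.mul_sub, Matrix.sub_mul, ← hone]
    congr 1
    exact hM.spectral_theorem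
  rw [key, Matrix.star_eq_conjTranspose]
  apply Matrix.PosSemidef.mul_mul_conjTranspose_same
  have hdd : c • (1 : Matrix ι ι ℝ) - Matrix.diagonal (RCLike.ofReal ∘ hM.eigenvalues)
      = Matrix.diagonal (fun i => c - hM.eigenvalues i) := by
    ext i j
    by_cases hij : i = j
    · subst hij
      simp [Function.comp, RCLike.ofReal_real_eq_id, Matrix.one_apply_eq]
    · simp [Matrix.diagonal_apply_ne _ hij, Matrix.one_apply_ne hij]
  rw [hdd]
  exact posSemidef_diagonal_iff.mpr fun i => sub_nonneg.mpr (h i)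

lemma sub_smul_one_psd {M : Matrix ι ι ℝ} (hM : M.IsHermitian) {r : ℝ}
    (h : ∀ i, r ≤ hM.eigenvalues i) : (M - r • (1 : Matrix ι ι ℝ)).PosSemidef := by
  set W : Matrix ι ι ℝ := (Matrix.IsHermitian.eigenvectorUnitary hM : Matrix ι ι ℝ) with hW
  have hWW : W * star W = 1 :=
    (Matrix.mem_unitaryGroup_iff).mp (Matrix.IsHermitian.eigenvectorUnitary hM).2
  have hone : r • (1 : Matrix ι ι ℝ) = W * (r • (1 : Matrix ι ι ℝ)) * star W := by
    rw [Matrix.mul_smul, Matrix.mul_one, Matrix.smul_mul, hWW]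
  have key : M - r • (1 : Matrix ι ι ℝ)
      = W * (Matrix.diagonal (RCLike.ofReal ∘ hM.eigenvalues) - r • (1 : Matrix ι ι ℝ))
        * star W := by
    rw [Matrix.mul_sub, Matrix.sub_mul, ← hone]
    congr 1
    exact hM.spectral_theorem
  rw [key, Matrix.star_eq_conjTranspose]
  apply Matrix.PosSemidef.mul_mul_conjTranspose_same
  have hdd : Matrix.diagonal (RCLike.ofReal ∘ hM.eigenvalues) - r • (1 : Matrix ι ι ℝ)
      = Matrix.diagonal (fun i => hM.eigenvalues i - r) := by
    ext i j
    by_cases hij : i = j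
    · subst hij
      simp [Function.comp, RCLike.ofReal_real_eq_id, Matrix.one_apply_eq]
    · simp [Matrix.diagonal_apply_ne _ hij, Matrix.one_apply_ne hij]
  rw [hdd]
  exact posSemidef_diagonal_iff.mpr fun i => sub_nonneg.mpr (h i)

lemma exists_shrink [Nonempty ι] {A B : Matrix ι ι ℝ} (hA : A.PosDef)
    (hAB : (A - B).PosDef) : ∃ t : ℝ, 0 < t ∧ t < 1 ∧ (t • A - B).PosSemidef := by
  classical
  have hCh := hAB.1
  set δ := Finset.univ.inf' Finset.univ_nonempty hCh.eigenvalues with hδdef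
  have hδpos : 0 < δ := by
    obtain ⟨i, _, hi⟩ := Finset.exists_mem_eq_inf' Finset.univ_nonempty hCh.eigenvalues
    rw [hδdef, hi]
    exact hAB.eigenvalues_pos i
  set c := Finset.univ.sup' Finset.univ_nonempty hA.1.eigenvalues with hcdef
  have hcp : 0 < c :=
    lt_of_lt_of_le (hA.eigenvalues_pos (Classical.arbitrary ι))
      (Finset.le_sup' _ (Finset.mem_univ _))
  have h1 : ((A - B) - δ • (1 : Matrix ι ι ℝ)).PosSemidef :=
    sub_smul_one_psd hCh (fun i => Finset.inf'_le _ (Finset.mem_univ i))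
  have h2 : (c • (1 : Matrix ι ι ℝ) - A).PosSemidef :=
    smul_one_sub_psd hA.1 (fun i => Finset.le_sup' _ (Finset.mem_univ i))
  refine ⟨max (1 - δ/c) (1/2), lt_of_lt_of_le (by norm_num) (le_max_right _ _), ?_, ?_⟩
  · apply max_lt
    · have : 0 < δ / c := div_pos hδpos hcp
      linarith
    · norm_num
  · set t := max (1 - δ/c) (1/2) with htdef
    have htge : 1 - δ/c ≤ t := le_max_left _ _
    have hsm : (δ/c) • (c • (1 : Matrix ι ι ℝ)) = δ • (1 : Matrix ι ι ℝ) := by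
      rw [smul_smul, div_mul_cancel₀ _ hcp.ne']
    have heq : t • A - B = (t - (1 - δ/c)) • A
        + ((δ/c) • (c • (1 : Matrix ι ι ℝ) - A) + ((A - B) - δ • (1 : Matrix ι ι ℝ))) := by
      rw [smul_sub, hsm]
      module
    rw [heq]
    exact ((psd_smul hA.posSemidef (by linarith : (0:ℝ) ≤ t - (1 - δ/c)))).add
      ((psd_smul h2 (by positivity : (0:ℝ) ≤ δ/c)).add h1)

end tlemma

lemma closed_midpoint_unit {P : ℝ → Prop} (h0 : P 0) (h1 : P 1)
    (hmid : ∀ a b, P a → P b → P ((a + b) / 2)) (hcl : IsClosed {x | P x})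
    {γ : ℝ} (hγ0 : 0 ≤ γ) (hγ1 : γ ≤ 1) : P γ := by
  have dyad : ∀ k : ℕ, ∀ j : ℕ, j ≤ 2 ^ k → P ((j : ℝ) / 2 ^ k) := by
    intro k
    induction k with
    | zero =>
      intro j hj
      interval_cases j
      · simpa using h0
      · simpa using h1
    | succ k ih =>
      intro j hj
      have hj1 : j / 2 ≤ 2 ^ k := by omega
      have hj2 : j - j / 2 ≤ 2 ^ k := by omega
      have hsum : (j / 2 : ℕ) + (j - j / 2 : ℕ) = j := by omega
      have heq : (j : ℝ) / 2 ^ (k + 1)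
          = (((j / 2 : ℕ) : ℝ) / 2 ^ k + ((j - j / 2 : ℕ) : ℝ) / 2 ^ k) / 2 := by
        calc (j : ℝ) / 2 ^ (k + 1)
            = (((j / 2 : ℕ) : ℝ) + ((j - j / 2 : ℕ) : ℝ)) / 2 ^ (k + 1) := by
              rw [← Nat.cast_add, hsum]
          _ = (((j / 2 : ℕ) : ℝ) / 2 ^ k + ((j - j / 2 : ℕ) : ℝ) / 2 ^ k) / 2 := by
              rw [pow_succ]; ring
      rw [heq]
      exact hmid _ _ (ih _ hj1) (ih _ hj2)
  have h2k : ∀ k : ℕ, (0:ℝ) < 2 ^ k := fun k => pow_pos (by norm_num) k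
  have seq : ∀ k : ℕ, P ((⌊γ * 2 ^ k⌋₊ : ℝ) / 2 ^ k) := by
    intro k
    apply dyad k
    have hle : γ * 2 ^ k ≤ ((2 ^ k : ℕ) : ℝ) := by
      push_cast
      nlinarith [h2k k]
    calc ⌊γ * 2 ^ k⌋₊ ≤ ⌊((2 ^ k : ℕ) : ℝ)⌋₊ := Nat.floor_le_floor hle
      _ = 2 ^ k := Nat.floor_natCast _
  have tend : Filter.Tendsto (fun k : ℕ => (⌊γ * 2 ^ k⌋₊ : ℝ) / 2 ^ k)
      Filter.atTop (nhds γ) := by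
    refine tendsto_of_tendsto_of_tendsto_of_le_of_le
      (g := fun k : ℕ => γ - (1/2 : ℝ) ^ k) (h := fun _ : ℕ => γ) ?_ ?_ ?_ ?_
    · have : Filter.Tendsto (fun k : ℕ => (1/2 : ℝ) ^ k) Filter.atTop (nhds 0) :=
        tendsto_pow_atTop_nhds_zero_of_lt_one (by norm_num) (by norm_num)
      simpa using Filter.Tendsto.const_sub γ this
    · exact tendsto_const_nhds
    · intro k
      have h3 := Nat.lt_floor_add_one (γ * 2 ^ k)
      have h5 : γ ≤ ((⌊γ * 2 ^ k⌋₊ : ℝ) + 1) / 2 ^ k := by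
        rw [le_div_iff₀ (h2k k)]
        linarith
      have h6 : ((⌊γ * 2 ^ k⌋₊ : ℝ) + 1) / 2 ^ k
          = (⌊γ * 2 ^ k⌋₊ : ℝ) / 2 ^ k + (1/2 : ℝ) ^ k := by
        rw [div_pow, one_pow]
        ring
      simp only []
      linarith [h5, h6.symm.le]
    · intro k
      rw [div_le_iff₀ (h2k k)]
      exact Nat.floor_le (by positivity)
  exact hcl.mem_of_tendsto tend (Filter.Eventually.of_forall seq)

section main
variable {ι κ : Type*} [Fintype ι] [DecidableEq ι] [Fintype κ] [DecidableEq κ]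

lemma pd_smul {M : Matrix ι ι ℝ} (hM : M.PosDef) {r : ℝ} (hr : 0 < r) :
    (r • M).PosDef := by
  refine Matrix.PosDef.of_dotProduct_mulVec_pos ?_ ?_
  · rw [Matrix.IsHermitian, Matrix.conjTranspose_smul, hM.1.eq, star_trivial]
  · intro x hx
    rw [Matrix.smul_mulVec, dotProduct_smul, smul_eq_mul]
    exact mul_pos hr (hM.dotProduct_mulVec_pos hx)

lemma conv_smul_diag (U : Matrix ι ι ℝ) (t : ℝ) (d : ι → ℝ) :
    Uᴴ * Matrix.diagonal (fun i => t * d i) * U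
      = t • (Uᴴ * Matrix.diagonal d * U) := by
  rw [show (fun i => t * d i) = t • d from funext fun i => rfl, Matrix.diagonal_smul,
    Matrix.mul_smul, Matrix.smul_mul]

lemma main_aux [Nonempty ι] (U : Matrix ι ι ℝ) (hU : IsUnit U.det) (V : Matrix κ ι ℝ)
    (x₁ x₂ : ι → ℝ) (y₁ y₂ : κ → ℝ)
    (h₁ : (Uᴴ * Matrix.diagonal (fun i => Real.exp (x₁ i)) * U
      - Vᴴ * Matrix.diagonal (fun j => Real.exp (y₁ j)) * V).PosDef)
    (h₂ : (Uᴴ * Matrix.diagonal (fun i => Real.exp (x₂ i)) * U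
      - Vᴴ * Matrix.diagonal (fun j => Real.exp (y₂ j)) * V).PosDef)
    {a : ℝ} (ha : 0 ≤ a) (ha1 : a ≤ 1) :
    (Uᴴ * Matrix.diagonal (fun i => Real.exp (a * x₁ i + (1 - a) * x₂ i)) * U
      - Vᴴ * Matrix.diagonal (fun j => Real.exp (a * y₁ j + (1 - a) * y₂ j)) * V).PosDef := by
  obtain ⟨t₁, ht₁0, ht₁1, hs₁⟩ := exists_shrink (pdUDU hU fun i => Real.exp_pos _) h₁
  obtain ⟨t₂, ht₂0, ht₂1, hs₂⟩ := exists_shrink (pdUDU hU fun i => Real.exp_pos _) h₂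
  have hl₁ : Real.log t₁ < 0 := Real.log_neg ht₁0 ht₁1
  have hl₂ : Real.log t₂ < 0 := Real.log_neg ht₂0 ht₂1
  set df : ℝ → ι → ℝ := fun μ i =>
    Real.exp (μ * (x₁ i + Real.log t₁) + (1 - μ) * (x₂ i + Real.log t₂)) with hdf
  set ef : ℝ → κ → ℝ := fun μ j => Real.exp (μ * y₁ j + (1 - μ) * y₂ j) with hef
  -- the interpolation property holds for all μ in [0,1]
  have hP : ∀ μ : ℝ, 0 ≤ μ → μ ≤ 1 →
      (Uᴴ * Matrix.diagonal (df μ) * U - Vᴴ * Matrix.diagonal (ef μ) * V).PosSemidef := by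
    intro μ hμ0 hμ1
    refine closed_midpoint_unit (P := fun ν : ℝ => (Uᴴ * Matrix.diagonal (df ν) * U
      - Vᴴ * Matrix.diagonal (ef ν) * V).PosSemidef) ?_ ?_ ?_ ?_ hμ0 hμ1
    · -- μ = 0
      show (Uᴴ * Matrix.diagonal (df 0) * U - Vᴴ * Matrix.diagonal (ef 0) * V).PosSemidef
      have hdf0 : df 0 = fun i => t₂ * Real.exp (x₂ i) := by
        funext i
        show Real.exp (0 * (x₁ i + Real.log t₁) + (1 - 0) * (x₂ i + Real.log t₂))
          = t₂ * Real.exp (x₂ i)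
        rw [show (0:ℝ) * (x₁ i + Real.log t₁) + (1 - 0) * (x₂ i + Real.log t₂)
          = x₂ i + Real.log t₂ by ring, Real.exp_add, Real.exp_log ht₂0, mul_comm]
      have hef0 : ef 0 = fun j => Real.exp (y₂ j) := by
        funext j
        show Real.exp (0 * y₁ j + (1 - 0) * y₂ j) = Real.exp (y₂ j)
        norm_num
      rw [hdf0, hef0, conv_smul_diag]
      exact hs₂
    · -- μ = 1
      show (Uᴴ * Matrix.diagonal (df 1) * U - Vᴴ * Matrix.diagonal (ef 1) * V).PosSemidef
      have hdf1 : df 1 = fun i => t₁ * Real.exp (x₁ i) := by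
        funext i
        show Real.exp (1 * (x₁ i + Real.log t₁) + (1 - 1) * (x₂ i + Real.log t₂))
          = t₁ * Real.exp (x₁ i)
        rw [show (1:ℝ) * (x₁ i + Real.log t₁) + (1 - 1) * (x₂ i + Real.log t₂)
          = x₁ i + Real.log t₁ by ring, Real.exp_add, Real.exp_log ht₁0, mul_comm]
      have hef1 : ef 1 = fun j => Real.exp (y₁ j) := by
        funext j
        show Real.exp (1 * y₁ j + (1 - 1) * y₂ j) = Real.exp (y₁ j)
        norm_num
      rw [hdf1, hef1, conv_smul_diag]
      exact hs₁
    · -- midpoint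
      intro α β hα hβ
      show (Uᴴ * Matrix.diagonal (df ((α + β) / 2)) * U
        - Vᴴ * Matrix.diagonal (ef ((α + β) / 2)) * V).PosSemidef
      have hd : (fun i => Real.sqrt (df α i * df β i)) = df ((α + β) / 2) := by
        funext i
        rw [show df α i * df β i
            = Real.exp ((α * (x₁ i + Real.log t₁) + (1 - α) * (x₂ i + Real.log t₂))
              + (β * (x₁ i + Real.log t₁) + (1 - β) * (x₂ i + Real.log t₂))) from
            (Real.exp_add _ _).symm, ← Real.exp_half]
        show Real.exp _ = Real.exp _
        congr 1
        ring
      have he : (fun j => Real.sqrt (ef α j * ef β j)) = ef ((α + β) / 2) := by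
        funext j
        rw [show ef α j * ef β j
            = Real.exp ((α * y₁ j + (1 - α) * y₂ j) + (β * y₁ j + (1 - β) * y₂ j)) from
            (Real.exp_add _ _).symm, ← Real.exp_half]
        show Real.exp _ = Real.exp _
        congr 1
        ring
      rw [← hd, ← he]
      exact core hU (fun i => Real.exp_pos _) (fun i => Real.exp_pos _)
        (fun j => (Real.exp_pos _).le) (fun j => (Real.exp_pos _).le) hα hβ
    · -- closedness
      show IsClosed {ν : ℝ |
        (Uᴴ * Matrix.diagonal (df ν) * U - Vᴴ * Matrix.diagonal (ef ν) * V).PosSemidef}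
      have hherm : ∀ ν : ℝ,
          (Uᴴ * Matrix.diagonal (df ν) * U - Vᴴ * Matrix.diagonal (ef ν) * V).IsHermitian :=
        fun ν => (isHermitian_conjTranspose_mul_mul U (isHermitian_diagonal _)).sub
          (isHermitian_conjTranspose_mul_mul V (isHermitian_diagonal _))
      have hset : {ν : ℝ |
          (Uᴴ * Matrix.diagonal (df ν) * U - Vᴴ * Matrix.diagonal (ef ν) * V).PosSemidef}
          = ⋂ (v : ι → ℝ), {ν : ℝ | 0 ≤ ∑ i, df ν i * ((U *ᵥ v) i) ^ 2
              - ∑ j, ef ν j * ((V *ᵥ v) j) ^ 2} := by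
        ext ν
        simp only [Set.mem_setOf_eq, Set.mem_iInter]
        constructor
        · intro h v
          have := h.dotProduct_mulVec_nonneg v
          rwa [star_triv, Matrix.sub_mulVec, dotProduct_sub, quad1, quad1] at this
        · intro h
          refine Matrix.PosSemidef.of_dotProduct_mulVec_nonneg (hherm ν) fun v => ?_
          rw [star_triv, Matrix.sub_mulVec, dotProduct_sub, quad1, quad1]
          exact h v
      rw [hset]
      refine isClosed_iInter fun v => ?_
      refine isClosed_le continuous_const ?_
      refine Continuous.sub ?_ ?_ <;>
        refine continuous_finset_sum _ fun i _ => Continuous.mul ?_ continuous_const <;>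
        exact Real.continuous_exp.comp (by fun_prop)
  -- conclude
  have hPa := hP a ha ha1
  have hefa : ef a = fun j => Real.exp (a * y₁ j + (1 - a) * y₂ j) := rfl
  set s := Real.exp (a * Real.log t₁ + (1 - a) * Real.log t₂) with hs
  have hs0 : 0 < s := Real.exp_pos _
  have hs1 : s < 1 := by
    rw [hs, Real.exp_lt_one_iff]
    rcases eq_or_lt_of_le ha with h | h
    · rw [← h]; norm_num; exact hl₂
    · nlinarith
  have hdfa : df a = fun i => s * Real.exp (a * x₁ i + (1 - a) * x₂ i) := by
    funext i
    have hdfai : df a i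
        = Real.exp (a * (x₁ i + Real.log t₁) + (1 - a) * (x₂ i + Real.log t₂)) := rfl
    rw [hdfai, hs, ← Real.exp_add]
    congr 1
    ring
  rw [hdfa, hefa, conv_smul_diag] at hPa
  have heq : Uᴴ * Matrix.diagonal (fun i => Real.exp (a * x₁ i + (1 - a) * x₂ i)) * U
      - Vᴴ * Matrix.diagonal (fun j => Real.exp (a * y₁ j + (1 - a) * y₂ j)) * V
      = (1 - s) • (Uᴴ * Matrix.diagonal (fun i => Real.exp (a * x₁ i + (1 - a) * x₂ i)) * U)
        + (s • (Uᴴ * Matrix.diagonal (fun i => Real.exp (a * x₁ i + (1 - a) * x₂ i)) * U)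
          - Vᴴ * Matrix.diagonal (fun j => Real.exp (a * y₁ j + (1 - a) * y₂ j)) * V) := by
    module
  rw [heq]
  exact Matrix.PosDef.add_posSemidef
    (pd_smul (pdUDU hU fun i => Real.exp_pos _) (by linarith)) hPa

end main

theorem stmt14 {m n : ℕ} (hn : 1 ≤ n) (hm : n ≤ m)
    (U : Matrix (Fin n) (Fin n) ℝ) (hU : IsUnit U.det)
    (V : Matrix (Fin (m - n)) (Fin n) ℝ) :
    Convex ℝ {p : (Fin n → ℝ) × (Fin (m - n) → ℝ) |
      (Uᵀ * Matrix.diagonal (fun i => Real.exp (p.1 i)) * U -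
        Vᵀ * Matrix.diagonal (fun j => Real.exp (p.2 j)) * V).PosDef} := by
  haveI : Nonempty (Fin n) := ⟨⟨0, hn⟩⟩
  intro p hp q hq a b ha hb hab
  simp only [Set.mem_setOf_eq] at hp hq ⊢
  rw [← Matrix.conjTranspose_eq_transpose_of_trivial U,
    ← Matrix.conjTranspose_eq_transpose_of_trivial V] at hp hq ⊢
  have hb1 : b = 1 - a := by linarith
  subst hb1
  have ha1 : a ≤ 1 := by linarith
  have hfst : ∀ i, (a • p + (1 - a) • q).1 i = a * p.1 i + (1 - a) * q.1 i := by
    intro i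
    simp [Prod.fst_add, Prod.smul_fst]
  have hsnd : ∀ j, (a • p + (1 - a) • q).2 j = a * p.2 j + (1 - a) * q.2 j := by
    intro j
    simp [Prod.snd_add, Prod.smul_snd]
  rw [show (fun i => Real.exp ((a • p + (1 - a) • q).1 i))
      = fun i => Real.exp (a * p.1 i + (1 - a) * q.1 i) from
      funext fun i => by rw [hfst],
    show (fun j => Real.exp ((a • p + (1 - a) • q).2 j))
      = fun j => Real.exp (a * p.2 j + (1 - a) * q.2 j) from
      funext fun j => by rw [hsnd]]
  exact main_aux U hU V p.1 q.1 p.2 q.2 hp hq ha ha1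
end

section
/- Let m ≥ n ≥ 1, U an invertible n×n real matrix, and V a real (m−n)×n matrix. On the convex set Ω = {x ∈ ℝᵐ : Uᵀ diag(e^{x_i})_{i≤n} U − Vᵀ diag(e^{x_j})_{j>n} V > 0}, the function φ(x) = log det(Uᵀ diag(e^{x_i})_{i≤n} U − Vᵀ diag(e^{x_j})_{j>n} V) is concave. -/
open Matrix Topology Filter

namespace Stmt15Aux

open scoped MatrixOrder in
lemma exists_psqrt {n : ℕ} {B : Matrix (Fin n) (Fin n) ℝ} (hB : B.PosSemidef) :
    ∃ P : Matrix (Fin n) (Fin n) ℝ, P.PosSemidef ∧ P * P = B :=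
  ⟨CFC.sqrt B, Matrix.nonneg_iff_posSemidef.mp (CFC.sqrt_nonneg B),
    CFC.sqrt_mul_sqrt_self B (Matrix.nonneg_iff_posSemidef.mpr hB)⟩

noncomputable def psqrt {n : ℕ} {B : Matrix (Fin n) (Fin n) ℝ} (hB : B.PosSemidef) :
    Matrix (Fin n) (Fin n) ℝ := Classical.choose (exists_psqrt hB)

lemma posSemidef_psqrt {n : ℕ} {B : Matrix (Fin n) (Fin n) ℝ} (hB : B.PosSemidef) :
    (psqrt hB).PosSemidef := (Classical.choose_spec (exists_psqrt hB)).1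

lemma psqrt_mul_self {n : ℕ} {B : Matrix (Fin n) (Fin n) ℝ} (hB : B.PosSemidef) :
    psqrt hB * psqrt hB = B := (Classical.choose_spec (exists_psqrt hB)).2


lemma herm_symm {S : Matrix (Fin n) (Fin n) ℝ} (hS : S.IsHermitian) : Sᵀ = S := by
  rw [← conjTranspose_eq_transpose_of_trivial]; exact hS

lemma quad_conj {S M : Matrix (Fin n) (Fin n) ℝ} (hS : Sᵀ = S) (x : Fin n → ℝ) :
    x ⬝ᵥ ((S * M * S) *ᵥ x) = (S *ᵥ x) ⬝ᵥ (M *ᵥ (S *ᵥ x)) := by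
  rw [← mulVec_mulVec, ← mulVec_mulVec, dotProduct_mulVec x S, ← hS, vecMul_transpose, hS]

lemma exists_eigen {M : Matrix (Fin n) (Fin n) ℝ} (hM : M.IsHermitian) (i : Fin n) :
    ∃ v : Fin n → ℝ, v ⬝ᵥ v = 1 ∧ M *ᵥ v = hM.eigenvalues i • v := by
  refine ⟨⇑(hM.eigenvectorBasis i), ?_, hM.mulVec_eigenvectorBasis i⟩
  have h := (hM.eigenvectorBasis).orthonormal.1 i
  rw [EuclideanSpace.norm_eq] at h
  have h2 : ∑ j, ‖(hM.eigenvectorBasis i) j‖ ^ 2 = 1 := Real.sqrt_eq_one.mp h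
  simpa [dotProduct, Real.norm_eq_abs, sq_abs, sq] using h2

lemma lemA {S Δ : Matrix (Fin n) (Fin n) ℝ} (hS : S.IsHermitian) (hΔ : Δ.PosDef)
    (h : (Δ - S * Δ * S).PosSemidef) : ((1 : Matrix (Fin n) (Fin n) ℝ) - S).PosSemidef := by
  have hH : ((1 : Matrix (Fin n) (Fin n) ℝ) - S).IsHermitian := Matrix.isHermitian_one.sub hS
  rw [hH.posSemidef_iff_eigenvalues_nonneg, Pi.le_def]; simp only [Pi.zero_apply]
  intro i
  obtain ⟨v, hv1, hvE⟩ := exists_eigen hH i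
  set μ := hH.eigenvalues i with hμ
  have hvne : v ≠ 0 := by
    intro h0; rw [h0] at hv1; simp at hv1
  rw [sub_mulVec, one_mulVec] at hvE
  have hSv : S *ᵥ v = (1 - μ) • v := by
    have h5 : S *ᵥ v = v - μ • v := by
      rw [eq_sub_iff_add_eq, add_comm]
      exact (sub_eq_iff_eq_add.mp hvE).symm
    rw [h5, sub_smul, one_smul]
  have hq : 0 ≤ v ⬝ᵥ ((Δ - S * Δ * S) *ᵥ v) := by
    have := h.dotProduct_mulVec_nonneg v; simpa using this
  have hΔv : 0 < v ⬝ᵥ (Δ *ᵥ v) := by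
    have := hΔ.dotProduct_mulVec_pos hvne; simpa using this
  have hexp : v ⬝ᵥ ((S * Δ * S) *ᵥ v) = (1 - μ) ^ 2 * (v ⬝ᵥ (Δ *ᵥ v)) := by
    rw [quad_conj (herm_symm hS), hSv, smul_dotProduct, mulVec_smul, dotProduct_smul,
      smul_eq_mul, smul_eq_mul]
    ring
  rw [sub_mulVec, dotProduct_sub, hexp] at hq
  by_contra hcon
  push_neg at hcon
  nlinarith [hq, hΔv, mul_pos (neg_pos.mpr hcon) hΔv, mul_nonneg (mul_self_nonneg μ) hΔv.le]

lemma one_le_det_of_psd_sub_one {C : Matrix (Fin n) (Fin n) ℝ}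
    (h : (C - 1).PosSemidef) : 1 ≤ C.det := by
  have hC : C.IsHermitian := by
    have h2 := h.1.add Matrix.isHermitian_one
    simpa using h2
  have hdet : C.det = ∏ i, hC.eigenvalues i := by
    simpa using hC.det_eq_prod_eigenvalues
  rw [hdet]
  have key : ∀ i : Fin n, (1:ℝ) ≤ hC.eigenvalues i := by
    intro i
    obtain ⟨v, hv1, hvE⟩ := exists_eigen hC i
    have hq : 0 ≤ v ⬝ᵥ ((C - 1) *ᵥ v) := by have := h.dotProduct_mulVec_nonneg v; simpa using this
    rw [sub_mulVec, dotProduct_sub, hvE, one_mulVec, dotProduct_smul, hv1] at hq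
    simpa using hq
  calc (1:ℝ) = ∏ _i : Fin n, 1 := by simp
  _ ≤ ∏ i, hC.eigenvalues i :=
      Finset.prod_le_prod (fun i _ => zero_le_one) (fun i _ => key i)

lemma det_le_det {A B : Matrix (Fin n) (Fin n) ℝ} (hB : B.PosDef) (h : (A - B).PosSemidef) :
    B.det ≤ A.det := by
  set P := psqrt hB.posSemidef with hPdef
  have hPP : P * P = B := psqrt_mul_self hB.posSemidef
  have hPherm : P.IsHermitian := (posSemidef_psqrt hB.posSemidef).1
  have hdetP : P.det * P.det = B.det := by rw [← det_mul, hPP]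
  have hPu : IsUnit P.det := by
    rcases eq_or_ne P.det 0 with h0 | h0
    · exfalso; have h3 := hB.det_pos; rw [← hdetP, h0, mul_zero] at h3; exact lt_irrefl _ h3
    · exact isUnit_iff_ne_zero.mpr h0
  have hinv1 : P⁻¹ * P = 1 := nonsing_inv_mul P hPu
  have hinv2 : P * P⁻¹ = 1 := mul_nonsing_inv P hPu
  set C := P⁻¹ * A * P⁻¹ with hCdef
  have hPB : P⁻¹ * B * P⁻¹ = 1 := by
    rw [← hPP]
    simp only [← Matrix.mul_assoc]
    rw [hinv1, Matrix.one_mul, hinv2]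
  have hC1 : (C - 1).PosSemidef := by
    have hcong := h.conjTranspose_mul_mul_same P⁻¹
    rw [hPherm.inv.eq] at hcong
    have heq : P⁻¹ * (A - B) * P⁻¹ = C - 1 := by
      rw [Matrix.mul_sub, Matrix.sub_mul, hPB, hCdef]
    rwa [heq] at hcong
  have hdetC : 1 ≤ C.det := one_le_det_of_psd_sub_one hC1
  have hA : A = P * C * P := by
    rw [hCdef]
    simp only [← Matrix.mul_assoc]
    rw [hinv2, Matrix.one_mul, Matrix.mul_assoc, hinv1, Matrix.mul_one]
  have : A.det = B.det * C.det := by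
    rw [hA, det_mul, det_mul]
    rw [← hdetP]; ring
  rw [this]
  nlinarith [hdetC, hB.det_pos]





lemma mulVec_ne_zero {P : Matrix (Fin n) (Fin n) ℝ} (hPu : IsUnit P.det) {x : Fin n → ℝ}
    (hx : x ≠ 0) : P *ᵥ x ≠ 0 := by
  intro h0
  apply hx
  have hinj : Function.Injective P.mulVec :=
    mulVec_injective_iff_isUnit.mpr ((isUnit_iff_isUnit_det P).mpr hPu)
  apply hinj
  rw [h0, mulVec_zero]

lemma dot_transpose (P M : Matrix (Fin n) (Fin n) ℝ) (x : Fin n → ℝ) :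
    x ⬝ᵥ ((Pᵀ * M * P) *ᵥ x) = (P *ᵥ x) ⬝ᵥ (M *ᵥ (P *ᵥ x)) := by
  rw [← mulVec_mulVec, ← mulVec_mulVec, dotProduct_mulVec x Pᵀ, vecMul_transpose]

lemma posDef_conj {M P : Matrix (Fin n) (Fin n) ℝ} (hM : M.PosDef) (hPu : IsUnit P.det) :
    (Pᵀ * M * P).PosDef := by
  refine .of_dotProduct_mulVec_pos ?_ ?_
  · have h := isHermitian_conjTranspose_mul_mul P hM.1
    rwa [conjTranspose_eq_transpose_of_trivial] at h
  · intro x hx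
    have h2 := hM.dotProduct_mulVec_pos (mulVec_ne_zero hPu hx)
    simpa [dot_transpose] using h2

lemma posDef_of_posSemidef_det {A : Matrix (Fin n) (Fin n) ℝ} (hA : A.PosSemidef)
    (hd : A.det ≠ 0) : A.PosDef := by
  obtain ⟨B, hB⟩ : ∃ B : Matrix (Fin n) (Fin n) ℝ, A = Bᴴ * B :=
    ⟨psqrt hA, by rw [(posSemidef_psqrt hA).1.eq, psqrt_mul_self]⟩
  have hdet2 : A.det = B.det * B.det := by
    rw [hB, det_mul, det_conjTranspose]; simp
  have hBu : IsUnit B.det := by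
    refine isUnit_iff_ne_zero.mpr fun h0 => hd ?_
    rw [hdet2, h0, mul_zero]
  refine .of_dotProduct_mulVec_pos hA.1 fun x hx => ?_
  have hBx : B *ᵥ x ≠ 0 := mulVec_ne_zero hBu hx
  have hpos : 0 < (B *ᵥ x) ⬝ᵥ (B *ᵥ x) := by
    rcases (dotProduct_self_eq_zero (v := B *ᵥ x)).not.mpr hBx with h1
    have h2 : 0 ≤ (B *ᵥ x) ⬝ᵥ (B *ᵥ x) :=
      Finset.sum_nonneg fun i _ => mul_self_nonneg _
    exact lt_of_le_of_ne h2 (Ne.symm h1)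
  have heq : star x ⬝ᵥ ((Bᴴ * B) *ᵥ x) = (B *ᵥ x) ⬝ᵥ (B *ᵥ x) := by
    rw [conjTranspose_eq_transpose_of_trivial, star_trivial, ← mulVec_mulVec,
      dotProduct_mulVec x Bᵀ, vecMul_transpose]
  rw [hB, heq]
  exact hpos

lemma geomean {B B' : Matrix (Fin n) (Fin n) ℝ} (hB : B.PosDef) (hB' : B'.PosDef) :
    ∃ W : Matrix (Fin n) (Fin n) ℝ, W.PosDef ∧ W.IsHermitian ∧
      (fromBlocks B W W B').PosSemidef ∧ W.det ^ 2 = B.det * B'.det := by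
  set P := psqrt hB.posSemidef with hPdef
  have hPP : P * P = B := psqrt_mul_self hB.posSemidef
  have hPherm : P.IsHermitian := (posSemidef_psqrt hB.posSemidef).1
  have hdetP : P.det * P.det = B.det := by rw [← det_mul, hPP]
  have hPu : IsUnit P.det := by
    refine isUnit_iff_ne_zero.mpr fun h0 => ?_
    have h3 := hB.det_pos
    rw [← hdetP, h0, mul_zero] at h3
    exact lt_irrefl _ h3
  have hinv1 : P⁻¹ * P = 1 := nonsing_inv_mul P hPu
  have hinv2 : P * P⁻¹ = 1 := mul_nonsing_inv P hPu
  have hPinvherm : (P⁻¹).IsHermitian := hPherm.inv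
  have hPinvu : IsUnit (P⁻¹).det := by
    have e4' : (P⁻¹).det = P.det⁻¹ := by rw [det_nonsing_inv, Ring.inverse_eq_inv']
    rw [e4']
    exact isUnit_iff_ne_zero.mpr (inv_ne_zero (isUnit_iff_ne_zero.mp hPu))
  set C := P⁻¹ * B' * P⁻¹ with hCdef
  have hCpd : C.PosDef := by
    have h4 := posDef_conj hB' hPinvu
    rwa [herm_symm hPinvherm] at h4
  set R := psqrt hCpd.posSemidef with hRdef
  have hRR : R * R = C := psqrt_mul_self hCpd.posSemidef
  have hRherm : R.IsHermitian := (posSemidef_psqrt hCpd.posSemidef).1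
  have hdetR : R.det * R.det = C.det := by rw [← det_mul, hRR]
  have hRpd : R.PosDef := by
    apply posDef_of_posSemidef_det (posSemidef_psqrt hCpd.posSemidef)
    intro h0
    have h5 := hCpd.det_pos
    rw [← hdetR, h0, mul_zero] at h5
    exact lt_irrefl _ h5
  refine ⟨P * R * P, ?_, ?_, ?_, ?_⟩
  · have h6 := posDef_conj hRpd hPu
    rwa [herm_symm hPherm] at h6
  · have h7 := isHermitian_conjTranspose_mul_mul P hRherm
    rwa [hPherm.eq] at h7
  · -- block psd
    set L : Matrix (Fin n) (Fin n ⊕ Fin n) ℝ := fromCols 1 R with hLdef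
    have hL : Lᴴ * L = fromBlocks 1 R R (R * R) := by
      rw [hLdef, conjTranspose_fromCols_eq_fromRows_conjTranspose,
        fromRows_mul_fromCols]
      rw [conjTranspose_one, hRherm.eq]
      simp
    have hLpsd : (Lᴴ * L).PosSemidef := posSemidef_conjTranspose_mul_self L
    rw [hL] at hLpsd
    have hcong := hLpsd.conjTranspose_mul_mul_same (fromBlocks P 0 0 P)
    have hGH : (fromBlocks P 0 0 P : Matrix (Fin n ⊕ Fin n) (Fin n ⊕ Fin n) ℝ)ᴴ =
        fromBlocks P 0 0 P := by
      rw [fromBlocks_conjTranspose, hPherm.eq]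
      simp
    rw [hGH] at hcong
    have hB'eq : P * (R * (R * P)) = B' := by
      rw [← Matrix.mul_assoc R R P, hRR, hCdef]
      simp only [← Matrix.mul_assoc]
      rw [hinv2, Matrix.one_mul, Matrix.mul_assoc, hinv1, Matrix.mul_one]
    have hmul : (fromBlocks P 0 0 P : Matrix (Fin n ⊕ Fin n) (Fin n ⊕ Fin n) ℝ) *
        fromBlocks 1 R R (R * R) * fromBlocks P 0 0 P =
        fromBlocks B (P * R * P) (P * R * P) B' := by
      simp [fromBlocks_multiply, Matrix.mul_assoc, hPP, hB'eq]
    rwa [hmul] at hcong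
  · -- det
    have e1 : (P * R * P).det = P.det * R.det * P.det := by rw [det_mul, det_mul]
    have e3 : C.det = P⁻¹.det * B'.det * P⁻¹.det := by rw [hCdef, det_mul, det_mul]
    have e4 : P⁻¹.det = P.det⁻¹ := by rw [det_nonsing_inv, Ring.inverse_eq_inv']
    have hPd0 : P.det ≠ 0 := isUnit_iff_ne_zero.mp hPu
    calc (P * R * P).det ^ 2 = (P.det * P.det) * (R.det * R.det) * (P.det * P.det) := by
          rw [e1]; ring
    _ = B.det * (P⁻¹.det * B'.det * P⁻¹.det) * B.det := by rw [hdetP, hdetR, e3]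
    _ = B.det * B'.det := by
        rw [e4, ← hdetP]
        field_simp

lemma diag_max {d d' : Fin n → ℝ} (hd : ∀ i, 0 < d i) (hd' : ∀ i, 0 < d' i)
    {Z : Matrix (Fin n) (Fin n) ℝ} (hZ : Z.IsHermitian)
    (h : (fromBlocks (diagonal d) Z Zᴴ (diagonal d')).PosSemidef) :
    ((diagonal fun i => Real.sqrt (d i * d' i)) - Z).PosSemidef := by
  set dm := fun i => Real.sqrt (d i * d' i) with hdm
  have hdmpos : ∀ i, 0 < dm i := fun i => Real.sqrt_pos.mpr (mul_pos (hd i) (hd' i))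
  have hdmsq : ∀ i, dm i ^ 2 = d i * d' i := fun i => Real.sq_sqrt (mul_pos (hd i) (hd' i)).le
  have hdPD : (diagonal d).PosDef := posDef_diagonal_iff.mpr hd
  haveI : Invertible (diagonal d) :=
    (diagonal d).invertibleOfIsUnitDet (isUnit_iff_ne_zero.mpr (by
      rw [det_diagonal]
      exact (Finset.prod_pos fun i _ => hd i).ne'))
  have hschur : ((diagonal d') - Zᴴ * (diagonal d)⁻¹ * Z).PosSemidef :=
    (PosDef.fromBlocks₁₁ Z (diagonal d') hdPD).mp h
  have hinvd : (diagonal d)⁻¹ = diagonal fun i => (d i)⁻¹ := by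
    apply inv_eq_right_inv
    rw [diagonal_mul_diagonal]
    have : (fun i => d i * (d i)⁻¹) = fun _ => (1:ℝ) := by
      funext i; exact mul_inv_cancel₀ (hd i).ne'
    rw [this, diagonal_one]
  rw [hinvd, hZ.eq] at hschur
  have hH : ((diagonal dm) - Z).IsHermitian := (isHermitian_diagonal dm).sub hZ
  rw [hH.posSemidef_iff_eigenvalues_nonneg, Pi.le_def]; simp only [Pi.zero_apply]
  intro i
  by_contra hcon
  push_neg at hcon
  obtain ⟨v, hv1, hvE⟩ := exists_eigen hH i
  set μ := hH.eigenvalues i with hμ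
  have hZv : Z *ᵥ v = fun j => (dm j - μ) * v j := by
    funext j
    have h6 := congrFun hvE j
    rw [sub_mulVec] at h6
    simp only [Pi.sub_apply, Pi.smul_apply, smul_eq_mul, mulVec_diagonal] at h6
    have : (Z *ᵥ v) j = dm j * v j - μ * v j := by linarith
    rw [this]; ring
  have hq := hschur.dotProduct_mulVec_nonneg v
  rw [star_trivial, sub_mulVec, dotProduct_sub] at hq
  have e1 : v ⬝ᵥ (diagonal d' *ᵥ v) = ∑ j, d' j * v j ^ 2 := by
    simp only [dotProduct, mulVec_diagonal]
    apply Finset.sum_congr rfl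
    intro j _; ring
  have e2 : v ⬝ᵥ ((Z * (diagonal fun i => (d i)⁻¹) * Z) *ᵥ v) =
      ∑ j, (d j)⁻¹ * ((dm j - μ) * v j) ^ 2 := by
    have hZt : Zᵀ = Z := by rw [← conjTranspose_eq_transpose_of_trivial]; exact hZ
    rw [show (Z * (diagonal fun i => (d i)⁻¹) * Z) *ᵥ v
        = Z *ᵥ ((diagonal fun i => (d i)⁻¹) *ᵥ (Z *ᵥ v)) by
      rw [← mulVec_mulVec, ← mulVec_mulVec]]
    rw [dotProduct_mulVec v Z, ← hZt, vecMul_transpose, hZt, hZv]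
    simp [dotProduct, mulVec_diagonal, sq]
    apply Finset.sum_congr rfl
    intro j _
    ring
  rw [e1, e2] at hq
  -- each coefficient is negative
  have hcoef : ∀ j, d' j - (d j)⁻¹ * (dm j - μ) ^ 2 < 0 := by
    intro j
    rw [sub_neg]
    rw [show (dm j - μ) ^ 2 = dm j ^ 2 - 2 * dm j * μ + μ ^ 2 by ring, hdmsq j]
    have h8 : 0 < - 2 * dm j * μ + μ ^ 2 := by nlinarith [hdmpos j]
    have h9 : (d j)⁻¹ * (d j * d' j) = d' j := by
      rw [← mul_assoc, inv_mul_cancel₀ (hd j).ne', one_mul]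
    nlinarith [mul_pos (inv_pos.mpr (hd j)) h8, h9]
  -- so all v j = 0
  have hterm : ∀ j ∈ Finset.univ, 0 ≤ (fun j => ((d j)⁻¹ * (dm j - μ) ^ 2 - d' j) * v j ^ 2) j := by
    intro j _
    have := hcoef j
    nlinarith [sq_nonneg (v j)]
  have hsum : ∑ j, ((d j)⁻¹ * (dm j - μ) ^ 2 - d' j) * v j ^ 2 ≤ 0 := by
    have : ∑ j, ((d j)⁻¹ * (dm j - μ) ^ 2 - d' j) * v j ^ 2
        = ∑ j, (d j)⁻¹ * ((dm j - μ) * v j) ^ 2 - ∑ j, d' j * v j ^ 2 := by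
      rw [← Finset.sum_sub_distrib]
      apply Finset.sum_congr rfl
      intro j _; ring
    rw [this]
    linarith [hq]
  have hzero : ∀ j ∈ Finset.univ, ((d j)⁻¹ * (dm j - μ) ^ 2 - d' j) * v j ^ 2 = 0 := by
    apply (Finset.sum_eq_zero_iff_of_nonneg hterm).mp
    exact le_antisymm hsum (Finset.sum_nonneg hterm)
  have hv0 : v = 0 := by
    funext j
    have h10 := hzero j (Finset.mem_univ j)
    have h11 := hcoef j
    have : v j ^ 2 = 0 := by
      rcases mul_eq_zero.mp h10 with h12 | h12
      · exfalso; nlinarith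
      · exact h12
    simpa using pow_eq_zero_iff (n := 2) (by norm_num) |>.mp this
  rw [hv0] at hv1
  simp at hv1


section Key

variable {n k : ℕ}

noncomputable def Amat (U : Matrix (Fin n) (Fin n) ℝ) (V : Matrix (Fin k) (Fin n) ℝ)
    (x : Fin n → ℝ) (y : Fin k → ℝ) : Matrix (Fin n) (Fin n) ℝ :=
  Uᵀ * diagonal (fun i => Real.exp (x i)) * U - Vᵀ * diagonal (fun j => Real.exp (y j)) * V

lemma sqrt_exp_mul (a b : ℝ) : Real.sqrt (Real.exp a * Real.exp b) = Real.exp ((a + b) / 2) := by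
  have h : Real.exp a * Real.exp b = Real.exp ((a + b) / 2) * Real.exp ((a + b) / 2) := by
    rw [← Real.exp_add, ← Real.exp_add]; congr 1; ring
  rw [h, Real.sqrt_mul_self (Real.exp_pos _).le]

lemma amat_herm (U : Matrix (Fin n) (Fin n) ℝ) (V : Matrix (Fin k) (Fin n) ℝ)
    (x : Fin n → ℝ) (y : Fin k → ℝ) : (Amat U V x y).IsHermitian := by
  apply IsHermitian.sub
  · have h := isHermitian_conjTranspose_mul_mul U
      (isHermitian_diagonal (fun i => Real.exp (x i)))
    rwa [conjTranspose_eq_transpose_of_trivial] at h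
  · have h := isHermitian_conjTranspose_mul_mul V
      (isHermitian_diagonal (fun j => Real.exp (y j)))
    rwa [conjTranspose_eq_transpose_of_trivial] at h

lemma key_mid (U : Matrix (Fin n) (Fin n) ℝ) (hU : IsUnit U.det) (V : Matrix (Fin k) (Fin n) ℝ)
    {x x' : Fin n → ℝ} {y y' : Fin k → ℝ}
    (h : (Amat U V x y).PosDef) (h' : (Amat U V x' y').PosDef) :
    (Amat U V (fun i => (x i + x' i) / 2) (fun j => (y j + y' j) / 2)).PosDef ∧
      (Amat U V x y).det * (Amat U V x' y').det ≤
        (Amat U V (fun i => (x i + x' i) / 2) (fun j => (y j + y' j) / 2)).det ^ 2 := by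
  obtain ⟨W, hWpd, hWherm, hWblock, hWdet⟩ := geomean h h'
  set Em : Matrix (Fin k) (Fin k) ℝ := diagonal (fun j => Real.exp ((y j + y' j) / 2)) with hEm
  -- inner 2k x 2k PSD matrix
  have hNinner : (fromBlocks (diagonal fun j => Real.exp (y j)) Em Em
      (diagonal fun j => Real.exp (y' j))).PosSemidef := by
    set L : Matrix (Fin k) (Fin k ⊕ Fin k) ℝ :=
      fromCols (diagonal fun j => Real.exp (y j / 2))
        (diagonal fun j => Real.exp (y' j / 2)) with hL
    have hpsd := posSemidef_conjTranspose_mul_self L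
    have hLL : Lᴴ * L = fromBlocks (diagonal fun j => Real.exp (y j)) Em Em
        (diagonal fun j => Real.exp (y' j)) := by
      rw [hL, conjTranspose_fromCols_eq_fromRows_conjTranspose, fromRows_mul_fromCols]
      rw [diagonal_conjTranspose, diagonal_conjTranspose]
      simp only [star_trivial, diagonal_mul_diagonal]
      have ey : (fun i => Real.exp (y i / 2) * Real.exp (y i / 2)) = fun i => Real.exp (y i) := by
        funext i; rw [← Real.exp_add]; congr 1; ring
      have ey' : (fun i => Real.exp (y' i / 2) * Real.exp (y' i / 2)) =
          fun i => Real.exp (y' i) := by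
        funext i; rw [← Real.exp_add]; congr 1; ring
      have em1 : (fun i => Real.exp (y i / 2) * Real.exp (y' i / 2)) =
          fun i => Real.exp ((y i + y' i) / 2) := by
        funext i; rw [← Real.exp_add]; congr 1; ring
      have em2 : (fun i => Real.exp (y' i / 2) * Real.exp (y i / 2)) =
          fun i => Real.exp ((y i + y' i) / 2) := by
        funext i; rw [← Real.exp_add]; congr 1; ring
      rw [ey, ey', em1, em2, ← hEm]
    rwa [hLL] at hpsd
  -- congruence with V
  have hN : (fromBlocks (Vᵀ * (diagonal fun j => Real.exp (y j)) * V) (Vᵀ * Em * V)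
      (Vᵀ * Em * V) (Vᵀ * (diagonal fun j => Real.exp (y' j)) * V)).PosSemidef := by
    have hc := hNinner.conjTranspose_mul_mul_same (fromBlocks V 0 0 V)
    have heq : (fromBlocks V 0 0 V : Matrix (Fin k ⊕ Fin k) (Fin n ⊕ Fin n) ℝ)ᴴ *
        fromBlocks (diagonal fun j => Real.exp (y j)) Em Em
          (diagonal fun j => Real.exp (y' j)) * fromBlocks V 0 0 V =
        fromBlocks (Vᵀ * (diagonal fun j => Real.exp (y j)) * V) (Vᵀ * Em * V)
          (Vᵀ * Em * V) (Vᵀ * (diagonal fun j => Real.exp (y' j)) * V) := by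
      rw [fromBlocks_conjTranspose]
      simp [fromBlocks_multiply, Matrix.mul_assoc, conjTranspose_eq_transpose_of_trivial]
    rwa [heq] at hc
  have hsum := hWblock.add hN
  rw [fromBlocks_add] at hsum
  have hb11 : Amat U V x y + Vᵀ * (diagonal fun j => Real.exp (y j)) * V =
      Uᵀ * (diagonal fun i => Real.exp (x i)) * U := by
    rw [Amat, sub_add_cancel]
  have hb22 : Amat U V x' y' + Vᵀ * (diagonal fun j => Real.exp (y' j)) * V =
      Uᵀ * (diagonal fun i => Real.exp (x' i)) * U := by
    rw [Amat, sub_add_cancel]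
  rw [hb11, hb22] at hsum
  -- conjugate by U⁻¹ blocks
  have hUtu : IsUnit (Uᵀ).det := by rwa [det_transpose]
  have h1 : (Uᵀ)⁻¹ * Uᵀ = 1 := nonsing_inv_mul _ hUtu
  have h2 : U * U⁻¹ = 1 := mul_nonsing_inv _ hU
  have h3 : Uᵀ * (Uᵀ)⁻¹ = 1 := mul_nonsing_inv _ hUtu
  have h4 : U⁻¹ * U = 1 := nonsing_inv_mul _ hU
  have hinvH : (U⁻¹ : Matrix (Fin n) (Fin n) ℝ)ᴴ = (Uᵀ)⁻¹ := by
    rw [conjTranspose_eq_transpose_of_trivial, transpose_nonsing_inv]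
  have conj_cancel : ∀ M : Matrix (Fin n) (Fin n) ℝ,
      (Uᵀ)⁻¹ * (Uᵀ * M * U) * U⁻¹ = M := by
    intro M
    simp only [← Matrix.mul_assoc]
    rw [h1, Matrix.one_mul, Matrix.mul_assoc, h2, Matrix.mul_one]
  set Z := (Uᵀ)⁻¹ * (W + Vᵀ * Em * V) * U⁻¹ with hZdef
  have hc2 := hsum.conjTranspose_mul_mul_same (fromBlocks U⁻¹ 0 0 U⁻¹)
  have heq2 : (fromBlocks U⁻¹ 0 0 U⁻¹ : Matrix (Fin n ⊕ Fin n) (Fin n ⊕ Fin n) ℝ)ᴴ *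
      fromBlocks (Uᵀ * (diagonal fun i => Real.exp (x i)) * U) (W + Vᵀ * Em * V)
        (W + Vᵀ * Em * V) (Uᵀ * (diagonal fun i => Real.exp (x' i)) * U) *
      fromBlocks U⁻¹ 0 0 U⁻¹ =
      fromBlocks ((Uᵀ)⁻¹ * (Uᵀ * (diagonal fun i => Real.exp (x i)) * U) * U⁻¹) Z Z
        ((Uᵀ)⁻¹ * (Uᵀ * (diagonal fun i => Real.exp (x' i)) * U) * U⁻¹) := by
    rw [fromBlocks_conjTranspose, hinvH, hZdef]
    simp [fromBlocks_multiply, Matrix.mul_assoc]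
  rw [heq2, conj_cancel, conj_cancel] at hc2
  -- Z is hermitian
  have hVEVherm : (Vᵀ * Em * V).IsHermitian := by
    have h5 := isHermitian_conjTranspose_mul_mul V
      (isHermitian_diagonal (fun j => Real.exp ((y j + y' j) / 2)))
    rw [conjTranspose_eq_transpose_of_trivial] at h5
    rwa [hEm]
  have hZherm : Z.IsHermitian := by
    have h5 := isHermitian_conjTranspose_mul_mul (U⁻¹) (hWherm.add hVEVherm)
    rwa [hinvH] at h5
  nth_rewrite 2 [← hZherm.eq] at hc2
  have hdm := diag_max (fun i => Real.exp_pos (x i)) (fun i => Real.exp_pos (x' i)) hZherm hc2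
  have hdm' : ((diagonal fun i => Real.exp ((x i + x' i) / 2)) - Z).PosSemidef := by
    convert hdm using 3
    funext i
    rw [sqrt_exp_mul]
  -- conjugate back
  have hc3 := hdm'.conjTranspose_mul_mul_same U
  have heq3 : Uᴴ * ((diagonal fun i => Real.exp ((x i + x' i) / 2)) - Z) * U =
      Amat U V (fun i => (x i + x' i) / 2) (fun j => (y j + y' j) / 2) - W := by
    rw [conjTranspose_eq_transpose_of_trivial, Matrix.mul_sub, Matrix.sub_mul]
    have hZU : Uᵀ * Z * U = W + Vᵀ * Em * V := by
      rw [hZdef]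
      simp only [← Matrix.mul_assoc]
      rw [h3, Matrix.one_mul, Matrix.mul_assoc, h4, Matrix.mul_one]
    rw [hZU, Amat, ← hEm]
    abel
  rw [heq3] at hc3
  constructor
  · have h6 := hWpd.add_posSemidef hc3
    have e : W + (Amat U V (fun i => (x i + x' i) / 2) (fun j => (y j + y' j) / 2) - W) =
        Amat U V (fun i => (x i + x' i) / 2) (fun j => (y j + y' j) / 2) := by abel
    rwa [e] at h6
  · have hle := det_le_det hWpd hc3
    rw [← hWdet]
    exact pow_le_pow_left₀ hWpd.det_pos.le hle 2

end Key


section Seg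

variable {n k : ℕ}

lemma seg (U : Matrix (Fin n) (Fin n) ℝ) (hU : IsUnit U.det) (V : Matrix (Fin k) (Fin n) ℝ)
    {p q : (Fin n → ℝ) × (Fin k → ℝ)}
    (hp : (Amat U V p.1 p.2).PosDef) (hq : (Amat U V q.1 q.2).PosDef)
    {a b : ℝ} (ha : 0 ≤ a) (hb : 0 ≤ b) (hab : a + b = 1) :
    (Amat U V (a • p + b • q).1 (a • p + b • q).2).PosDef ∧
      a * Real.log (Amat U V p.1 p.2).det + b * Real.log (Amat U V q.1 q.2).det ≤
        Real.log (Amat U V (a • p + b • q).1 (a • p + b • q).2).det := by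
  set xc : ℝ → Fin n → ℝ := fun t i => t * p.1 i + (1 - t) * q.1 i with hxc
  set yc : ℝ → Fin k → ℝ := fun t j => t * p.2 j + (1 - t) * q.2 j with hyc
  set M : ℝ → Matrix (Fin n) (Fin n) ℝ := fun t => Amat U V (xc t) (yc t) with hM
  have hx1 : xc 1 = p.1 := by funext i; simp only [hxc]; ring
  have hy1 : yc 1 = p.2 := by funext j; simp only [hyc]; ring
  have hx0 : xc 0 = q.1 := by funext i; simp only [hxc]; ring
  have hy0 : yc 0 = q.2 := by funext j; simp only [hyc]; ring
  have hM1 : M 1 = Amat U V p.1 p.2 := by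
    rw [show M 1 = Amat U V (xc 1) (yc 1) from rfl, hx1, hy1]
  have hM0 : M 0 = Amat U V q.1 q.2 := by
    rw [show M 0 = Amat U V (xc 0) (yc 0) from rfl, hx0, hy0]
  have hbval : b = 1 - a := by linarith
  have hxa : (a • p + b • q).1 = xc a := by
    funext i
    simp only [hxc, Prod.fst_add, Prod.smul_fst, Pi.add_apply, Pi.smul_apply, smul_eq_mul]
    rw [hbval]
  have hya : (a • p + b • q).2 = yc a := by
    funext j
    simp only [hyc, Prod.snd_add, Prod.smul_snd, Pi.add_apply, Pi.smul_apply, smul_eq_mul]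
    rw [hbval]
  have hMa : M a = Amat U V (a • p + b • q).1 (a • p + b • q).2 := by
    rw [show M a = Amat U V (xc a) (yc a) from rfl, hxa, hya]
  -- midpoint step
  have midstep : ∀ s t : ℝ, (M s).PosDef → (M t).PosDef →
      (M ((s + t) / 2)).PosDef ∧ (M s).det * (M t).det ≤ (M ((s + t) / 2)).det ^ 2 := by
    intro s t hs ht
    have hkm := key_mid U hU V hs ht
    have hx2 : (fun i => (xc s i + xc t i) / 2) = xc ((s + t) / 2) := by
      funext i; simp only [hxc]; ring
    have hy2 : (fun j => (yc s j + yc t j) / 2) = yc ((s + t) / 2) := by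
      funext j; simp only [hyc]; ring
    rw [hx2, hy2] at hkm
    exact hkm
  set L1 : ℝ := Real.log (M 1).det with hL1
  set L0 : ℝ := Real.log (M 0).det with hL0
  have hp' : (M 1).PosDef := by rw [hM1]; exact hp
  have hq' : (M 0).PosDef := by rw [hM0]; exact hq
  have dyadic : ∀ N : ℕ, ∀ j : ℕ, j ≤ 2 ^ N → (M ((j : ℝ) / 2 ^ N)).PosDef ∧
      ((j : ℝ) / 2 ^ N) * L1 + (1 - (j : ℝ) / 2 ^ N) * L0 ≤
        Real.log (M ((j : ℝ) / 2 ^ N)).det := by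
    intro N
    induction N with
    | zero =>
      intro j hj
      have hj1 : j ≤ 1 := by simpa using hj
      interval_cases j
      · simp only [Nat.cast_zero, pow_zero, zero_div, div_one]
        constructor
        · exact hq'
        · rw [hL0]; nlinarith [le_refl (Real.log (M 0).det)]
      · simp only [Nat.cast_one, pow_zero, div_one]
        constructor
        · exact hp'
        · rw [hL1]; nlinarith [le_refl (Real.log (M 1).det)]
    | succ N ih =>
      intro j hj
      have h2N : (2:ℕ) ^ (N + 1) = 2 * 2 ^ N := by rw [pow_succ]; ring
      rcases Nat.even_or_odd j with ⟨j', rfl⟩ | ⟨j', rfl⟩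
      · have hj' : j' ≤ 2 ^ N := by rw [h2N] at hj; omega
        have heq : ((j' + j' : ℕ) : ℝ) / 2 ^ (N + 1) = (j' : ℝ) / 2 ^ N := by
          push_cast; ring
        rw [heq]
        exact ih j' hj'
      · have hj1 : j' + 1 ≤ 2 ^ N := by rw [h2N] at hj; omega
        have hj0 : j' ≤ 2 ^ N := by omega
        obtain ⟨hPD1, hIq1⟩ := ih j' hj0
        obtain ⟨hPD2, hIq2⟩ := ih (j' + 1) hj1
        obtain ⟨hPDm, hdet⟩ := midstep _ _ hPD1 hPD2
        have harg : (((j' : ℝ) / 2 ^ N) + (((j' : ℕ) + 1 : ℕ) : ℝ) / 2 ^ N) / 2 =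
            ((2 * j' + 1 : ℕ) : ℝ) / 2 ^ (N + 1) := by
          push_cast; ring
        rw [harg] at hPDm hdet
        refine ⟨hPDm, ?_⟩
        have hd1 := hPD1.det_pos
        have hd2 := hPD2.det_pos
        set s1 : ℝ := ((j' : ℕ) : ℝ) / 2 ^ N with hs1
        set s2 : ℝ := ((j' + 1 : ℕ) : ℝ) / 2 ^ N with hs2
        set tm : ℝ := ((2 * j' + 1 : ℕ) : ℝ) / 2 ^ (N + 1) with htm
        have h7 := Real.log_le_log (mul_pos hd1 hd2) hdet
        rw [Real.log_mul hd1.ne' hd2.ne', Real.log_pow, Nat.cast_ofNat] at h7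
        have e1 : tm * L1 = ((s1 + s2) / 2) * L1 := by rw [harg]
        have e2 : tm * L0 = ((s1 + s2) / 2) * L0 := by rw [harg]
        linarith [hIq1, hIq2, h7, e1, e2]
  -- continuity
  have hMc : Continuous M := by
    rw [hM]
    show Continuous fun t =>
      Uᵀ * diagonal (fun i => Real.exp (xc t i)) * U -
        Vᵀ * diagonal (fun j => Real.exp (yc t j)) * V
    have hx : Continuous fun t : ℝ => fun i => Real.exp (xc t i) := by
      apply continuous_pi
      intro i
      apply Real.continuous_exp.comp
      simp only [hxc]
      exact (continuous_id.mul continuous_const).add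
        ((continuous_const.sub continuous_id).mul continuous_const)
    have hy : Continuous fun t : ℝ => fun j => Real.exp (yc t j) := by
      apply continuous_pi
      intro j
      apply Real.continuous_exp.comp
      simp only [hyc]
      exact (continuous_id.mul continuous_const).add
        ((continuous_const.sub continuous_id).mul continuous_const)
    exact ((continuous_const.matrix_mul hx.matrix_diagonal).matrix_mul continuous_const).sub
      ((continuous_const.matrix_mul hy.matrix_diagonal).matrix_mul continuous_const)
  have hdetc : Continuous fun t => (M t).det := hMc.matrix_det
  -- dyadic approximations of a
  set tN : ℕ → ℝ := fun N => (⌊a * 2 ^ N⌋₊ : ℝ) / 2 ^ N with htNdef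
  have ha1 : a ≤ 1 := by linarith
  have hfloorle : ∀ N : ℕ, ⌊a * 2 ^ N⌋₊ ≤ 2 ^ N := by
    intro N
    have hpow : (0:ℝ) < 2 ^ N := by positivity
    have h8 : a * 2 ^ N ≤ ((2 ^ N : ℕ) : ℝ) := by
      push_cast
      nlinarith
    calc ⌊a * 2 ^ N⌋₊ ≤ ⌊((2 ^ N : ℕ) : ℝ)⌋₊ := Nat.floor_le_floor h8
    _ = 2 ^ N := Nat.floor_natCast _
  have hdy : ∀ N, (M (tN N)).PosDef ∧
      tN N * L1 + (1 - tN N) * L0 ≤ Real.log (M (tN N)).det := by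
    intro N
    exact dyadic N ⌊a * 2 ^ N⌋₊ (hfloorle N)
  have htend : Filter.Tendsto tN Filter.atTop (𝓝 a) := by
    have h1 := tendsto_nat_floor_mul_div_atTop (R := ℝ) ha
    have h2 : Filter.Tendsto (fun N : ℕ => (2:ℝ) ^ N) Filter.atTop Filter.atTop :=
      tendsto_pow_atTop_atTop_of_one_lt (by norm_num)
    have h3 := h1.comp h2
    exact h3
  have htN0 : ∀ N, 0 ≤ tN N := by
    intro N
    simp only [htNdef]
    positivity
  have htN1 : ∀ N, tN N ≤ 1 := by
    intro N
    simp only [htNdef]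
    rw [div_le_one (by positivity)]
    have h9 := hfloorle N
    calc (⌊a * 2 ^ N⌋₊ : ℝ) ≤ ((2 ^ N : ℕ) : ℝ) := by exact_mod_cast h9
    _ = 2 ^ N := by push_cast; ring
  -- limit: M a is positive semidefinite
  have hMaPSD : (M a).PosSemidef := by
    refine .of_dotProduct_mulVec_nonneg (amat_herm U V _ _) fun v => ?_
    rw [star_trivial]
    have hgc : Continuous fun t => v ⬝ᵥ (M t *ᵥ v) :=
      continuous_const.dotProduct (hMc.matrix_mulVec continuous_const)
    have htt : Filter.Tendsto (fun N => v ⬝ᵥ (M (tN N) *ᵥ v)) Filter.atTop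
        (𝓝 (v ⬝ᵥ (M a *ᵥ v))) := (hgc.tendsto a).comp htend
    refine ge_of_tendsto htt (Filter.Eventually.of_forall fun N => ?_)
    have h10 := (hdy N).1.posSemidef.dotProduct_mulVec_nonneg v
    simpa using h10
  set c : ℝ := min L1 L0 with hc
  have hdetlim : Real.exp c ≤ (M a).det := by
    have htt : Filter.Tendsto (fun N => (M (tN N)).det) Filter.atTop (𝓝 ((M a).det)) :=
      (hdetc.tendsto a).comp htend
    refine ge_of_tendsto htt (Filter.Eventually.of_forall fun N => ?_)
    have hPD := (hdy N).1
    have hIq := (hdy N).2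
    have hminle : c ≤ tN N * L1 + (1 - tN N) * L0 := by
      have e1 : tN N * c ≤ tN N * L1 := mul_le_mul_of_nonneg_left (min_le_left _ _) (htN0 N)
      have e2 : (1 - tN N) * c ≤ (1 - tN N) * L0 :=
        mul_le_mul_of_nonneg_left (min_le_right _ _) (by linarith [htN1 N])
      nlinarith [e1, e2]
    have hcle : c ≤ Real.log (M (tN N)).det := le_trans hminle hIq
    calc Real.exp c ≤ Real.exp (Real.log (M (tN N)).det) := Real.exp_le_exp.mpr hcle
    _ = (M (tN N)).det := Real.exp_log hPD.det_pos
  have hMaPD : (M a).PosDef :=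
    posDef_of_posSemidef_det hMaPSD (lt_of_lt_of_le (Real.exp_pos c) hdetlim).ne'
  constructor
  · exact hMa ▸ hMaPD
  · have hlogc : Filter.Tendsto (fun N => Real.log (M (tN N)).det) Filter.atTop
        (𝓝 (Real.log (M a).det)) := by
      have hcont : ContinuousAt Real.log (M a).det := Real.continuousAt_log hMaPD.det_pos.ne'
      exact hcont.tendsto.comp ((hdetc.tendsto a).comp htend)
    have hlhs : Filter.Tendsto (fun N => tN N * L1 + (1 - tN N) * L0) Filter.atTop
        (𝓝 (a * L1 + (1 - a) * L0)) := by
      apply Filter.Tendsto.add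
      · exact htend.mul tendsto_const_nhds
      · exact (tendsto_const_nhds.sub htend).mul tendsto_const_nhds
    have hfin := le_of_tendsto_of_tendsto' hlhs hlogc (fun N => (hdy N).2)
    rw [← hMa, ← hM1, ← hM0, hbval]
    rw [hL1, hL0] at hfin
    linarith [hfin]

end Seg


end Stmt15Aux

theorem stmt15 {m n : ℕ} (hn : 1 ≤ n) (hm : n ≤ m)
    (U : Matrix (Fin n) (Fin n) ℝ) (hU : IsUnit U.det)
    (V : Matrix (Fin (m - n)) (Fin n) ℝ) :
    ConcaveOn ℝ {p : (Fin n → ℝ) × (Fin (m - n) → ℝ) |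
        (Uᵀ * Matrix.diagonal (fun i => Real.exp (p.1 i)) * U -
          Vᵀ * Matrix.diagonal (fun j => Real.exp (p.2 j)) * V).PosDef}
      (fun p => Real.log
        (Uᵀ * Matrix.diagonal (fun i => Real.exp (p.1 i)) * U -
          Vᵀ * Matrix.diagonal (fun j => Real.exp (p.2 j)) * V).det) := by
  constructor
  · intro p hp q hq a b ha hb hab
    have hp' : (Stmt15Aux.Amat U V p.1 p.2).PosDef := hp
    have hq' : (Stmt15Aux.Amat U V q.1 q.2).PosDef := hq
    exact (Stmt15Aux.seg U hU V hp' hq' ha hb hab).1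
  · intro p hp q hq a b ha hb hab
    have hp' : (Stmt15Aux.Amat U V p.1 p.2).PosDef := hp
    have hq' : (Stmt15Aux.Amat U V q.1 q.2).PosDef := hq
    have h := (Stmt15Aux.seg U hU V hp' hq' ha hb hab).2
    simpa [smul_eq_mul, Stmt15Aux.Amat] using h
end

section
/- Let I and J be disjoint finite sets, E ⊆ I × J, and let (α_i)_{i∈I}, (β_j)_{j∈J} be non-negative reals. There exist non-negative numbers (γ_{ij})_{(i,j)∈E} with ∑_{j:(i,j)∈E} γ_{ij} = α_i for all i ∈ I and ∑_{i:(i,j)∈E} γ_{ij} = β_j for all j ∈ J, if and only if ∑_{i∈I} α_i = ∑_{j∈J} β_j and for every S ⊆ I, ∑_{i∈S} α_i ≤ ∑_{j : ∃ i∈S, (i,j)∈E} β_j. -/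
namespace GaleAux

open Finset
open scoped Classical

variable {I J : Type*} [Fintype I] [Fintype J]

noncomputable def nbr (E : Set (I × J)) (B : Finset J) (S : Finset I) : Finset J :=
  B.filter (fun j => ∃ i ∈ S, (i, j) ∈ E)

lemma nbr_subset (E : Set (I × J)) (B : Finset J) (S : Finset I) : nbr E B S ⊆ B :=
  filter_subset _ _

def Feas (E : Set (I × J)) (A : Finset I) (B : Finset J) (α : I → ℝ) (β : J → ℝ) : Prop :=
  ∃ γ : I → J → ℝ, (∀ i j, 0 ≤ γ i j) ∧
    (∀ i j, i ∉ A ∨ j ∉ B ∨ (i, j) ∉ E → γ i j = 0) ∧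
    (∀ i ∈ A, ∑ j, γ i j = α i) ∧ (∀ j ∈ B, ∑ i, γ i j = β j)

def Hyp (E : Set (I × J)) (A : Finset I) (B : Finset J) (α : I → ℝ) (β : J → ℝ) : Prop :=
  (∀ i ∈ A, 0 ≤ α i) ∧ (∀ j ∈ B, 0 ≤ β j) ∧
    (∑ i ∈ A, α i = ∑ j ∈ B, β j) ∧
    (∀ S ⊆ A, ∑ i ∈ S, α i ≤ ∑ j ∈ nbr E B S, β j)

noncomputable def meas (A : Finset I) (B : Finset J) (α : I → ℝ) (β : J → ℝ) : ℕ :=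
  2 * A.card + (A.filter fun i => α i ≠ 0).card + (B.filter fun j => β j ≠ 0).card

lemma sum_update_sub (f : I → ℝ) (s : Finset I) (i0 : I) (his : i0 ∈ s) (c : ℝ) :
    ∑ i ∈ s, Function.update f i0 (f i0 - c) i = (∑ i ∈ s, f i) - c := by
  rw [Finset.sum_update_of_mem his]
  have := Finset.sum_eq_sum_sdiff_singleton_add his f
  linarith

lemma sum_update_not_mem (f : I → ℝ) (s : Finset I) (i0 : I) (his : i0 ∉ s) (c : ℝ) :
    ∑ i ∈ s, Function.update f i0 c i = ∑ i ∈ s, f i :=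
  Finset.sum_congr rfl fun i hi => Function.update_of_ne (by rintro rfl; exact his hi) _ _

lemma feas_zero {E : Set (I × J)} {A : Finset I} {B : Finset J} {α : I → ℝ} {β : J → ℝ}
    (h : Hyp E A B α β) (hz : ∀ i ∈ A, α i = 0) : Feas E A B α β := by
  obtain ⟨hα, hβ, htot, hhall⟩ := h
  have hB0 : ∀ j ∈ B, β j = 0 := by
    have hsum : ∑ j ∈ B, β j = 0 := by
      rw [← htot]; exact Finset.sum_eq_zero hz
    exact fun j hj => (Finset.sum_eq_zero_iff_of_nonneg hβ).mp hsum j hj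
  refine ⟨fun _ _ => 0, fun _ _ => le_refl 0, fun _ _ _ => rfl, ?_, ?_⟩
  · intro i hi; simpa using (hz i hi).symm
  · intro j hj; simpa using (hB0 j hj).symm

lemma split_step (E : Set (I × J)) (A : Finset I) (B : Finset J) (α : I → ℝ) (β : J → ℝ)
    (h : Hyp E A B α β) (S : Finset I) (hSA : S ⊆ A) (hS : S.Nonempty) (hSne : S ≠ A)
    (ht : ∑ i ∈ S, α i = ∑ j ∈ nbr E B S, β j)
    (IH : ∀ A' B', A' ⊆ A → A'.card < A.card → B' ⊆ B → Hyp E A' B' α β → Feas E A' B' α β) :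
    Feas E A B α β := by
  obtain ⟨hα, hβ, htot, hhall⟩ := h
  set B1 := nbr E B S with hB1
  have hB1B : B1 ⊆ B := nbr_subset _ _ _
  -- first subproblem
  have hnbr1 : ∀ T ⊆ S, nbr E B1 T = nbr E B T := by
    intro T hT
    ext j
    simp only [nbr, hB1, mem_filter]
    constructor
    · rintro ⟨⟨hjB, -⟩, hT2⟩; exact ⟨hjB, hT2⟩
    · rintro ⟨hjB, i, hiT, hiE⟩; exact ⟨⟨hjB, i, hT hiT, hiE⟩, i, hiT, hiE⟩
  have h1 : Hyp E S B1 α β := by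
    refine ⟨fun i hi => hα i (hSA hi), fun j hj => hβ j (hB1B hj), ht, ?_⟩
    intro T hT
    rw [hnbr1 T hT]
    exact hhall T (hT.trans hSA)
  -- second subproblem
  have hnbr2 : ∀ T : Finset I, nbr E (B \ B1) T = nbr E B T \ B1 := by
    intro T
    ext j
    simp only [nbr, hB1, mem_filter, mem_sdiff]
    tauto
  have hdisjST : ∀ T ⊆ A \ S, Disjoint S T := by
    intro T hT
    rw [Finset.disjoint_right]
    intro i hiT
    exact (Finset.mem_sdiff.mp (hT hiT)).2
  have h2 : Hyp E (A \ S) (B \ B1) α β := by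
    refine ⟨fun i hi => hα i (Finset.sdiff_subset hi),
      fun j hj => hβ j (Finset.sdiff_subset hj), ?_, ?_⟩
    · rw [Finset.sum_sdiff_eq_sub hSA, Finset.sum_sdiff_eq_sub hB1B, htot, ht]
    · intro T hT
      have hST : S ∪ T ⊆ A := Finset.union_subset hSA (hT.trans Finset.sdiff_subset)
      have hkey := hhall (S ∪ T) hST
      have hnbrU : nbr E B (S ∪ T) = B1 ∪ (nbr E B T \ B1) := by
        ext j
        simp only [nbr, hB1, mem_filter, mem_union, mem_sdiff]
        constructor
        · rintro ⟨hjB, i, hiST, hiE⟩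
          rcases hiST with hiS | hiT
          · exact Or.inl ⟨hjB, i, hiS, hiE⟩
          · by_cases hj1 : j ∈ B.filter (fun j => ∃ i ∈ S, (i, j) ∈ E)
            · exact Or.inl (by simpa [nbr] using hj1)
            · exact Or.inr ⟨⟨hjB, i, hiT, hiE⟩, by simpa [nbr, mem_filter] using hj1⟩
        · rintro (⟨hjB, i, hiS, hiE⟩ | ⟨⟨hjB, i, hiT, hiE⟩, -⟩)
          · exact ⟨hjB, i, Or.inl hiS, hiE⟩
          · exact ⟨hjB, i, Or.inr hiT, hiE⟩
      rw [hnbrU, Finset.sum_union Finset.disjoint_sdiff,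
        Finset.sum_union (hdisjST T hT)] at hkey
      rw [hnbr2 T]
      linarith
  have c1 : S.card < A.card := Finset.card_lt_card (hSA.ssubset_of_ne hSne)
  have c2 : (A \ S).card < A.card := by
    have h1 : (A \ S).card = A.card - S.card := Finset.card_sdiff_of_subset hSA
    have h2 : 0 < S.card := Finset.card_pos.mpr hS
    have h3 : S.card ≤ A.card := Finset.card_le_card hSA
    omega
  obtain ⟨γ1, g1pos, g1supp, g1row, g1col⟩ := IH S B1 hSA c1 hB1B h1
  obtain ⟨γ2, g2pos, g2supp, g2row, g2col⟩ :=
    IH (A \ S) (B \ B1) Finset.sdiff_subset c2 Finset.sdiff_subset h2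
  refine ⟨fun i j => γ1 i j + γ2 i j, fun i j => add_nonneg (g1pos i j) (g2pos i j), ?_, ?_, ?_⟩
  · intro i j hbad
    have hb1 : γ1 i j = 0 := by
      rcases hbad with hb | hb | hb
      · exact g1supp i j (Or.inl (fun hc => hb (hSA hc)))
      · exact g1supp i j (Or.inr (Or.inl (fun hc => hb (hB1B hc))))
      · exact g1supp i j (Or.inr (Or.inr hb))
    have hb2 : γ2 i j = 0 := by
      rcases hbad with hb | hb | hb
      · exact g2supp i j (Or.inl (fun hc => hb (Finset.sdiff_subset hc)))
      · exact g2supp i j (Or.inr (Or.inl (fun hc => hb (Finset.sdiff_subset hc))))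
      · exact g2supp i j (Or.inr (Or.inr hb))
    simp only [hb1, hb2, add_zero]
  · intro i hi
    simp only [Finset.sum_add_distrib]
    by_cases hiS : i ∈ S
    · have : ∑ j, γ2 i j = 0 :=
        Finset.sum_eq_zero fun j _ => g2supp i j (Or.inl (by simp [hiS]))
      rw [this, g1row i hiS, add_zero]
    · have : ∑ j, γ1 i j = 0 :=
        Finset.sum_eq_zero fun j _ => g1supp i j (Or.inl hiS)
      rw [this, g2row i (Finset.mem_sdiff.mpr ⟨hi, hiS⟩), zero_add]
  · intro j hj
    simp only [Finset.sum_add_distrib]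
    by_cases hjB1 : j ∈ B1
    · have : ∑ i, γ2 i j = 0 :=
        Finset.sum_eq_zero fun i _ => g2supp i j (Or.inr (Or.inl (by simp [hjB1])))
      rw [this, g1col j hjB1, add_zero]
    · have : ∑ i, γ1 i j = 0 :=
        Finset.sum_eq_zero fun i _ => g1supp i j (Or.inr (Or.inl hjB1))
      rw [this, g2col j (Finset.mem_sdiff.mpr ⟨hj, hjB1⟩), zero_add]

lemma gale_aux (E : Set (I × J)) :
    ∀ (n : ℕ) (A : Finset I) (B : Finset J) (α : I → ℝ) (β : J → ℝ),
      meas A B α β ≤ n → Hyp E A B α β → Feas E A B α β := by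
  intro n
  induction n with
  | zero =>
    intro A B α β hm h
    have hA : A = ∅ := by
      have : A.card = 0 := by unfold meas at hm; omega
      exact Finset.card_eq_zero.mp this
    exact feas_zero h (by simp [hA])
  | succ n IH =>
    intro A B α β hm h
    by_cases hz : ∀ i ∈ A, α i = 0
    · exact feas_zero h hz
    obtain ⟨hα, hβ, htot, hhall⟩ := id h
    push_neg at hz
    obtain ⟨i0, hi0A, hi0⟩ := hz
    have hαi0 : 0 < α i0 := lt_of_le_of_ne (hα i0 hi0A) (Ne.symm hi0)
    have hsum : 0 < ∑ j ∈ nbr E B {i0}, β j :=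
      lt_of_lt_of_le hαi0 (by simpa using hhall {i0} (by simpa using hi0A))
    obtain ⟨j0, hj0mem, hβj0⟩ : ∃ j ∈ nbr E B {i0}, 0 < β j := by
      by_contra hc
      push_neg at hc
      have : ∑ j ∈ nbr E B {i0}, β j ≤ 0 := Finset.sum_nonpos fun j hj => hc j hj
      linarith
    have hj0B : j0 ∈ B := (Finset.mem_filter.mp hj0mem).1
    have hE0 : (i0, j0) ∈ E := by
      obtain ⟨-, i, hi, hiE⟩ := Finset.mem_filter.mp hj0mem
      rwa [Finset.mem_singleton.mp hi] at hiE
    by_cases htight : ∃ S, S ⊆ A ∧ S.Nonempty ∧ S ≠ A ∧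
        ∑ i ∈ S, α i = ∑ j ∈ nbr E B S, β j
    · obtain ⟨S, hSA, hS, hSne, ht⟩ := htight
      refine split_step E A B α β h S hSA hS hSne ht ?_
      intro A' B' hA'A hcard hB'B h'
      have hfα : (A'.filter fun i => α i ≠ 0).card ≤ (A.filter fun i => α i ≠ 0).card :=
        Finset.card_le_card (Finset.filter_subset_filter _ hA'A)
      have hfβ : (B'.filter fun j => β j ≠ 0).card ≤ (B.filter fun j => β j ≠ 0).card :=
        Finset.card_le_card (Finset.filter_subset_filter _ hB'B)
      refine IH A' B' α β ?_ h'
      unfold meas at hm ⊢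
      omega
    · push_neg at htight
      -- all proper nonempty subsets have positive slack
      set slk : Finset I → ℝ := fun S => (∑ j ∈ nbr E B S, β j) - ∑ i ∈ S, α i with hslk
      set SS : Finset (Finset I) :=
        A.powerset.filter (fun S => i0 ∉ S ∧ j0 ∈ nbr E B S) with hSS
      have hSSprop : ∀ S ∈ SS, S ⊆ A ∧ S.Nonempty ∧ S ≠ A ∧ 0 < slk S := by
        intro S hS
        obtain ⟨hSpow, hi0S, hj0S⟩ := Finset.mem_filter.mp hS
        have hSA : S ⊆ A := Finset.mem_powerset.mp hSpow
        have hSne : S.Nonempty := by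
          obtain ⟨-, i, hi, -⟩ := Finset.mem_filter.mp hj0S
          exact ⟨i, hi⟩
        have hSneA : S ≠ A := by rintro rfl; exact hi0S hi0A
        refine ⟨hSA, hSne, hSneA, ?_⟩
        have h1 := hhall S hSA
        have h2 := htight S hSA hSne hSneA
        simp only [hslk]
        cases lt_or_eq_of_le h1 with
        | inl h => linarith
        | inr h => exact absurd h h2
      set F : Finset ℝ := insert (α i0) (insert (β j0) (SS.image slk)) with hF
      have hFne : F.Nonempty := ⟨α i0, by simp [hF]⟩
      set ε : ℝ := F.min' hFne with hε
      have hεα : ε ≤ α i0 := Finset.min'_le _ _ (by simp [hF])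
      have hεβ : ε ≤ β j0 := Finset.min'_le _ _ (by simp [hF])
      have hεS : ∀ S ∈ SS, ε ≤ slk S := by
        intro S hS
        exact Finset.min'_le _ _ (by
          simp only [hF, Finset.mem_insert, Finset.mem_image]
          exact Or.inr (Or.inr ⟨S, hS, rfl⟩))
      have hεpos : 0 < ε := by
        rw [hε, Finset.lt_min'_iff]
        intro x hx
        simp only [hF, Finset.mem_insert, Finset.mem_image] at hx
        rcases hx with rfl | rfl | ⟨S, hS, rfl⟩
        · exact hαi0
        · exact hβj0
        · exact (hSSprop S hS).2.2.2
      set α' : I → ℝ := Function.update α i0 (α i0 - ε) with hα'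
      set β' : J → ℝ := Function.update β j0 (β j0 - ε) with hβ'
      have hsuppα : ∀ i, α' i ≠ 0 → α i ≠ 0 := by
        intro i _
        by_cases hii : i = i0
        · subst hii; exact ne_of_gt hαi0
        · simp only [hα', Function.update_of_ne hii] at *; assumption
      have hsuppβ : ∀ j, β' j ≠ 0 → β j ≠ 0 := by
        intro j _
        by_cases hjj : j = j0
        · subst hjj; exact ne_of_gt hβj0
        · simp only [hβ', Function.update_of_ne hjj] at *; assumption
      -- sums of α' and β'
      have hsumα' : ∀ s : Finset I, i0 ∈ s → ∑ i ∈ s, α' i = (∑ i ∈ s, α i) - ε :=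
        fun s hs => sum_update_sub α s i0 hs ε
      have hsumα'n : ∀ s : Finset I, i0 ∉ s → ∑ i ∈ s, α' i = ∑ i ∈ s, α i :=
        fun s hs => sum_update_not_mem α s i0 hs _
      have hsumβ' : ∀ s : Finset J, j0 ∈ s → ∑ j ∈ s, β' j = (∑ j ∈ s, β j) - ε :=
        fun s hs => sum_update_sub β s j0 hs ε
      have hsumβ'n : ∀ s : Finset J, j0 ∉ s → ∑ j ∈ s, β' j = ∑ j ∈ s, β j :=
        fun s hs => sum_update_not_mem β s j0 hs _
      have h' : Hyp E A B α' β' := by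
        refine ⟨?_, ?_, ?_, ?_⟩
        · intro i hi
          by_cases hii : i = i0
          · subst hii; simp only [hα', Function.update_self]; linarith
          · simp only [hα', Function.update_of_ne hii]; exact hα i hi
        · intro j hj
          by_cases hjj : j = j0
          · subst hjj; simp only [hβ', Function.update_self]; linarith
          · simp only [hβ', Function.update_of_ne hjj]; exact hβ j hj
        · rw [hsumα' A hi0A, hsumβ' B hj0B, htot]
        · intro S hSsub
          by_cases hi0S : i0 ∈ S
          · have hj0N : j0 ∈ nbr E B S := Finset.mem_filter.mpr ⟨hj0B, i0, hi0S, hE0⟩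
            rw [hsumα' S hi0S, hsumβ' _ hj0N]
            have := hhall S hSsub
            linarith
          · rw [hsumα'n S hi0S]
            by_cases hj0S : j0 ∈ nbr E B S
            · rw [hsumβ' _ hj0S]
              have hmem : S ∈ SS := by
                simp only [hSS, Finset.mem_filter, Finset.mem_powerset]
                exact ⟨hSsub, hi0S, hj0S⟩
              have := hεS S hmem
              simp only [hslk] at this
              linarith
            · rw [hsumβ'n _ hj0S]
              exact hhall S hSsub
      -- adding back the mass ε on the edge (i0, j0)
      have key : Feas E A B α' β' → Feas E A B α β := by
        rintro ⟨γ', p1, p2, p3, p4⟩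
        refine ⟨fun i j => γ' i j + if i = i0 then (if j = j0 then ε else 0) else 0,
          ?_, ?_, ?_, ?_⟩
        · intro i j
          refine add_nonneg (p1 i j) ?_
          split_ifs <;> simp [le_of_lt hεpos]
        · intro i j hbad
          dsimp only
          rw [p2 i j hbad]
          have : (if i = i0 then (if j = j0 then ε else 0) else 0) = 0 := by
            split_ifs with h1 h2
            · subst h1; subst h2
              rcases hbad with hb | hb | hb
              · exact absurd hi0A hb
              · exact absurd hj0B hb
              · exact absurd hE0 hb
            · rfl
            · rfl
          rw [this, zero_add]
        · intro i hi
          dsimp only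
          rw [Finset.sum_add_distrib, p3 i hi]
          by_cases hii : i = i0
          · subst hii
            simp only [if_true]
            rw [Finset.sum_ite_eq' Finset.univ j0 (fun _ => ε)]
            simp only [Finset.mem_univ, if_true, hα', Function.update_self]
            ring
          · simp only [hii, if_false, Finset.sum_const_zero, add_zero, hα',
              Function.update_of_ne hii]
        · intro j hj
          dsimp only
          rw [Finset.sum_add_distrib, p4 j hj]
          by_cases hjj : j = j0
          · have hsum2 : (∑ i, if i = i0 then (if j = j0 then ε else 0) else 0) = ε := by
              rw [Finset.sum_congr rfl
                (fun i _ => by rw [if_pos hjj] :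
                  ∀ i ∈ Finset.univ, (if i = i0 then (if j = j0 then ε else 0) else 0)
                    = (if i = i0 then ε else 0)),
                Finset.sum_ite_eq' Finset.univ i0 (fun _ => ε)]
              simp
            rw [hsum2, hjj]
            simp only [hβ', Function.update_self]
            ring
          · have : ∀ i, (if i = i0 then (if j = j0 then ε else 0) else 0) = 0 := by
              intro i; split_ifs <;> first | (exact absurd ‹j = j0› hjj) | rfl
            simp only [this, Finset.sum_const_zero, add_zero, hβ',
              Function.update_of_ne hjj]
      refine key ?_
      have hεF : ε ∈ F := Finset.min'_mem _ _
      simp only [hF, Finset.mem_insert, Finset.mem_image] at hεF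
      have hi0f : i0 ∈ A.filter (fun i => α i ≠ 0) :=
        Finset.mem_filter.mpr ⟨hi0A, hi0⟩
      have hj0f : j0 ∈ B.filter (fun j => β j ≠ 0) :=
        Finset.mem_filter.mpr ⟨hj0B, ne_of_gt hβj0⟩
      have hfα : (A.filter fun i => α' i ≠ 0).card ≤ (A.filter fun i => α i ≠ 0).card :=
        Finset.card_le_card (fun i hi => by
          obtain ⟨h1, h2⟩ := Finset.mem_filter.mp hi
          exact Finset.mem_filter.mpr ⟨h1, hsuppα i h2⟩)
      have hfβ : (B.filter fun j => β' j ≠ 0).card ≤ (B.filter fun j => β j ≠ 0).card :=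
        Finset.card_le_card (fun j hj => by
          obtain ⟨h1, h2⟩ := Finset.mem_filter.mp hj
          exact Finset.mem_filter.mpr ⟨h1, hsuppβ j h2⟩)
      rcases hεF with hc | hc | ⟨S0, hS0, hc⟩
      · -- ε = α i0 : α-support shrinks
        have hcard : (A.filter fun i => α' i ≠ 0).card < (A.filter fun i => α i ≠ 0).card := by
          refine Finset.card_lt_card ⟨fun i hi => by
            obtain ⟨h1, h2⟩ := Finset.mem_filter.mp hi
            exact Finset.mem_filter.mpr ⟨h1, hsuppα i h2⟩, ?_⟩
          intro hsub
          have := hsub hi0f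
          simp only [Finset.mem_filter, hα', Function.update_self] at this
          exact this.2 (by linarith [hc])
        refine IH A B α' β' ?_ h'
        unfold meas at hm ⊢
        omega
      · -- ε = β j0 : β-support shrinks
        have hcard : (B.filter fun j => β' j ≠ 0).card < (B.filter fun j => β j ≠ 0).card := by
          refine Finset.card_lt_card ⟨fun j hj => by
            obtain ⟨h1, h2⟩ := Finset.mem_filter.mp hj
            exact Finset.mem_filter.mpr ⟨h1, hsuppβ j h2⟩, ?_⟩
          intro hsub
          have := hsub hj0f
          simp only [Finset.mem_filter, hβ', Function.update_self] at this
          exact this.2 (by linarith [hc])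
        refine IH A B α' β' ?_ h'
        unfold meas at hm ⊢
        omega
      · -- ε = slk S0 : a tight set appears; split the new instance
        obtain ⟨hS0A, hS0ne, hS0neA, -⟩ := hSSprop S0 hS0
        obtain ⟨-, hi0S0, hj0S0⟩ := Finset.mem_filter.mp hS0
        have ht' : ∑ i ∈ S0, α' i = ∑ j ∈ nbr E B S0, β' j := by
          rw [hsumα'n S0 hi0S0, hsumβ' _ hj0S0]
          simp only [hslk] at hc
          linarith
        refine split_step E A B α' β' h' S0 hS0A hS0ne hS0neA ht' ?_
        intro A' B' hA'A hcard hB'B h''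
        have hfα' : (A'.filter fun i => α' i ≠ 0).card ≤ (A.filter fun i => α i ≠ 0).card :=
          Finset.card_le_card (fun i hi => by
            obtain ⟨h1, h2⟩ := Finset.mem_filter.mp hi
            exact Finset.mem_filter.mpr ⟨hA'A h1, hsuppα i h2⟩)
        have hfβ' : (B'.filter fun j => β' j ≠ 0).card ≤ (B.filter fun j => β j ≠ 0).card :=
          Finset.card_le_card (fun j hj => by
            obtain ⟨h1, h2⟩ := Finset.mem_filter.mp hj
            exact Finset.mem_filter.mpr ⟨hB'B h1, hsuppβ j h2⟩)
        refine IH A' B' α' β' ?_ h''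
        unfold meas at hm ⊢
        omega

end GaleAux

open scoped BigOperators Classical in
theorem stmt16 {I J : Type*} [Fintype I] [Fintype J]
    (E : Set (I × J)) (α : I → ℝ) (β : J → ℝ)
    (hα : ∀ i, 0 ≤ α i) (hβ : ∀ j, 0 ≤ β j) :
    (∃ γ : I → J → ℝ, (∀ i j, 0 ≤ γ i j) ∧ (∀ i j, (i, j) ∉ E → γ i j = 0) ∧
      (∀ i, ∑ j, γ i j = α i) ∧ (∀ j, ∑ i, γ i j = β j)) ↔
    ((∑ i, α i = ∑ j, β j) ∧ ∀ S : Finset I,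
      ∑ i ∈ S, α i ≤ ∑ j ∈ Finset.univ.filter (fun j => ∃ i ∈ S, (i, j) ∈ E), β j) := by
  classical
  constructor
  · rintro ⟨γ, hpos, hsupp, hrow, hcol⟩
    constructor
    · calc ∑ i, α i = ∑ i, ∑ j, γ i j := Finset.sum_congr rfl fun i _ => (hrow i).symm
        _ = ∑ j, ∑ i, γ i j := Finset.sum_comm
        _ = ∑ j, β j := Finset.sum_congr rfl fun j _ => hcol j
    · intro S
      set T := Finset.univ.filter (fun j => ∃ i ∈ S, (i, j) ∈ E) with hT
      have h1 : ∑ i ∈ S, α i = ∑ j ∈ Finset.univ, ∑ i ∈ S, γ i j := by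
        rw [Finset.sum_comm]
        exact Finset.sum_congr rfl fun i _ => (hrow i).symm
      have h2 : ∑ j ∈ Finset.univ, ∑ i ∈ S, γ i j = ∑ j ∈ T, ∑ i ∈ S, γ i j := by
        refine (Finset.sum_subset (Finset.subset_univ T) ?_).symm
        intro j _ hjT
        refine Finset.sum_eq_zero fun i hi => hsupp i j ?_
        simp only [hT, Finset.mem_filter, Finset.mem_univ, true_and] at hjT
        push_neg at hjT
        exact hjT i hi
      have h3 : ∀ j ∈ T, ∑ i ∈ S, γ i j ≤ β j := by
        intro j _
        rw [← hcol j]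
        exact Finset.sum_le_sum_of_subset_of_nonneg (Finset.subset_univ S)
          (fun i _ _ => hpos i j)
      rw [h1, h2]
      exact Finset.sum_le_sum h3
  · rintro ⟨htot, hhall⟩
    have hyp : GaleAux.Hyp E Finset.univ Finset.univ α β := by
      refine ⟨fun i _ => hα i, fun j _ => hβ j, htot, ?_⟩
      intro S _
      have := hhall S
      convert this using 2
      ext j; simp [GaleAux.nbr]
    obtain ⟨γ, p1, p2, p3, p4⟩ :=
      GaleAux.gale_aux E (GaleAux.meas Finset.univ Finset.univ α β)
        Finset.univ Finset.univ α β le_rfl hyp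
    exact ⟨γ, p1, fun i j hij => p2 i j (Or.inr (Or.inr hij)),
      fun i => p3 i (Finset.mem_univ i), fun j => p4 j (Finset.mem_univ j)⟩
end

section
/- Let λ ∈ ℝ with λ ∉ [0,1], and let f, g : ℝⁿ → [0,∞] be measurable with 0 < ∫ f < ∞ and 0 < ∫ g < ∞. Then ∫_{ℝⁿ} f(x)^λ g(x)^{1−λ} dx ≥ (∫ f)^λ (∫ g)^{1−λ}, with the convention 0·∞ = 0. -/
open MeasureTheory

open scoped ENNReal

lemma aux_reverse_holder {α : Type*} [MeasurableSpace α] (μ : Measure α) (lam : ℝ)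
    (hlam : 1 < lam) (f g : α → ENNReal) (hf : Measurable f) (hg : Measurable g)
    (hg0 : 0 < ∫⁻ x, g x ∂μ) (hg1 : ∫⁻ x, g x ∂μ < ⊤) :
    (∫⁻ x, f x ∂μ) ^ lam * (∫⁻ x, g x ∂μ) ^ (1 - lam) ≤
      ∫⁻ x, f x ^ lam * g x ^ (1 - lam) ∂μ := by
  set h : α → ℝ≥0∞ := fun x => f x ^ lam * g x ^ (1 - lam) with hh
  by_cases hItop : ∫⁻ x, h x ∂μ = ⊤
  · simp [hItop]
  have hlam0 : (0 : ℝ) < lam := by linarith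
  have hmeas_h : Measurable h := (hf.pow_const lam).mul (hg.pow_const (1 - lam))
  -- a.e. g x ≠ 0 or f x = 0
  have hlam1 : (0:ℝ) < lam - 1 := by linarith
  have hae1 : ∀ᵐ x ∂μ, g x = 0 → f x = 0 := by
    by_contra hcon
    rw [ae_iff] at hcon
    have hset : μ {x | ¬ (g x = 0 → f x = 0)} ≠ 0 := hcon
    have : ∫⁻ x, h x ∂μ = ⊤ := by
      have hsub : ∀ x ∈ {x | ¬ (g x = 0 → f x = 0)}, h x = ⊤ := by
        intro x hx
        simp only [Set.mem_setOf_eq, _root_.not_imp] at hx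
        obtain ⟨hgx, hfx⟩ := hx
        have h1 : g x ^ (1 - lam) = ⊤ := by
          rw [hgx, ENNReal.zero_rpow_def]
          have : (1 : ℝ) - lam < 0 := by linarith
          simp [this, not_lt.mpr this.le, this.ne]
        have h2 : f x ^ lam ≠ 0 := by
          simp [ENNReal.rpow_eq_zero_iff, hfx, hlam0, hlam0.not_gt, hlam0.le]
        rw [hh]
        simp only []
        rw [h1, ENNReal.mul_top h2]
      have hm : MeasurableSet {x | ¬ (g x = 0 → f x = 0)} := by
        have : {x | ¬ (g x = 0 → f x = 0)} = {x | g x = 0} ∩ {x | f x ≠ 0} := by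
          ext x; simp [_root_.not_imp]
        rw [this]
        exact (hg (measurableSet_singleton 0)).inter
          ((hf (measurableSet_singleton 0)).compl)
      have : ∫⁻ x in {x | ¬ (g x = 0 → f x = 0)}, h x ∂μ = ⊤ := by
        rw [setLIntegral_congr_fun hm hsub]
        simp [lintegral_const, hm]
        exact ENNReal.top_mul (by simpa [pos_iff_ne_zero] using hset)
      exact top_unique (this ▸ setLIntegral_le_lintegral _ _)
    exact hItop this
  have hae2 : ∀ᵐ x ∂μ, g x ≠ ⊤ := ae_lt_top hg hg1.ne |>.mono fun x hx => hx.ne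
  -- pointwise a.e.: f x ≤ h x ^ (1/lam) * g x ^ ((lam-1)/lam)
  have key : ∫⁻ x, f x ∂μ ≤ ∫⁻ x, (h x) ^ (1/lam) * (g x) ^ ((lam-1)/lam) ∂μ := by
    refine lintegral_mono_ae ?_
    filter_upwards [hae1, hae2] with x h1 h2
    rcases eq_or_ne (g x) 0 with hgx | hgx
    · simp [h1 hgx]
    · -- 0 < g x < ⊤
      have hg1lam : g x ^ (1 - lam) ≠ 0 := by
        simp [ENNReal.rpow_eq_zero_iff, hgx, h2]
      have hg1lam' : g x ^ (1 - lam) ≠ ⊤ := by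
        simp [ENNReal.rpow_eq_top_iff, hgx, h2]
      have expand : (h x) ^ (1/lam) = f x * (g x) ^ ((1-lam)/lam) := by
        rw [hh]
        simp only []
        rw [ENNReal.mul_rpow_of_nonneg _ _ (by positivity : (0:ℝ) ≤ 1/lam),
          ← ENNReal.rpow_mul, ← ENNReal.rpow_mul,
          mul_one_div, div_self hlam0.ne', ENNReal.rpow_one, mul_one_div]
      rw [expand, mul_assoc, ← ENNReal.rpow_add _ _ hgx h2]
      have : (1 - lam)/lam + (lam - 1)/lam = 0 := by field_simp; ring
      rw [this, ENNReal.rpow_zero, mul_one]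
  -- Hölder with exponents lam, lam/(lam-1)
  have hpq : Real.HolderConjugate lam (lam/(lam-1)) :=
    (Real.holderConjugate_iff_eq_conjExponent hlam).2 rfl
  have holder := ENNReal.lintegral_mul_le_Lp_mul_Lq μ hpq
    ((hmeas_h.pow_const (1/lam)).aemeasurable)
    ((hg.pow_const ((lam-1)/lam)).aemeasurable)
  have e1 : ∀ x, ((h x) ^ (1/lam)) ^ lam = h x := by
    intro x
    rw [← ENNReal.rpow_mul, one_div, inv_mul_cancel₀ hlam0.ne', ENNReal.rpow_one]
  have e2 : ∀ x, ((g x) ^ ((lam-1)/lam)) ^ (lam/(lam-1)) = g x := by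
    intro x
    rw [← ENNReal.rpow_mul, div_mul_div_comm, mul_comm (lam-1) lam,
      div_self (mul_ne_zero hlam0.ne' hlam1.ne'), ENNReal.rpow_one]
  simp only [Pi.mul_apply, e1, e2] at holder
  have key2 : ∫⁻ x, f x ∂μ ≤
      (∫⁻ x, h x ∂μ) ^ (1/lam) * (∫⁻ x, g x ∂μ) ^ (1/(lam/(lam-1))) :=
    key.trans holder
  -- raise to power lam
  have key3 : (∫⁻ x, f x ∂μ) ^ lam ≤ (∫⁻ x, h x ∂μ) * (∫⁻ x, g x ∂μ) ^ (lam - 1) := by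
    calc (∫⁻ x, f x ∂μ) ^ lam
        ≤ ((∫⁻ x, h x ∂μ) ^ (1/lam) * (∫⁻ x, g x ∂μ) ^ (1/(lam/(lam-1)))) ^ lam :=
          ENNReal.rpow_le_rpow key2 hlam0.le
      _ = (∫⁻ x, h x ∂μ) * (∫⁻ x, g x ∂μ) ^ (lam - 1) := by
          have hx : 1 / (lam / (lam - 1)) * lam = lam - 1 := by field_simp
          rw [ENNReal.mul_rpow_of_nonneg _ _ hlam0.le, ← ENNReal.rpow_mul,
            ← ENNReal.rpow_mul, one_div, inv_mul_cancel₀ hlam0.ne', ENNReal.rpow_one, hx]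
  calc (∫⁻ x, f x ∂μ) ^ lam * (∫⁻ x, g x ∂μ) ^ (1 - lam)
      ≤ (∫⁻ x, h x ∂μ) * (∫⁻ x, g x ∂μ) ^ (lam - 1) * (∫⁻ x, g x ∂μ) ^ (1 - lam) :=
        mul_le_mul_left key3 _
    _ = ∫⁻ x, h x ∂μ := by
        rw [mul_assoc, ← ENNReal.rpow_add _ _ hg0.ne' hg1.ne]
        norm_num

theorem stmt17 {n : ℕ} (lam : ℝ) (hlam : lam ∉ Set.Icc (0 : ℝ) 1)
    (f g : (Fin n → ℝ) → ENNReal) (hf : Measurable f) (hg : Measurable g)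
    (hf0 : 0 < ∫⁻ x, f x) (hf1 : ∫⁻ x, f x < ⊤)
    (hg0 : 0 < ∫⁻ x, g x) (hg1 : ∫⁻ x, g x < ⊤) :
    (∫⁻ x, f x) ^ lam * (∫⁻ x, g x) ^ (1 - lam) ≤
      ∫⁻ x, f x ^ lam * g x ^ (1 - lam) := by
  simp only [Set.mem_Icc, not_and_or, not_le] at hlam
  rcases hlam with hneg | hbig
  · -- lam < 0, so 1 - lam > 1; apply with g, f swapped
    have h := aux_reverse_holder (volume : Measure (Fin n → ℝ)) (1 - lam)
      (by linarith) g f hg hf hf0 hf1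
    have e : (1 : ℝ) - (1 - lam) = lam := by ring
    rw [e] at h
    calc (∫⁻ x, f x) ^ lam * (∫⁻ x, g x) ^ (1 - lam)
        = (∫⁻ x, g x) ^ (1 - lam) * (∫⁻ x, f x) ^ lam := mul_comm _ _
      _ ≤ ∫⁻ x, g x ^ (1 - lam) * f x ^ lam := h
      _ = ∫⁻ x, f x ^ lam * g x ^ (1 - lam) := by
          congr 1; ext x; exact mul_comm _ _
  · exact aux_reverse_holder volume lam hbig f g hf hg hg0 hg1
end

section
/- Let c_1 ≥ 0 ≥ c_2, …, c_m with c_1 + c_2 + ⋯ + c_m = 1. Then for all measurable functions f_k : ℝ^d → [0,∞] with ∫ f_k ∈ (0,∞) for each k, ∫_{ℝ^d} ∏_{k=1}^m f_k^{c_k} ≥ ∏_{k=1}^m (∫_{ℝ^d} f_k)^{c_k}. -/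
open MeasureTheory
open scoped BigOperators

theorem stmt18 {m d : ℕ} (hm : 0 < m) (c : Fin m → ℝ)
    (hc1 : 0 ≤ c ⟨0, hm⟩) (hck : ∀ k : Fin m, k ≠ ⟨0, hm⟩ → c k ≤ 0)
    (hsum : ∑ k, c k = 1)
    (f : Fin m → (Fin d → ℝ) → ENNReal) (hf : ∀ k, Measurable (f k))
    (hf0 : ∀ k, 0 < ∫⁻ x, f k x) (hf1 : ∀ k, ∫⁻ x, f k x < ⊤) :
    ∏ k, (∫⁻ x, f k x) ^ c k ≤ ∫⁻ x, ∏ k, f k x ^ c k := by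
  classical
  set i0 : Fin m := ⟨0, hm⟩ with hi0
  set g : (Fin d → ℝ) → ENNReal := fun x => ∏ k, f k x ^ c k with hg
  have hgmeas : Measurable g := by
    apply Finset.measurable_prod
    intro k _
    exact (hf k).pow_const (c k)
  -- sum over erase
  have hsplit : c i0 + ∑ k ∈ Finset.univ.erase i0, c k = 1 := by
    rw [Finset.add_sum_erase _ c (Finset.mem_univ i0)]; exact hsum
  have herase_nonpos : ∑ k ∈ Finset.univ.erase i0, c k ≤ 0 :=
    Finset.sum_nonpos fun k hk => hck k (Finset.ne_of_mem_erase hk)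
  have hc1pos : 0 < c i0 := by linarith
  have hc1ne : c i0 ≠ 0 := ne_of_gt hc1pos
  rcases eq_or_ne (∫⁻ x, g x) ⊤ with hgt | hgt
  · rw [hgt]; exact le_top
  -- a.e. pointwise inequality
  have hae : ∀ᵐ x : (Fin d → ℝ), f i0 x ≤
      g x ^ (c i0)⁻¹ * ∏ k ∈ Finset.univ.erase i0, f k x ^ (-(c k) * (c i0)⁻¹) := by
    have h1 : ∀ᵐ x : (Fin d → ℝ), ∀ k, f k x < ⊤ := by
      rw [ae_all_iff]
      exact fun k => ae_lt_top (hf k) (hf1 k).ne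
    have h2 : ∀ᵐ x : (Fin d → ℝ), g x < ⊤ := ae_lt_top hgmeas hgt
    filter_upwards [h1, h2] with x hx1 hx2
    rcases eq_or_ne (f i0 x) 0 with h0 | h0
    · rw [h0]; exact zero_le
    -- all relevant f k x nonzero
    have hne0 : ∀ k, c k ≠ 0 → f k x ≠ 0 := by
      intro k hk hfk
      rcases eq_or_ne k i0 with rfl | hki
      · exact h0 hfk
      have hck' : c k < 0 := lt_of_le_of_ne (hck k hki) hk
      have hfact : f k x ^ c k = ⊤ := by
        rw [hfk]; exact ENNReal.zero_rpow_of_neg hck'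
      have : g x = ⊤ := by
        show (∏ j, f j x ^ c j) = ⊤
        rw [← Finset.mul_prod_erase _ _ (Finset.mem_univ k), hfact]
        rw [ENNReal.top_mul]
        intro hzero
        rw [Finset.prod_eq_zero_iff] at hzero
        obtain ⟨j, hj, hj0⟩ := hzero
        rw [ENNReal.rpow_eq_zero_iff] at hj0
        rcases hj0 with ⟨hj1, hj2⟩ | ⟨hj1, hj2⟩
        · rcases eq_or_ne j i0 with rfl | hji
          · exact h0 hj1
          · exact absurd hj2 (not_lt.mpr (hck j hji))
        · exact absurd hj1 (hx1 j).ne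
      exact absurd this hx2.ne
    have key : g x ^ (c i0)⁻¹ * ∏ k ∈ Finset.univ.erase i0, f k x ^ (-(c k) * (c i0)⁻¹)
        = f i0 x := by
      show (∏ k, f k x ^ c k) ^ (c i0)⁻¹ * _ = _
      rw [← ENNReal.prod_rpow_of_nonneg (by positivity : (0:ℝ) ≤ (c i0)⁻¹)]
      have hre : ∀ k : Fin m, (f k x ^ c k) ^ (c i0)⁻¹ = f k x ^ (c k * (c i0)⁻¹) := by
        intro k; rw [← ENNReal.rpow_mul]
      simp only [hre]
      rw [← Finset.mul_prod_erase _ (fun k => f k x ^ (c k * (c i0)⁻¹)) (Finset.mem_univ i0),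
        mul_assoc, ← Finset.prod_mul_distrib]
      have hone : ∀ k ∈ Finset.univ.erase i0,
          f k x ^ (c k * (c i0)⁻¹) * f k x ^ (-(c k) * (c i0)⁻¹) = 1 := by
        intro k hk
        rcases eq_or_ne (c k) 0 with hck0 | hck0
        · simp [hck0]
        · rw [← ENNReal.rpow_add _ _ (hne0 k hck0) (hx1 k).ne]
          simp
      rw [Finset.prod_congr rfl hone, Finset.prod_const_one, mul_one,
        mul_inv_cancel₀ hc1ne, ENNReal.rpow_one]
    rw [key]
  -- Hölder
  set F : Fin m → (Fin d → ℝ) → ENNReal := fun k => if k = i0 then g else f k with hF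
  set p : Fin m → ℝ := fun k => if k = i0 then (c i0)⁻¹ else -(c k) * (c i0)⁻¹ with hp
  have hpsum : ∑ k, p k = 1 := by
    rw [← Finset.add_sum_erase _ p (Finset.mem_univ i0)]
    rw [hp]
    simp only [if_pos rfl]
    rw [Finset.sum_congr rfl (fun k hk => if_neg (Finset.ne_of_mem_erase hk))]
    rw [← Finset.sum_mul, Finset.sum_neg_distrib]
    have h3 : ∑ k ∈ Finset.univ.erase i0, c k = 1 - c i0 := by linarith
    rw [h3]
    field_simp
    rw [if_pos trivial, one_div, mul_inv_cancel₀ hc1ne]; ring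
  have hpnonneg : ∀ k ∈ Finset.univ, 0 ≤ p k := by
    intro k _
    rw [hp]
    rcases eq_or_ne k i0 with rfl | hk
    · simp only [if_pos rfl]; exact inv_nonneg.mpr hc1pos.le
    · simp only [if_neg hk]
      have := hck k hk
      have : 0 ≤ -(c k) := by linarith
      positivity
  have hFmeas : ∀ k ∈ Finset.univ, AEMeasurable (F k) (volume : Measure (Fin d → ℝ)) := by
    intro k _
    rw [hF]
    rcases eq_or_ne k i0 with rfl | hk
    · simpa using hgmeas.aemeasurable
    · simp only [if_neg hk]; exact (hf k).aemeasurable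
  have holder := ENNReal.lintegral_prod_norm_pow_le (μ := (volume : Measure (Fin d → ℝ)))
    Finset.univ hFmeas hpsum hpnonneg
  have hFP : ∀ x : (Fin d → ℝ), ∏ k, F k x ^ p k
      = g x ^ (c i0)⁻¹ * ∏ k ∈ Finset.univ.erase i0, f k x ^ (-(c k) * (c i0)⁻¹) := by
    intro x
    rw [← Finset.mul_prod_erase _ (fun k => F k x ^ p k) (Finset.mem_univ i0)]
    have h1 : F i0 x ^ p i0 = g x ^ (c i0)⁻¹ := by simp [hF, hp]
    have h2 : ∏ k ∈ Finset.univ.erase i0, F k x ^ p k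
        = ∏ k ∈ Finset.univ.erase i0, f k x ^ (-(c k) * (c i0)⁻¹) := by
      refine Finset.prod_congr rfl fun k hk => ?_
      have hk' := Finset.ne_of_mem_erase hk
      simp [hF, hp, hk']
    rw [h1, h2]
  have hint : ∫⁻ x, f i0 x ≤
      ∏ k, (∫⁻ x, F k x) ^ p k := by
    refine le_trans (lintegral_mono_ae hae) ?_
    refine le_trans (le_of_eq ?_) holder
    exact lintegral_congr fun x => (hFP x).symm
  -- rewrite RHS
  have hRHS : ∏ k, (∫⁻ x, F k x) ^ p k
      = (∫⁻ x, g x) ^ (c i0)⁻¹ *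
        ∏ k ∈ Finset.univ.erase i0, (∫⁻ x, f k x) ^ (-(c k) * (c i0)⁻¹) := by
    rw [← Finset.mul_prod_erase _ (fun k => (∫⁻ x, F k x) ^ p k) (Finset.mem_univ i0)]
    have h1 : (∫⁻ x, F i0 x) ^ p i0 = (∫⁻ x, g x) ^ (c i0)⁻¹ := by simp [hF, hp]
    have h2 : ∏ k ∈ Finset.univ.erase i0, (∫⁻ x, F k x) ^ p k
        = ∏ k ∈ Finset.univ.erase i0, (∫⁻ x, f k x) ^ (-(c k) * (c i0)⁻¹) := by
      refine Finset.prod_congr rfl fun k hk => ?_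
      have hk' := Finset.ne_of_mem_erase hk
      simp [hF, hp, hk']
    rw [h1, h2]
  rw [hRHS] at hint
  -- raise to power c i0
  have hint2 : (∫⁻ x, f i0 x) ^ (c i0) ≤
      (∫⁻ x, g x) * ∏ k ∈ Finset.univ.erase i0, (∫⁻ x, f k x) ^ (-(c k)) := by
    calc (∫⁻ x, f i0 x) ^ (c i0)
        ≤ ((∫⁻ x, g x) ^ (c i0)⁻¹ *
          ∏ k ∈ Finset.univ.erase i0, (∫⁻ x, f k x) ^ (-(c k) * (c i0)⁻¹)) ^ (c i0) :=
          ENNReal.rpow_le_rpow hint (le_of_lt hc1pos)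
      _ = (∫⁻ x, g x) * ∏ k ∈ Finset.univ.erase i0, (∫⁻ x, f k x) ^ (-(c k)) := by
          rw [ENNReal.mul_rpow_of_nonneg _ _ (le_of_lt hc1pos),
            ← ENNReal.rpow_mul, inv_mul_cancel₀ hc1ne, ENNReal.rpow_one,
            ← ENNReal.prod_rpow_of_nonneg (le_of_lt hc1pos)]
          congr 1
          refine Finset.prod_congr rfl fun k hk => ?_
          rw [← ENNReal.rpow_mul]
          congr 1
          field_simp
  -- conclude
  rw [← Finset.mul_prod_erase _ (fun k => (∫⁻ x, f k x) ^ c k) (Finset.mem_univ i0)]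
  calc (∫⁻ x, f i0 x) ^ c i0 * ∏ k ∈ Finset.univ.erase i0, (∫⁻ x, f k x) ^ c k
      ≤ ((∫⁻ x, g x) * ∏ k ∈ Finset.univ.erase i0, (∫⁻ x, f k x) ^ (-(c k))) *
        ∏ k ∈ Finset.univ.erase i0, (∫⁻ x, f k x) ^ c k :=
        mul_le_mul_left hint2 _
    _ = ∫⁻ x, g x := by
        rw [mul_assoc, ← Finset.prod_mul_distrib]
        have : ∀ k ∈ Finset.univ.erase i0,
            (∫⁻ x, f k x) ^ (-(c k)) * (∫⁻ x, f k x) ^ c k = 1 := by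
          intro k _
          rw [← ENNReal.rpow_add _ _ (hf0 k).ne' (hf1 k).ne]
          simp
        rw [Finset.prod_congr rfl this, Finset.prod_const_one, mul_one]
end
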